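/- arXiv:2204.04281 — 3 statements merged into one kernel-verified Lean document; each statement's English description precedes it below -/
import Mathlib

section
/- (Lemma: Möbius-type bound for sums over distinct indices). Let u^(1), u^(2), …, u^(k) be k vectors in ℝ^N. Then | ∑_{ℓ_1,…,ℓ_k ∈ [N], ℓ_i ≠ ℓ_j for all i ≠ j} ∏_{i=1}^k u^(i)_{ℓ_i} | ≤ k^{2k} · max( √N · U_∞, min( Ū, N · U_∞ ) )^k, where Ū = max_{i ∈ [k]} | ∑_{j=1}^N u^(i)_j | and U_∞ = max_{i ∈ [k]} ‖u^(i)‖_∞. -/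
open Filter
open scoped ENNReal NNReal Topology

noncomputable section
attribute [local instance] Classical.propDecidable

private lemma snoc_injective_aux {k N : ℕ} {f : Fin k → Fin N} {b : Fin N}
    (hf : Function.Injective f) (hb : ∀ i, f i ≠ b) :
    Function.Injective (Fin.snoc f b : Fin (k+1) → Fin N) := by
  intro x y hxy
  rcases Fin.eq_castSucc_or_eq_last x with ⟨x', rfl⟩ | rfl <;>
    rcases Fin.eq_castSucc_or_eq_last y with ⟨y', rfl⟩ | rfl <;>
      simp only [Fin.snoc_castSucc, Fin.snoc_last] at hxy
  · exact congrArg Fin.castSucc (hf hxy)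
  · exact absurd hxy (hb x')
  · exact absurd hxy.symm (hb y')
  · rfl

private lemma key_bound (N : ℕ) (hN : 1 ≤ N) (M : ℝ) :
    ∀ (k : ℕ) (v : Fin k → Fin N → ℝ) (w : Fin k → ℕ),
      (∀ i j, Real.sqrt N * |v i j| ≤ M ^ (w i)) →
      (∀ i, |∑ j, v i j| ≤ M ^ (w i)) →
      |∑ ℓ ∈ Finset.univ.filter (fun ℓ : Fin k → Fin N => Function.Injective ℓ),
          ∏ i, v i (ℓ i)| ≤ (k.factorial : ℝ) * M ^ (∑ i, w i) := by
  have hNpos : (0:ℝ) < N := by exact_mod_cast hN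
  have hsqrt : (1:ℝ) ≤ Real.sqrt N := by
    rw [Real.one_le_sqrt]; exact_mod_cast hN
  intro k
  induction k with
  | zero =>
    intro v w _ _
    have hfil : (Finset.univ.filter (fun ℓ : Fin 0 → Fin N => Function.Injective ℓ))
        = Finset.univ :=
      Finset.filter_true_of_mem (fun ℓ _ => fun a b _ => Subsingleton.elim a b)
    rw [hfil]
    simp
  | succ k ih =>
    intro v w h1 h2
    -- notation
    set vl : Fin N → ℝ := v (Fin.last k) with hvl
    set S' := Finset.univ.filter (fun ℓ : Fin k → Fin N => Function.Injective ℓ) with hS'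
    have hs : ∀ (ℓ' : Fin k → Fin N) (b : Fin N),
        (∏ i, v i ((Fin.snoc ℓ' b : Fin (k+1) → Fin N) i)) = (∏ i : Fin k, v i.castSucc (ℓ' i)) * vl b := by
      intro ℓ' b
      rw [Fin.prod_univ_castSucc]
      simp [Fin.snoc_castSucc, Fin.snoc_last]
      exact Or.inl rfl
    -- split the sum over injective (k+1)-tuples
    have hsplit :
        ∑ ℓ ∈ Finset.univ.filter (fun ℓ : Fin (k+1) → Fin N => Function.Injective ℓ),
            ∏ i, v i (ℓ i)
          = ∑ ℓ' ∈ S', ∑ b ∈ Finset.univ \ Finset.image ℓ' Finset.univ,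
              ∏ i, v i ((Fin.snoc ℓ' b : Fin (k+1) → Fin N) i) := by
      rw [Finset.sum_sigma']
      refine Finset.sum_nbij' (i := fun ℓ => ⟨Fin.init ℓ, ℓ (Fin.last k)⟩)
        (j := fun x => Fin.snoc x.1 x.2) ?_ ?_ ?_ ?_ ?_
      · intro ℓ hℓ
        have hℓi : Function.Injective ℓ := (Finset.mem_filter.mp hℓ).2
        refine Finset.mem_sigma.mpr ⟨Finset.mem_filter.mpr ⟨Finset.mem_univ _, ?_⟩, ?_⟩
        · intro a b hab
          exact Fin.castSucc_injective _
            (hℓi (show ℓ a.castSucc = ℓ b.castSucc from hab))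
        · refine Finset.mem_sdiff.mpr ⟨Finset.mem_univ _, ?_⟩
          intro hmem
          obtain ⟨a, -, ha⟩ := Finset.mem_image.mp hmem
          have : a.castSucc = Fin.last k := hℓi ha
          exact absurd this (Fin.castSucc_lt_last a).ne
      · intro x hx
        obtain ⟨hx1, hx2⟩ := Finset.mem_sigma.mp hx
        have hinj : Function.Injective x.1 := (Finset.mem_filter.mp hx1).2
        have hb : ∀ i, x.1 i ≠ x.2 := by
          intro i hi
          have := (Finset.mem_sdiff.mp hx2).2
          exact this (Finset.mem_image.mpr ⟨i, Finset.mem_univ _, hi⟩)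
        exact Finset.mem_filter.mpr ⟨Finset.mem_univ _, snoc_injective_aux hinj hb⟩
      · intro ℓ _; exact Fin.snoc_init_self ℓ
      · intro x _
        refine Sigma.ext ?_ ?_ <;> simp [Fin.init_snoc, Fin.snoc_last]
      · intro ℓ _
        conv_lhs => rw [← Fin.snoc_init_self ℓ]
    rw [hsplit]
    have hrw : ∀ ℓ' ∈ S',
        (∑ b ∈ Finset.univ \ Finset.image ℓ' Finset.univ, ∏ i, v i ((Fin.snoc ℓ' b : Fin (k+1) → Fin N) i))
          = (∏ i : Fin k, v i.castSucc (ℓ' i)) * ((∑ b, vl b) - ∑ i, vl (ℓ' i)) := by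
      intro ℓ' hℓ'
      have hinj : Function.Injective ℓ' := (Finset.mem_filter.mp hℓ').2
      simp only [hs]
      rw [← Finset.mul_sum, Finset.sum_sdiff_eq_sub (Finset.subset_univ _),
        Finset.sum_image (fun a _ b _ hab => hinj hab)]
    rw [Finset.sum_congr rfl hrw]
    -- expand
    have hexp : ∑ ℓ' ∈ S', (∏ i : Fin k, v i.castSucc (ℓ' i)) * ((∑ b, vl b) - ∑ i, vl (ℓ' i))
        = (∑ b, vl b) * (∑ ℓ' ∈ S', ∏ i : Fin k, v i.castSucc (ℓ' i))
          - ∑ i₀ : Fin k, ∑ ℓ' ∈ S', (∏ i : Fin k, v i.castSucc (ℓ' i)) * vl (ℓ' i₀) := by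
      have step : ∀ ℓ' ∈ S',
          (∏ i : Fin k, v i.castSucc (ℓ' i)) * ((∑ b, vl b) - ∑ i, vl (ℓ' i))
            = (∑ b, vl b) * (∏ i : Fin k, v i.castSucc (ℓ' i))
              - ∑ i₀ : Fin k, (∏ i : Fin k, v i.castSucc (ℓ' i)) * vl (ℓ' i₀) := by
        intro ℓ' _
        rw [mul_sub, mul_comm (∏ i : Fin k, v i.castSucc (ℓ' i)) (∑ b : Fin N, vl b),
          Finset.mul_sum]
      rw [Finset.sum_congr rfl step, Finset.sum_sub_distrib, ← Finset.mul_sum, Finset.sum_comm]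
    rw [hexp]
    -- bound the first term via ih
    have hT : |∑ ℓ' ∈ S', ∏ i : Fin k, v i.castSucc (ℓ' i)|
        ≤ (k.factorial : ℝ) * M ^ (∑ i : Fin k, w i.castSucc) :=
      ih (fun i => v i.castSucc) (fun i => w i.castSucc)
        (fun i j => h1 i.castSucc j) (fun i => h2 i.castSucc)
    -- bound each subtracted term via ih with a merged coordinate
    have hTi : ∀ i₀ : Fin k,
        |∑ ℓ' ∈ S', (∏ i : Fin k, v i.castSucc (ℓ' i)) * vl (ℓ' i₀)|
          ≤ (k.factorial : ℝ) * M ^ ((∑ i : Fin k, w i.castSucc) + w (Fin.last k)) := by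
      intro i₀
      set p : Fin N → ℝ := fun b => v i₀.castSucc b * vl b with hp
      set vv : Fin k → Fin N → ℝ :=
        Function.update (fun i : Fin k => v i.castSucc) i₀ p with hvv
      set ww : Fin k → ℕ :=
        Function.update (fun i : Fin k => w i.castSucc) i₀
          (w i₀.castSucc + w (Fin.last k)) with hww
      have hMnn : ∀ m : Fin (k+1), (0:ℝ) ≤ M ^ (w m) := fun m =>
        le_trans (abs_nonneg _) (h2 m)
      have hptwise : ∀ b, Real.sqrt N * |p b| ≤ M ^ (w i₀.castSucc + w (Fin.last k)) := by
        intro b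
        rw [hp]
        calc Real.sqrt N * |v i₀.castSucc b * vl b|
            = (Real.sqrt N * |v i₀.castSucc b|) * |vl b| := by rw [abs_mul]; ring
          _ ≤ M ^ (w i₀.castSucc) * (Real.sqrt N * |vl b|) := by
              refine mul_le_mul (h1 _ _) (le_mul_of_one_le_left (abs_nonneg _) hsqrt)
                (abs_nonneg _) (hMnn _)
          _ ≤ M ^ (w i₀.castSucc) * M ^ (w (Fin.last k)) := by
              refine mul_le_mul_of_nonneg_left (h1 _ _) (hMnn _)
          _ = M ^ (w i₀.castSucc + w (Fin.last k)) := (pow_add M _ _).symm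
      have hpsum : |∑ b, p b| ≤ M ^ (w i₀.castSucc + w (Fin.last k)) := by
        have hpb : ∀ b, |p b| ≤ M ^ (w i₀.castSucc + w (Fin.last k)) / N := by
          intro b
          rw [le_div_iff₀ hNpos]
          have hss : Real.sqrt N * Real.sqrt N = (N:ℝ) := Real.mul_self_sqrt (le_of_lt hNpos)
          calc |p b| * N = (Real.sqrt N * |v i₀.castSucc b|) * (Real.sqrt N * |vl b|) := by
                simp only [hp]; rw [abs_mul]; conv_lhs => rw [← hss]
                ring
            _ ≤ M ^ (w i₀.castSucc) * M ^ (w (Fin.last k)) :=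
                mul_le_mul (h1 _ _) (h1 _ _) (by positivity) (hMnn _)
            _ = M ^ (w i₀.castSucc + w (Fin.last k)) := (pow_add M _ _).symm
        calc |∑ b, p b| ≤ ∑ b, |p b| := Finset.abs_sum_le_sum_abs _ _
          _ ≤ ∑ _b : Fin N, M ^ (w i₀.castSucc + w (Fin.last k)) / N :=
              Finset.sum_le_sum (fun b _ => hpb b)
          _ = M ^ (w i₀.castSucc + w (Fin.last k)) := by
              rw [Finset.sum_const, Finset.card_univ, Fintype.card_fin, nsmul_eq_mul,
                mul_div_cancel₀ _ (ne_of_gt hNpos)]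
      have hc1 : ∀ i j, Real.sqrt N * |vv i j| ≤ M ^ (ww i) := by
        intro i j
        by_cases hi : i = i₀
        · subst hi
          rw [hvv, hww, Function.update_self, Function.update_self]
          exact hptwise j
        · rw [hvv, hww, Function.update_of_ne hi, Function.update_of_ne hi]
          exact h1 i.castSucc j
      have hc2 : ∀ i, |∑ j, vv i j| ≤ M ^ (ww i) := by
        intro i
        by_cases hi : i = i₀
        · subst hi
          rw [hvv, hww, Function.update_self, Function.update_self]
          exact hpsum
        · rw [hvv, hww, Function.update_of_ne hi, Function.update_of_ne hi]
          exact h2 i.castSucc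
      have hwsum : ∑ i, ww i = (∑ i : Fin k, w i.castSucc) + w (Fin.last k) := by
        have e1 := Finset.add_sum_erase Finset.univ ww (Finset.mem_univ i₀)
        have e2 : w i₀.castSucc + ∑ i ∈ Finset.univ.erase i₀, w i.castSucc
            = ∑ i : Fin k, w i.castSucc :=
          Finset.add_sum_erase Finset.univ (fun i : Fin k => w i.castSucc)
            (Finset.mem_univ i₀)
        have e3 : ∑ i ∈ Finset.univ.erase i₀, ww i
            = ∑ i ∈ Finset.univ.erase i₀, w i.castSucc :=
          Finset.sum_congr rfl fun i hi => by
            rw [hww, Function.update_of_ne (Finset.mem_erase.mp hi).1]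
        have e4 : ww i₀ = w i₀.castSucc + w (Fin.last k) := by
          rw [hww, Function.update_self]
        omega
      have hprd : ∀ ℓ' : Fin k → Fin N,
          (∏ i, vv i (ℓ' i)) = (∏ i : Fin k, v i.castSucc (ℓ' i)) * vl (ℓ' i₀) := by
        intro ℓ'
        rw [← Finset.mul_prod_erase Finset.univ (fun i => vv i (ℓ' i)) (Finset.mem_univ i₀),
          ← Finset.mul_prod_erase Finset.univ (fun i => v i.castSucc (ℓ' i))
            (Finset.mem_univ i₀)]
        have he : ∀ i ∈ Finset.univ.erase i₀, vv i (ℓ' i) = v i.castSucc (ℓ' i) := by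
          intro i hi
          rw [hvv, Function.update_of_ne (Finset.mem_erase.mp hi).1]
        rw [Finset.prod_congr rfl he, hvv, Function.update_self, hp]
        ring
      have := ih vv ww hc1 hc2
      rw [hwsum] at this
      calc |∑ ℓ' ∈ S', (∏ i : Fin k, v i.castSucc (ℓ' i)) * vl (ℓ' i₀)|
          = |∑ ℓ' ∈ S', ∏ i, vv i (ℓ' i)| := by
            congr 1; exact Finset.sum_congr rfl fun ℓ' _ => (hprd ℓ').symm
        _ ≤ (k.factorial : ℝ) * M ^ ((∑ i : Fin k, w i.castSucc) + w (Fin.last k)) := this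
    -- put everything together
    have hwtot : ∑ i : Fin (k+1), w i = (∑ i : Fin k, w i.castSucc) + w (Fin.last k) :=
      Fin.sum_univ_castSucc w
    rw [hwtot]
    set A := ∑ i : Fin k, w i.castSucc
    set B := w (Fin.last k)
    have hTnn : (0:ℝ) ≤ (k.factorial : ℝ) * M ^ A := le_trans (abs_nonneg _) hT
    have hMB : |∑ b, vl b| ≤ M ^ B := h2 (Fin.last k)
    have hMBnn : (0:ℝ) ≤ M ^ B := le_trans (abs_nonneg _) hMB
    calc |(∑ b, vl b) * (∑ ℓ' ∈ S', ∏ i : Fin k, v i.castSucc (ℓ' i))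
            - ∑ i₀ : Fin k, ∑ ℓ' ∈ S', (∏ i : Fin k, v i.castSucc (ℓ' i)) * vl (ℓ' i₀)|
        ≤ |(∑ b, vl b) * (∑ ℓ' ∈ S', ∏ i : Fin k, v i.castSucc (ℓ' i))|
            + |∑ i₀ : Fin k, ∑ ℓ' ∈ S', (∏ i : Fin k, v i.castSucc (ℓ' i)) * vl (ℓ' i₀)| :=
          abs_sub _ _
      _ ≤ M ^ B * ((k.factorial : ℝ) * M ^ A)
            + ∑ i₀ : Fin k, |∑ ℓ' ∈ S', (∏ i : Fin k, v i.castSucc (ℓ' i)) * vl (ℓ' i₀)| := by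
          rw [abs_mul]
          exact add_le_add (mul_le_mul hMB hT (abs_nonneg _) hMBnn)
            (Finset.abs_sum_le_sum_abs _ _)
      _ ≤ M ^ B * ((k.factorial : ℝ) * M ^ A)
            + ∑ _i₀ : Fin k, (k.factorial : ℝ) * M ^ (A + B) := by
          exact add_le_add le_rfl (Finset.sum_le_sum fun i₀ _ => hTi i₀)
      _ = ((k+1).factorial : ℝ) * M ^ (A + B) := by
          rw [Finset.sum_const, Finset.card_univ, Fintype.card_fin, nsmul_eq_mul,
            Nat.factorial_succ, pow_add]
          push_cast
          ring

/-- **Lemma (Möbius-type bound for sums over tuples of distinct indices).**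
For vectors `u^(1), …, u^(k)` in `ℝ^N`,
`|∑_{ℓ distinct} ∏_i u^(i)_{ℓ_i}| ≤ k^(2k) · max(√N · U∞, min(Ū, N · U∞))^k`,
where `Ū = max_i |∑_j u^(i)_j|` and `U∞ = max_i ‖u^(i)‖_∞`. -/
theorem mobius_distinct_indices_bound (N k : ℕ) (u : Fin k → Fin N → ℝ) :
    |∑ ℓ ∈ Finset.univ.filter (fun ℓ : Fin k → Fin N => Function.Injective ℓ),
        ∏ i : Fin k, u i (ℓ i)| ≤
      (k : ℝ) ^ (2 * k) *
        max (Real.sqrt N * (⨆ i : Fin k, ⨆ j : Fin N, |u i j|))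
            (min (⨆ i : Fin k, |∑ j : Fin N, u i j|)
                 ((N : ℝ) * (⨆ i : Fin k, ⨆ j : Fin N, |u i j|))) ^ k := by
  rcases Nat.eq_zero_or_pos k with hk | hk
  · subst hk
    have hfil : (Finset.univ.filter (fun ℓ : Fin 0 → Fin N => Function.Injective ℓ))
        = Finset.univ :=
      Finset.filter_true_of_mem (fun ℓ _ => fun a b _ => Subsingleton.elim a b)
    rw [hfil]
    simp
  rcases Nat.eq_zero_or_pos N with hNz | hN
  · subst hNz
    haveI : IsEmpty (Fin k → Fin 0) := by
      refine ⟨fun f => ?_⟩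
      exact (f ⟨0, hk⟩).elim0
    have hLHS : (Finset.univ.filter (fun ℓ : Fin k → Fin 0 => Function.Injective ℓ)) = ∅ := by
      simp [Finset.univ_eq_empty]
    rw [hLHS]
    haveI : Nonempty (Fin k) := ⟨⟨0, hk⟩⟩
    have hU0 : (⨆ i : Fin k, ⨆ j : Fin 0, |u i j|) = 0 := by
      simp [Real.iSup_of_isEmpty]
    have hU1 : (⨆ i : Fin k, |∑ j : Fin 0, u i j|) = 0 := by
      simp [ciSup_const]
    rw [hU0, hU1]
    simp [zero_pow hk.ne', Nat.cast_zero]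
  -- main case: N ≥ 1, k ≥ 1
  haveI : Nonempty (Fin k) := ⟨⟨0, hk⟩⟩
  haveI : Nonempty (Fin N) := ⟨⟨0, hN⟩⟩
  set Uinf := ⨆ i : Fin k, ⨆ j : Fin N, |u i j| with hUinf
  set Ubar := ⨆ i : Fin k, |∑ j : Fin N, u i j| with hUbar
  set M := max (Real.sqrt N * Uinf) (min Ubar ((N:ℝ) * Uinf)) with hM
  have hUinf_le : ∀ i j, |u i j| ≤ Uinf := by
    intro i j
    have ha : |u i j| ≤ ⨆ j' : Fin N, |u i j'| :=
      le_ciSup (f := fun j' : Fin N => |u i j'|) (Set.Finite.bddAbove (Set.finite_range _)) j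
    have hb : (⨆ j' : Fin N, |u i j'|) ≤ Uinf :=
      le_ciSup (f := fun i' : Fin k => ⨆ j' : Fin N, |u i' j'|)
        (Set.Finite.bddAbove (Set.finite_range _)) i
    exact ha.trans hb
  have hUinf_nn : (0:ℝ) ≤ Uinf := le_trans (abs_nonneg _) (hUinf_le (Classical.arbitrary (Fin k)) (Classical.arbitrary (Fin N)))
  have hMnn : (0:ℝ) ≤ M := le_trans (by positivity) (le_max_left _ _)
  have h1 : ∀ (i : Fin k) (j : Fin N), Real.sqrt N * |u i j| ≤ M ^ (1:ℕ) := by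
    intro i j
    rw [pow_one]
    refine le_trans ?_ (le_max_left _ _)
    exact mul_le_mul_of_nonneg_left (hUinf_le i j) (Real.sqrt_nonneg _)
  have h2 : ∀ i : Fin k, |∑ j, u i j| ≤ M ^ (1:ℕ) := by
    intro i
    rw [pow_one]
    refine le_trans (le_min ?_ ?_) (le_max_right _ _)
    · exact le_ciSup (f := fun i' : Fin k => |∑ j : Fin N, u i' j|)
        (Set.Finite.bddAbove (Set.finite_range _)) i
    · calc |∑ j, u i j| ≤ ∑ j, |u i j| := Finset.abs_sum_le_sum_abs _ _
        _ ≤ ∑ _j : Fin N, Uinf := Finset.sum_le_sum fun j _ => hUinf_le i j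
        _ = (N:ℝ) * Uinf := by
            rw [Finset.sum_const, Finset.card_univ, Fintype.card_fin, nsmul_eq_mul]
  have hkey := key_bound N hN M k u (fun _ => 1) h1 h2
  have hws : ∑ _i : Fin k, (1:ℕ) = k := by simp
  rw [hws] at hkey
  refine le_trans hkey ?_
  refine mul_le_mul_of_nonneg_right ?_ (pow_nonneg hMnn k)
  have hfact : (k.factorial : ℕ) ≤ k ^ (2 * k) := by
    calc k.factorial ≤ k ^ k := Nat.factorial_le_pow k
      _ ≤ k ^ (2 * k) := Nat.pow_le_pow_right hk (by omega)
  exact_mod_cast hfact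

end
end

section
/- (Proposition: decomposition of relevant configurations into simple configurations). Let (F, π) be a relevant configuration. Then there exist L ∈ ℕ (independent of N), simple configurations (F_1, π_1),…,(F_L, π_L), and signs a ∈ {−1, 1}^L such that ∑_{ℓ ∈ C(π)} γ(Ψ; F, ℓ) = ∑_{i=1}^L a_i ∑_{ℓ ∈ C(π_i)} γ(Ψ; F_i, ℓ) for every Ψ ∈ ℝ^{N×N} with (ΨΨᵀ)_{jj} = 1 for all j ∈ [N]. Furthermore, if (F, π) has exactly one non-trivial root (|R(F)∖R₀(F)| = 1), then every (F_i, π_i) also has exactly one non-trivial root. -/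
open Filter Matrix
open scoped ENNReal NNReal Topology

noncomputable section
attribute [local instance] Classical.propDecidable

/-- A decorated forest `F = (V, E, h, p, q)` (Definition 5.1 of the paper).
Vertices are `{0, …, n-1}`; `parent v = some u` encodes the directed edge `u → v`.
The decreasing height function along edges guarantees that the directed graph
`(V, E)` is a forest. -/
structure DecForest where
  n : ℕ
  parent : Fin n → Option (Fin n)
  height : Fin n → ℕ
  pw : Fin n → ℕ
  qw : Fin n → ℕ
  height_parent : ∀ v u, parent v = some u → height v + 1 = height u
  pw_pos : ∀ v, parent v ≠ none → 1 ≤ pw v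
  height_zero_no_children : ∀ u, height u = 0 → ∀ v, parent v ≠ some u
  childless_qw : ∀ u, (∀ v, parent v ≠ some u) → 1 ≤ qw u → height u = 0
  conservation : ∀ u : Fin n, (∃ v, parent v = some u) →
    qw u = ∑ v ∈ Finset.univ.filter (fun v => parent v = some u), pw v

namespace DecForest

variable (F : DecForest)

/-- `v` is a root of the forest. -/
def isRoot (v : Fin F.n) : Prop := F.parent v = none

/-- The set of children of a vertex. -/
def children (u : Fin F.n) : Finset (Fin F.n) :=
  Finset.univ.filter fun v => F.parent v = some u

/-- The number of children of a vertex. -/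
def childCount (u : Fin F.n) : ℕ := (F.children u).card

/-- `v` is a leaf: a non-root vertex without children. -/
def isLeaf (v : Fin F.n) : Prop := F.parent v ≠ none ∧ F.childCount v = 0

/-- `v` is a trivial root: a root without children. -/
def isTrivialRoot (v : Fin F.n) : Prop := F.parent v = none ∧ F.childCount v = 0

/-- Two (non-root) vertices are siblings if they are distinct and share a parent. -/
def sibling (u v : Fin F.n) : Prop :=
  u ≠ v ∧ ∃ w, F.parent u = some w ∧ F.parent v = some w

/-- The number of non-trivial roots `|R(F)| - |R₀(F)|`. -/
def nontrivialRootCount : ℕ :=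
  (Finset.univ.filter fun v => F.isRoot v ∧ F.childCount v ≠ 0).card

end DecForest

/-- The polynomial `γ(Ψ; F, ℓ) = N⁻¹ ∏_{u→v ∈ E} Ψ_{ℓ_u ℓ_v}^{p_v}`. -/
def gammaPoly {N : ℕ} (F : DecForest) (Ψ : Matrix (Fin N) (Fin N) ℝ)
    (ℓ : Fin F.n → Fin N) : ℝ :=
  (N : ℝ)⁻¹ * ∏ v : Fin F.n, (F.parent v).elim 1 fun u => Ψ (ℓ u) (ℓ v) ^ F.pw v

/-- A coloring `ℓ` is consistent with the partition whose blocks are the fibers of `b`. -/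
def Consistent {n N : ℕ} (b : Fin n → Fin n) (ℓ : Fin n → Fin N) : Prop :=
  ∀ u v, ℓ u = ℓ v ↔ b u = b v

/-- `Γ(Ψ; F, π) = ∑_{ℓ ∈ C(π)} γ(Ψ; F, ℓ)`, the partition `π` being encoded by the
fibers of the function `b`. -/
def GammaSum {N : ℕ} (F : DecForest) (b : Fin F.n → Fin F.n)
    (Ψ : Matrix (Fin N) (Fin N) ℝ) : ℝ :=
  ∑ ℓ ∈ Finset.univ.filter (fun ℓ : Fin F.n → Fin N => Consistent b ℓ), gammaPoly F Ψ ℓ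

/-- The number `|π|` of blocks of the partition encoded by `b`. -/
def numBlocks {n : ℕ} (b : Fin n → Fin n) : ℕ := (Finset.univ.image b).card

/-- The cardinality of the block of `v` in the partition encoded by `b`. -/
def blockCard {n : ℕ} (b : Fin n → Fin n) (v : Fin n) : ℕ :=
  (Finset.univ.filter fun u => b u = b v).card

/-- `v, v'` is a pair of nullifying leaves (with the corresponding pair of nullifying
edges) for the configuration `(F, π)`. -/
def NullifyingPair (F : DecForest) (b : Fin F.n → Fin F.n) (v v' : Fin F.n) : Prop :=
  v ≠ v' ∧ F.isLeaf v ∧ F.isLeaf v' ∧ F.pw v = 1 ∧ F.pw v' = 1 ∧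
    b v = b v' ∧ (∀ u, b u = b v → u = v ∨ u = v') ∧
    ∀ u u', F.parent v = some u → F.parent v' = some u' → b u ≠ b u'

/-- `v, v'` is a removable pair of leaves (with the corresponding removable pair of
edges) for the configuration `(F, π)`. -/
def RemovablePair (F : DecForest) (b : Fin F.n → Fin F.n) (v v' : Fin F.n) : Prop :=
  v ≠ v' ∧ F.isLeaf v ∧ F.isLeaf v' ∧ F.pw v = 1 ∧ F.pw v' = 1 ∧
    b v = b v' ∧ (∀ u, b u = b v → u = v ∨ u = v') ∧
    ∀ u u', F.parent v = some u → F.parent v' = some u' → b u = b u'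

/-- The number `|L₀(F, π)|` of nullifying leaves of the configuration. -/
def nullLeafCount (F : DecForest) (b : Fin F.n → Fin F.n) : ℕ :=
  (Finset.univ.filter fun v => ∃ v', NullifyingPair F b v v').card

/-- The exponent `η(F, π) = |L₀(F,π)|/4 + 1 - |π| + (1/2) ∑_{v ∉ R(F)} p_v`. -/
def etaExponent (F : DecForest) (b : Fin F.n → Fin F.n) : ℝ :=
  (nullLeafCount F b : ℝ) / 4 + 1 - (numBlocks b : ℝ) +
    (1 / 2 : ℝ) * ∑ v ∈ Finset.univ.filter (fun v => F.parent v ≠ none), (F.pw v : ℝ)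

/-- The contribution of a vertex to the parity count of its block (also the exponent of
its sign variable): `q_u` for non-trivial roots, `p_v` for leaves, `p_u + q_u` for
internal non-root vertices, `0` for trivial roots. -/
def vertexContrib (F : DecForest) (v : Fin F.n) : ℕ :=
  if F.parent v = none then (if F.childCount v = 0 then 0 else F.qw v)
  else if F.childCount v = 0 then F.pw v
  else F.pw v + F.qw v

/-- The parity rule/property: the total contribution of every block is even. -/
def ParityProp (F : DecForest) (b : Fin F.n → Fin F.n) : Prop :=
  ∀ v : Fin F.n,
    Even (∑ u ∈ Finset.univ.filter (fun u => b u = b v), vertexContrib F u)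

/-- Relevant configurations (Definition 5.6 of the paper). -/
structure RelevantConfig (F : DecForest) (b : Fin F.n → Fin F.n) : Prop where
  root_rule : ∀ u v, F.isRoot u → F.isRoot v → b u = b v
  sibling_rule : ∀ u v, F.sibling u v → b u ≠ b v
  forbidden_weights : ∀ v, ¬F.isRoot v →
    ¬(F.pw v = 1 ∧ F.qw v = 1) ∧ ¬(F.pw v = 2 ∧ F.qw v = 0)
  leaf_rule : ∀ v, F.isLeaf v → 1 ≤ F.qw v → blockCard b v ≠ 1
  trivial_root_rule : ∀ v, F.isTrivialRoot v → 1 ≤ F.qw v → blockCard b v ≠ 1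
  parity_rule : ParityProp F b

/-- Simple configurations (Definition 5.9 of the paper). -/
structure SimpleConfig (F : DecForest) (b : Fin F.n → Fin F.n) : Prop where
  root_prop : ∀ u v, F.isRoot u → F.isRoot v → b u = b v
  singleton_leaf : ∀ v, F.isLeaf v → blockCard b v = 1 → 4 ≤ F.pw v
  paired_leaf : ∀ v v', v ≠ v' → F.isLeaf v → F.isLeaf v' → F.pw v = 1 → F.pw v' = 1 →
    b v = b v' → (∀ u, b u = b v → u = v ∨ u = v') →
    ∀ u u', F.parent v = some u → F.parent v' = some u' → b u ≠ b u'
  forbidden_weights : ∀ v, ¬F.isRoot v → blockCard b v = 1 →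
    ¬(F.pw v = 1 ∧ F.qw v = 1) ∧ ¬(F.pw v = 2 ∧ F.qw v = 0)
  parity_prop : ParityProp F b

/-- Semi-simple configurations (Definition 7.1 of the paper). -/
structure SemiSimpleConfig (F : DecForest) (b : Fin F.n → Fin F.n) : Prop where
  root_prop : ∀ u v, F.isRoot u → F.isRoot v → b u = b v
  sibling_prop : ∀ u v, F.sibling u v →
    ¬(b u = b v ∧ ∀ w, b w = b u → w = u ∨ w = v)
  singleton_leaf : ∀ v, F.isLeaf v → blockCard b v = 1 → 4 ≤ F.pw v
  forbidden_weights : ∀ v, ¬F.isRoot v → blockCard b v = 1 →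
    ¬(F.pw v = 1 ∧ F.qw v = 1) ∧ ¬(F.pw v = 2 ∧ F.qw v = 0)
  parity_prop : ParityProp F b

end

noncomputable section

section AuxDecomp
attribute [local instance] Classical.propDecidable


private lemma even_iff_zmod (n : ℕ) : Even n ↔ (n : ZMod 2) = 0 := by
  rw [ZMod.natCast_eq_zero_iff, even_iff_two_dvd]

private lemma mem_children {F : DecForest} {u y : Fin F.n} :
    y ∈ F.children u ↔ F.parent y = some u := by
  simp [DecForest.children]

private lemma exists_root_chain (F : DecForest) (w : Fin F.n) :
    ∃ r, F.isRoot r ∧ Relation.ReflTransGen (fun a c => F.parent a = some c) w r := by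
  suffices h : ∀ k (w : Fin F.n),
      (Finset.univ.filter fun x => F.height w < F.height x).card ≤ k →
      ∃ r, F.isRoot r ∧ Relation.ReflTransGen (fun a c => F.parent a = some c) w r by
    exact h _ w le_rfl
  intro k
  induction k with
  | zero =>
    intro w hw
    cases hp : F.parent w with
    | none => exact ⟨w, hp, .refl⟩
    | some z =>
      exfalso
      have hz : F.height w + 1 = F.height z := F.height_parent w z hp
      have hzm : z ∈ Finset.univ.filter fun x => F.height w < F.height x := by
        simp only [Finset.mem_filter, Finset.mem_univ, true_and]; omega
      have := Finset.card_pos.mpr ⟨z, hzm⟩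
      omega
  | succ k ih =>
    intro w hw
    cases hp : F.parent w with
    | none => exact ⟨w, hp, .refl⟩
    | some z =>
      have hz : F.height w + 1 = F.height z := F.height_parent w z hp
      have hzm : z ∈ Finset.univ.filter fun x => F.height w < F.height x := by
        simp only [Finset.mem_filter, Finset.mem_univ, true_and]; omega
      have hss : (Finset.univ.filter fun x => F.height z < F.height x) ⊂
          (Finset.univ.filter fun x => F.height w < F.height x) := by
        constructor
        · intro x hx
          simp only [Finset.mem_filter, Finset.mem_univ, true_and] at hx ⊢
          omega
        · intro hsub
          have := hsub hzm
          simp only [Finset.mem_filter, Finset.mem_univ, true_and] at this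
          omega
      have hcard : (Finset.univ.filter fun x => F.height z < F.height x).card ≤ k := by
        have := Finset.card_lt_card hss
        omega
      obtain ⟨r, hr, hchain⟩ := ih z hcard
      exact ⟨r, hr, Relation.ReflTransGen.head hp hchain⟩

private lemma exists_nontrivial_root_above (F : DecForest) (w : Fin F.n)
    (hw : F.parent w ≠ none) :
    ∃ r, F.isRoot r ∧ F.childCount r ≠ 0 ∧
      Relation.ReflTransGen (fun a c => F.parent a = some c) w r := by
  obtain ⟨r, hr, hchain⟩ := exists_root_chain F w
  have hwr : w ≠ r := by rintro rfl; exact hw hr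
  rcases Relation.ReflTransGen.cases_tail hchain with h | ⟨c, _, hc⟩
  · exact absurd h.symm hwr
  · refine ⟨r, hr, ?_, hchain⟩
    have : c ∈ F.children r := mem_children.mpr hc
    exact fun h0 => (Finset.card_ne_zero_of_mem this) h0

private lemma chain_avoid (F : DecForest) (v u : Fin F.n)
    (hchild : F.children u = {v}) (hlv : F.childCount v = 0) (w : Fin F.n)
    (hwne : w ≠ u) (hwnev : w ≠ v)
    (hch : Relation.ReflTransGen (fun a c => F.parent a = some c) w u) : False := by
  rcases Relation.ReflTransGen.cases_tail hch with h | ⟨c, hc1, hc2⟩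
  · exact hwne h.symm
  · have hcv : c = v := by
      have : c ∈ F.children u := mem_children.mpr hc2
      rw [hchild] at this; simpa using this
    rw [hcv] at hc1
    rcases Relation.ReflTransGen.cases_tail hc1 with h | ⟨c', _, hc2'⟩
    · exact hwnev h.symm
    · have hmem : c' ∈ F.children v := mem_children.mpr hc2'
      rw [Finset.card_eq_zero.mp hlv] at hmem
      simpa using hmem



/-- Data of a removable pair of leaves with distinct parents. -/
structure PairData (F : DecForest) (b : Fin F.n → Fin F.n) where
  v : Fin F.n
  v' : Fin F.n
  u : Fin F.n
  u' : Fin F.n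
  hvv : v ≠ v'
  hpar : F.parent v = some u
  hpar' : F.parent v' = some u'
  huu : u ≠ u'
  hcv : F.childCount v = 0
  hcv' : F.childCount v' = 0
  hpv : F.pw v = 1
  hpv' : F.pw v' = 1
  hbb : b v = b v'
  hexact : ∀ x, b x = b v → x = v ∨ x = v'
  hbu : b u = b u'

namespace PairData

variable {F : DecForest} {b : Fin F.n → Fin F.n} (D : PairData F b)

lemma v_mem : D.v ∈ F.children D.u := mem_children.mpr D.hpar
lemma v'_mem : D.v' ∈ F.children D.u' := mem_children.mpr D.hpar'

lemma children_v : F.children D.v = ∅ := Finset.card_eq_zero.mp D.hcv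
lemma children_v' : F.children D.v' = ∅ := Finset.card_eq_zero.mp D.hcv'

lemma u_ne_v : D.u ≠ D.v := by
  intro h; have := D.v_mem; rw [h, D.children_v] at this; simpa using this
lemma u_ne_v' : D.u ≠ D.v' := by
  intro h; have := D.v_mem; rw [h, D.children_v'] at this; simpa using this
lemma u'_ne_v : D.u' ≠ D.v := by
  intro h; have := D.v'_mem; rw [h, D.children_v] at this; simpa using this
lemma u'_ne_v' : D.u' ≠ D.v' := by
  intro h; have := D.v'_mem; rw [h, D.children_v'] at this; simpa using this

/-- membership of children of `u`: the only removed child of `u` is `v`. -/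
lemma mem_uv {y : Fin F.n} (hy : F.parent y = some D.u) (hyv : y ≠ D.v) :
    y ∈ (F.children D.u).erase D.v :=
  Finset.mem_erase.mpr ⟨hyv, mem_children.mpr hy⟩

lemma qw_u : F.qw D.u = 1 + ∑ x ∈ (F.children D.u).erase D.v, F.pw x := by
  have h := F.conservation D.u ⟨D.v, D.hpar⟩
  have h2 := Finset.add_sum_erase _ F.pw D.v_mem
  simp only [DecForest.children] at h2
  rw [h, ← h2, D.hpv]
  rfl

lemma qw_u' : F.qw D.u' = 1 + ∑ x ∈ (F.children D.u').erase D.v', F.pw x := by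
  have h := F.conservation D.u' ⟨D.v', D.hpar'⟩
  have h2 := Finset.add_sum_erase _ F.pw D.v'_mem
  simp only [DecForest.children] at h2
  rw [h, ← h2, D.hpv']
  rfl

lemma qw_u_pos : 1 ≤ F.qw D.u := by rw [D.qw_u]; omega
lemma qw_u'_pos : 1 ≤ F.qw D.u' := by rw [D.qw_u']; omega

/-- children of `u` other than `v`, as a lemma: if `children u \ {v}` is empty then
`qw u = 1`. -/
lemma qw_u_eq_one (h : (F.children D.u).erase D.v = ∅) : F.qw D.u = 1 := by
  rw [D.qw_u, h]; simp

lemma qw_u'_eq_one (h : (F.children D.u').erase D.v' = ∅) : F.qw D.u' = 1 := by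
  rw [D.qw_u', h]; simp

/-- The reduced decorated forest: `v, v'` are detached (they become trivial roots)
and the `q`-weights of their former parents drop by one. -/
@[reducible]
def Fmod : DecForest where
  n := F.n
  parent := fun x => if x = D.v ∨ x = D.v' then none else F.parent x
  height := F.height
  pw := F.pw
  qw := fun x => F.qw x - (if x = D.u then 1 else 0) - (if x = D.u' then 1 else 0)
  height_parent := by
    intro x y h
    by_cases hx : x = D.v ∨ x = D.v'
    · simp [hx] at h
    · rw [if_neg hx] at h; exact F.height_parent x y h
  pw_pos := by
    intro x hx
    by_cases hx' : x = D.v ∨ x = D.v'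
    · simp [hx'] at hx
    · rw [if_neg hx'] at hx; exact F.pw_pos x hx
  height_zero_no_children := by
    intro y hy x
    by_cases hx : x = D.v ∨ x = D.v'
    · simp [hx]
    · rw [if_neg hx]; exact F.height_zero_no_children y hy x
  childless_qw := by
    intro y hy hq
    by_cases hall : ∀ x, F.parent x ≠ some y
    · refine F.childless_qw y hall ?_
      by_cases h1 : y = D.u <;> by_cases h2 : y = D.u' <;>
        simp only [h1, h2, if_pos, if_neg, if_true, if_false] at hq <;>
        simp_all <;> omega
    · push_neg at hall
      obtain ⟨x, hx⟩ := hall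
      have hxv : x = D.v ∨ x = D.v' := by
        by_contra hc
        exact (hy x) (by show (if x = D.v ∨ x = D.v' then none else F.parent x) = some y; rw [if_neg hc]; exact hx)
      exfalso
      rcases hxv with rfl | rfl
      · have hyu : D.u = y := Option.some.inj (D.hpar.symm.trans hx)
        subst hyu
        have herase : (F.children D.u).erase D.v = ∅ := by
          by_contra hne
          obtain ⟨z, hz⟩ := Finset.nonempty_iff_ne_empty.mpr hne
          have hz1 := Finset.mem_erase.mp hz
          have hz2 := mem_children.mp hz1.2
          have hzv : z = D.v ∨ z = D.v' := by
            by_contra hc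
            exact (hy z) (by show (if z = D.v ∨ z = D.v' then none else F.parent z) = some _; rw [if_neg hc]; exact hz2)
          rcases hzv with rfl | rfl
          · exact hz1.1 rfl
          · exact D.huu (Option.some.inj (D.hpar'.symm.trans hz2)).symm
        have hq1 : F.qw D.u = 1 := D.qw_u_eq_one herase
        rw [hq1] at hq
        simp [if_neg D.huu] at hq
      · have hyu : D.u' = y := Option.some.inj (D.hpar'.symm.trans hx)
        subst hyu
        have herase : (F.children D.u').erase D.v' = ∅ := by
          by_contra hne
          obtain ⟨z, hz⟩ := Finset.nonempty_iff_ne_empty.mpr hne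
          have hz1 := Finset.mem_erase.mp hz
          have hz2 := mem_children.mp hz1.2
          have hzv : z = D.v ∨ z = D.v' := by
            by_contra hc
            exact (hy z) (by show (if z = D.v ∨ z = D.v' then none else F.parent z) = some _; rw [if_neg hc]; exact hz2)
          rcases hzv with rfl | rfl
          · exact D.huu (Option.some.inj (D.hpar.symm.trans hz2))
          · exact hz1.1 rfl
        have hq1 : F.qw D.u' = 1 := D.qw_u'_eq_one herase
        rw [hq1] at hq
        simp [if_neg (Ne.symm D.huu)] at hq
  conservation := by
    intro y hy
    obtain ⟨x, hx⟩ := hy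
    by_cases hxv : x = D.v ∨ x = D.v'
    · simp [hxv] at hx
    · rw [if_neg hxv] at hx
      have hset : (Finset.univ.filter fun z =>
          (if z = D.v ∨ z = D.v' then none else F.parent z) = some y)
          = ((F.children y).erase D.v).erase D.v' := by
        ext z
        simp only [Finset.mem_filter, Finset.mem_univ, true_and, Finset.mem_erase,
          mem_children]
        constructor
        · intro h
          by_cases hz : z = D.v ∨ z = D.v'
          · simp [hz] at h
          · push_neg at hz
            rw [if_neg (by tauto)] at h
            exact ⟨hz.2, hz.1, h⟩
        · rintro ⟨h1, h2, h3⟩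
          rw [if_neg (by tauto)]
          exact h3
      rw [hset]
      by_cases hyu : y = D.u
      · subst hyu
        have hee : ((F.children D.u).erase D.v).erase D.v'
            = (F.children D.u).erase D.v := by
          apply Finset.erase_eq_of_notMem
          intro hmem
          have := mem_children.mp (Finset.mem_erase.mp hmem).2
          exact D.huu (Option.some.inj (D.hpar'.symm.trans this)).symm
        rw [hee]
        have hqu := D.qw_u
        rw [if_pos rfl, if_neg D.huu]
        omega
      · by_cases hyu' : y = D.u'
        · subst hyu'
          have h1 : (F.children D.u').erase D.v = F.children D.u' := by
            apply Finset.erase_eq_of_notMem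
            intro hmem
            exact D.huu (Option.some.inj (D.hpar.symm.trans (mem_children.mp hmem)))
          rw [h1]
          have hqu := D.qw_u'
          rw [if_neg (Ne.symm D.huu), if_pos rfl]
          omega
        · have h1 : (F.children y).erase D.v = F.children y := by
            apply Finset.erase_eq_of_notMem
            intro hmem
            exact hyu (Option.some.inj (D.hpar.symm.trans (mem_children.mp hmem))).symm
          have h2 : (F.children y).erase D.v' = F.children y := by
            apply Finset.erase_eq_of_notMem
            intro hmem
            exact hyu' (Option.some.inj (D.hpar'.symm.trans (mem_children.mp hmem))).symm
          rw [h1, h2, if_neg hyu, if_neg hyu']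
          have hc := F.conservation y ⟨x, hx⟩
          have hc2 : F.qw y = ∑ w ∈ F.children y, F.pw w := hc
          omega

end PairData


end AuxDecomp
section ColorAux
attribute [local instance] Classical.propDecidable

/-- The partition obtained from `b` by merging the block of `v` into the block
represented by the value `t`. -/
def btf {n : ℕ} (b : Fin n → Fin n) (v t : Fin n) : Fin n → Fin n :=
  fun x => if b x = b v then t else b x

lemma btf_pos {n : ℕ} (b : Fin n → Fin n) {v x : Fin n} (t : Fin n) (h : b x = b v) :
    btf b v t x = t := if_pos h

lemma btf_neg {n : ℕ} (b : Fin n → Fin n) {v x : Fin n} (t : Fin n) (h : ¬ b x = b v) :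
    btf b v t x = b x := if_neg h

lemma btf_self {n : ℕ} (b : Fin n → Fin n) (v : Fin n) : btf b v (b v) = b := by
  funext x
  unfold btf
  split <;> simp [*]

namespace PairData

variable {F : DecForest} {b : Fin F.n → Fin F.n} (D : PairData F b)

lemma bx_ne {x : Fin F.n} (h1 : x ≠ D.v) (h2 : x ≠ D.v') : b x ≠ b D.v :=
  fun h => (D.hexact x h).elim h1 h2

lemma v_not_root : ¬ F.isRoot D.v := by
  intro h; rw [DecForest.isRoot, D.hpar] at h; cases h

lemma v'_not_root : ¬ F.isRoot D.v' := by
  intro h; rw [DecForest.isRoot, D.hpar'] at h; cases h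

lemma bu_ne : b D.u ≠ b D.v := D.bx_ne D.u_ne_v D.u_ne_v'
lemma bu'_ne : b D.u' ≠ b D.v := D.bx_ne D.u'_ne_v D.u'_ne_v'

lemma broot_ne {r₀ : Fin F.n} (hr₀ : F.isRoot r₀) : b r₀ ≠ b D.v := by
  refine D.bx_ne (fun h => ?_) (fun h => ?_)
  · exact D.v_not_root (h ▸ hr₀)
  · exact D.v'_not_root (h ▸ hr₀)

variable {N : ℕ}

/-- Recoding: recolor the block of `v` by the color `p.2`. -/
def recode (p : (Fin F.n → Fin N) × Fin N) : Fin F.n → Fin N :=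
  fun x => if b x = b D.v then p.2 else p.1 x

lemma recode_pos {p : (Fin F.n → Fin N) × Fin N} {x : Fin F.n} (h : b x = b D.v) :
    D.recode p x = p.2 := if_pos h

lemma recode_neg {p : (Fin F.n → Fin N) × Fin N} {x : Fin F.n} (h : ¬ b x = b D.v) :
    D.recode p x = p.1 x := if_neg h

/-- Decoding: remember the color of `v` and recolor its block by the root color. -/
def decode (r₀ : Fin F.n) (ℓ : Fin F.n → Fin N) : (Fin F.n → Fin N) × Fin N :=
  (fun x => if b x = b D.v then ℓ r₀ else ℓ x, ℓ D.v)

lemma decode_pos {r₀ : Fin F.n} {ℓ : Fin F.n → Fin N} {x : Fin F.n} (h : b x = b D.v) :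
    (D.decode r₀ ℓ).1 x = ℓ r₀ := if_pos h

lemma decode_neg {r₀ : Fin F.n} {ℓ : Fin F.n → Fin N} {x : Fin F.n} (h : ¬ b x = b D.v) :
    (D.decode r₀ ℓ).1 x = ℓ x := if_neg h

variable {r₀ : Fin F.n}

lemma cons_decode (hr₀ : F.isRoot r₀) {t : Fin F.n} {ℓ : Fin F.n → Fin N}
    (h : Consistent (btf b D.v t) ℓ) :
    Consistent (btf b D.v (b r₀)) (D.decode r₀ ℓ).1 := by
  have hbr := D.broot_ne hr₀
  intro x y
  by_cases hx : b x = b D.v <;> by_cases hy : b y = b D.v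
  · rw [D.decode_pos hx, D.decode_pos hy, btf_pos _ _ hx, btf_pos _ _ hy]
    simp
  · rw [D.decode_pos hx, D.decode_neg hy, btf_pos _ _ hx, btf_neg _ _ hy]
    have hh := h r₀ y
    rw [btf_neg _ _ hbr, btf_neg _ _ hy] at hh
    exact hh
  · rw [D.decode_neg hx, D.decode_pos hy, btf_neg _ _ hx, btf_pos _ _ hy]
    have hh := h x r₀
    rw [btf_neg _ _ hx, btf_neg _ _ hbr] at hh
    exact hh
  · rw [D.decode_neg hx, D.decode_neg hy, btf_neg _ _ hx, btf_neg _ _ hy]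
    have hh := h x y
    rw [btf_neg _ _ hx, btf_neg _ _ hy] at hh
    exact hh

lemma decode_recode (hr₀ : F.isRoot r₀) {p : (Fin F.n → Fin N) × Fin N}
    (hm : Consistent (btf b D.v (b r₀)) p.1) :
    D.decode r₀ (D.recode p) = p := by
  have hbr := D.broot_ne hr₀
  have h1 : (D.decode r₀ (D.recode p)).2 = p.2 := D.recode_pos rfl
  have h2 : (D.decode r₀ (D.recode p)).1 = p.1 := by
    funext x
    by_cases hx : b x = b D.v
    · rw [D.decode_pos hx, D.recode_neg hbr]
      have hh := hm x r₀
      rw [btf_pos _ _ hx, btf_neg _ _ hbr] at hh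
      exact (hh.mpr rfl).symm
    · rw [D.decode_neg hx, D.recode_neg hx]
  exact Prod.ext h2 h1

lemma recode_decode {t : Fin F.n} {ℓ : Fin F.n → Fin N}
    (h : Consistent (btf b D.v t) ℓ) :
    D.recode (D.decode r₀ ℓ) = ℓ := by
  funext x
  by_cases hx : b x = b D.v
  · rw [D.recode_pos hx]
    show ℓ D.v = ℓ x
    have hh := h D.v x
    rw [btf_pos _ _ rfl, btf_pos _ _ hx] at hh
    exact hh.mpr rfl
  · rw [D.recode_neg hx, D.decode_neg hx]

/-- Every recoded coloring is consistent with one of the merged partitions. -/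
lemma class_exists (hr₀ : F.isRoot r₀) {p : (Fin F.n → Fin N) × Fin N}
    (hm : Consistent (btf b D.v (b r₀)) p.1) :
    ∃ t ∈ Finset.univ.image b, Consistent (btf b D.v t) (D.recode p) := by
  have hbr := D.broot_ne hr₀
  have hoff : ∀ x y : Fin F.n, ¬ b x = b D.v → ¬ b y = b D.v →
      (p.1 x = p.1 y ↔ b x = b y) := by
    intro x y hx hy
    have hh := hm x y
    rw [btf_neg _ _ hx, btf_neg _ _ hy] at hh
    exact hh
  by_cases hex : ∃ x, ¬ b x = b D.v ∧ p.1 x = p.2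
  · obtain ⟨z, hz1, hz2⟩ := hex
    refine ⟨b z, Finset.mem_image_of_mem b (Finset.mem_univ z), ?_⟩
    intro x y
    by_cases hx : b x = b D.v <;> by_cases hy : b y = b D.v
    · rw [D.recode_pos hx, D.recode_pos hy, btf_pos _ _ hx, btf_pos _ _ hy]
      simp
    · rw [D.recode_pos hx, D.recode_neg hy, btf_pos _ _ hx, btf_neg _ _ hy]
      rw [← hz2, hoff z y hz1 hy]
    · rw [D.recode_neg hx, D.recode_pos hy, btf_neg _ _ hx, btf_pos _ _ hy]
      rw [← hz2, hoff x z hx hz1]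
    · rw [D.recode_neg hx, D.recode_neg hy, btf_neg _ _ hx, btf_neg _ _ hy]
      exact hoff x y hx hy
  · push_neg at hex
    refine ⟨b D.v, Finset.mem_image_of_mem b (Finset.mem_univ D.v), ?_⟩
    rw [btf_self]
    intro x y
    by_cases hx : b x = b D.v <;> by_cases hy : b y = b D.v
    · rw [D.recode_pos hx, D.recode_pos hy, hx, hy]
      simp
    · rw [D.recode_pos hx, D.recode_neg hy, hx]
      constructor
      · intro hk; exact absurd hk.symm (hex y hy)
      · intro hk; exact absurd hk.symm hy
    · rw [D.recode_neg hx, D.recode_pos hy, hy]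
      constructor
      · intro hk; exact absurd hk (hex x hx)
      · intro hk; exact absurd hk hx
    · rw [D.recode_neg hx, D.recode_neg hy]
      exact hoff x y hx hy

/-- Distinct merged partitions are never simultaneously consistent with a coloring. -/
lemma class_unique {t t' : Fin F.n} (ht : t ∈ Finset.univ.image b)
    (ht' : t' ∈ Finset.univ.image b) (htt : t ≠ t') {ℓ : Fin F.n → Fin N}
    (h : Consistent (btf b D.v t) ℓ) (h' : Consistent (btf b D.v t') ℓ) : False := by
  have core : ∀ (s s' : Fin F.n), s' ∈ Finset.univ.image b → s ≠ s' → s' ≠ b D.v →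
      Consistent (btf b D.v s) ℓ → Consistent (btf b D.v s') ℓ → False := by
    intro s s' hs' hss hs'v hc hc'
    obtain ⟨z, _, hz⟩ := Finset.mem_image.mp hs'
    have hzv : ¬ b z = b D.v := by rw [hz]; exact hs'v
    have h1 := hc D.v z
    have h2 := hc' D.v z
    rw [btf_pos _ _ rfl, btf_neg _ _ hzv] at h1 h2
    rw [hz] at h1 h2
    exact hss (h1.mp (h2.mpr rfl))
  by_cases ht'v : t' = b D.v
  · have htv : t ≠ b D.v := fun h0 => htt (h0.trans ht'v.symm)
    exact core t' t ht (Ne.symm htt) htv h' h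
  · exact core t t' ht' htt ht'v h h'

end PairData
end ColorAux
section GammaAux
attribute [local instance] Classical.propDecidable

namespace PairData

variable {F : DecForest} {b : Fin F.n → Fin F.n} (D : PairData F b) {N : ℕ}

lemma no_parent_v {x : Fin F.n} (h : F.parent x = some D.v) : False := by
  have : x ∈ F.children D.v := mem_children.mpr h
  rw [D.children_v] at this
  simp at this

lemma no_parent_v' {x : Fin F.n} (h : F.parent x = some D.v') : False := by
  have : x ∈ F.children D.v' := mem_children.mpr h
  rw [D.children_v'] at this
  simp at this

lemma Fmod_parent (x : Fin F.n) :
    D.Fmod.parent x = if x = D.v ∨ x = D.v' then none else F.parent x := rfl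

lemma gamma_recode (Ψ : Matrix (Fin N) (Fin N) ℝ) (p : (Fin F.n → Fin N) × Fin N) :
    gammaPoly F Ψ (D.recode p) =
      Ψ (p.1 D.u) p.2 * Ψ (p.1 D.u') p.2 * gammaPoly D.Fmod Ψ p.1 := by
  classical
  set ℓ := D.recode p with hℓ
  have hbv' : b D.v' = b D.v := D.hbb.symm
  have hℓv : ℓ D.v = p.2 := D.recode_pos rfl
  have hℓv' : ℓ D.v' = p.2 := D.recode_pos hbv'
  have hrest : ∀ x : Fin F.n, x ≠ D.v → x ≠ D.v' → ℓ x = p.1 x := fun x h1 h2 =>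
    D.recode_neg (D.bx_ne h1 h2)
  unfold gammaPoly
  have hvmem : D.v ∈ (Finset.univ : Finset (Fin F.n)) := Finset.mem_univ _
  have hv'mem : D.v' ∈ (Finset.univ : Finset (Fin F.n)).erase D.v :=
    Finset.mem_erase.mpr ⟨Ne.symm D.hvv, Finset.mem_univ _⟩
  set f : Fin F.n → ℝ := fun x => (F.parent x).elim 1 fun w => Ψ (ℓ w) (ℓ x) ^ F.pw x
    with hf
  set g : Fin F.n → ℝ :=
    fun x => (D.Fmod.parent x).elim 1 fun w => Ψ (p.1 w) (p.1 x) ^ D.Fmod.pw x with hg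
  have hsplitf : ∏ x : Fin F.n, f x =
      f D.v * (f D.v' * ∏ x ∈ (Finset.univ.erase D.v).erase D.v', f x) := by
    rw [Finset.mul_prod_erase _ f hv'mem, Finset.mul_prod_erase _ f hvmem]
  have hsplitg : ∏ x : Fin F.n, g x =
      g D.v * (g D.v' * ∏ x ∈ (Finset.univ.erase D.v).erase D.v', g x) := by
    rw [Finset.mul_prod_erase _ g hv'mem, Finset.mul_prod_erase _ g hvmem]
  have hfv : f D.v = Ψ (p.1 D.u) p.2 := by
    rw [hf]
    dsimp only
    rw [D.hpar, Option.elim, hℓv, hrest D.u D.u_ne_v D.u_ne_v', D.hpv, pow_one]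
  have hfv' : f D.v' = Ψ (p.1 D.u') p.2 := by
    rw [hf]
    dsimp only
    rw [D.hpar', Option.elim, hℓv', hrest D.u' D.u'_ne_v D.u'_ne_v', D.hpv', pow_one]
  have hgv : g D.v = 1 := by
    rw [hg]
    dsimp only
    rw [if_pos (Or.inl rfl), Option.elim_none]
  have hgv' : g D.v' = 1 := by
    rw [hg]
    dsimp only
    rw [if_pos (Or.inr rfl), Option.elim_none]
  have hfg : ∀ x ∈ (Finset.univ.erase D.v).erase D.v', f x = g x := by
    intro x hx
    obtain ⟨hx2, hx1, -⟩ := Finset.mem_erase.mp hx |>.imp id Finset.mem_erase.mp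
    -- hx2 : x ≠ D.v', hx1 : x ≠ D.v
    rw [hf, hg]
    dsimp only
    rw [if_neg (by tauto)]
    cases hpx : F.parent x with
    | none => rfl
    | some w =>
      have hw1 : w ≠ D.v := fun h => D.no_parent_v (h ▸ hpx)
      have hw2 : w ≠ D.v' := fun h => D.no_parent_v' (h ▸ hpx)
      rw [Option.elim_some, Option.elim_some, hrest w hw1 hw2, hrest x hx1 hx2]
  show (↑N)⁻¹ * (∏ x : Fin F.n, f x) =
    Ψ (p.1 D.u) p.2 * Ψ (p.1 D.u') p.2 * ((↑N)⁻¹ * ∏ x : Fin F.n, g x)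
  rw [hsplitf, hsplitg, hfv, hfv', hgv, hgv', Finset.prod_congr rfl hfg]
  ring

lemma sum_recode {r₀ : Fin F.n} (Ψ : Matrix (Fin N) (Fin N) ℝ)
    (hΨ : ∀ j : Fin N, (Ψ * Ψᵀ) j j = 1) (m : Fin F.n → Fin N)
    (hm : Consistent (btf b D.v (b r₀)) m) :
    ∑ k : Fin N, gammaPoly F Ψ (D.recode (m, k)) = gammaPoly D.Fmod Ψ m := by
  have hmu : m D.u = m D.u' := by
    have hh := hm D.u D.u'
    rw [btf_neg _ _ D.bu_ne, btf_neg _ _ D.bu'_ne] at hh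
    exact hh.mpr D.hbu
  have hone : ∑ k : Fin N, Ψ (m D.u) k * Ψ (m D.u') k = 1 := by
    have hh := hΨ (m D.u)
    rw [Matrix.mul_apply] at hh
    simp only [Matrix.transpose_apply] at hh
    rw [← hmu]
    exact hh
  calc ∑ k : Fin N, gammaPoly F Ψ (D.recode (m, k))
      = ∑ k : Fin N, Ψ (m D.u) k * Ψ (m D.u') k * gammaPoly D.Fmod Ψ m := by
        refine Finset.sum_congr rfl fun k _ => ?_
        exact D.gamma_recode Ψ (m, k)
    _ = (∑ k : Fin N, Ψ (m D.u) k * Ψ (m D.u') k) * gammaPoly D.Fmod Ψ m := by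
        rw [Finset.sum_mul]
    _ = gammaPoly D.Fmod Ψ m := by rw [hone, one_mul]

lemma gamma_key {r₀ : Fin F.n} (hr₀ : F.isRoot r₀) (Ψ : Matrix (Fin N) (Fin N) ℝ)
    (hΨ : ∀ j : Fin N, (Ψ * Ψᵀ) j j = 1) :
    GammaSum F b Ψ
      + ∑ t ∈ (Finset.univ.image b).erase (b D.v), GammaSum F (btf b D.v t) Ψ
      = GammaSum D.Fmod (btf b D.v (b r₀)) Ψ := by
  classical
  set T : Finset (Fin F.n) := Finset.univ.image b with hT
  set C₀ : Finset (Fin F.n → Fin N) :=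
    Finset.univ.filter (fun m => Consistent (btf b D.v (b r₀)) m) with hC₀
  have hTv : b D.v ∈ T := Finset.mem_image_of_mem b (Finset.mem_univ D.v)
  have main : ∑ t ∈ T, GammaSum F (btf b D.v t) Ψ
      = GammaSum D.Fmod (btf b D.v (b r₀)) Ψ := by
    have step1 : ∀ t ∈ T,
        GammaSum F (btf b D.v t) Ψ =
        ∑ p ∈ (C₀ ×ˢ (Finset.univ : Finset (Fin N))).filter
            (fun p => Consistent (btf b D.v t) (D.recode p)), gammaPoly F Ψ (D.recode p) := by
      intro t _
      unfold GammaSum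
      refine (Finset.sum_nbij' (i := D.recode) (j := D.decode r₀) ?_ ?_ ?_ ?_ ?_).symm
      · intro p hp
        exact Finset.mem_filter.mpr ⟨Finset.mem_univ _, (Finset.mem_filter.mp hp).2⟩
      · intro ℓ hℓ
        have hcons : Consistent (btf b D.v t) ℓ := (Finset.mem_filter.mp hℓ).2
        refine Finset.mem_filter.mpr ⟨?_, ?_⟩
        · refine Finset.mem_product.mpr ⟨?_, Finset.mem_univ _⟩
          exact Finset.mem_filter.mpr ⟨Finset.mem_univ _, D.cons_decode hr₀ hcons⟩
        · rw [D.recode_decode hcons]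
          exact hcons
      · intro p hp
        have hp1 := Finset.mem_filter.mp hp |>.1
        have hm : Consistent (btf b D.v (b r₀)) p.1 :=
          (Finset.mem_filter.mp (Finset.mem_product.mp hp1).1).2
        exact D.decode_recode hr₀ hm
      · intro ℓ hℓ
        exact D.recode_decode (Finset.mem_filter.mp hℓ).2
      · intro p _
        rfl
    rw [Finset.sum_congr rfl step1]
    have step2 : ∀ t ∈ T,
        ∑ p ∈ (C₀ ×ˢ (Finset.univ : Finset (Fin N))).filter
            (fun p => Consistent (btf b D.v t) (D.recode p)), gammaPoly F Ψ (D.recode p)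
        = ∑ p ∈ C₀ ×ˢ (Finset.univ : Finset (Fin N)),
            if Consistent (btf b D.v t) (D.recode p) then gammaPoly F Ψ (D.recode p)
            else 0 := by
      intro t _
      rw [Finset.sum_filter]
    rw [Finset.sum_congr rfl step2, Finset.sum_comm]
    have step3 : ∀ p ∈ C₀ ×ˢ (Finset.univ : Finset (Fin N)),
        (∑ t ∈ T, if Consistent (btf b D.v t) (D.recode p)
          then gammaPoly F Ψ (D.recode p) else 0) = gammaPoly F Ψ (D.recode p) := by
      intro p hp
      have hm : Consistent (btf b D.v (b r₀)) p.1 :=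
        (Finset.mem_filter.mp (Finset.mem_product.mp hp).1).2
      obtain ⟨t₁, ht₁T, ht₁⟩ := D.class_exists hr₀ hm
      rw [Finset.sum_eq_single_of_mem t₁ ht₁T]
      · rw [if_pos ht₁]
      · intro t2 ht2 hne
        rw [if_neg]
        intro hcons
        exact D.class_unique ht2 ht₁T hne hcons ht₁
    rw [Finset.sum_congr rfl step3, Finset.sum_product]
    have step4 : ∀ m ∈ C₀,
        (∑ k : Fin N, gammaPoly F Ψ (D.recode (m, k))) = gammaPoly D.Fmod Ψ m := by
      intro m hm
      exact D.sum_recode Ψ hΨ m (Finset.mem_filter.mp hm).2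
    rw [Finset.sum_congr rfl step4]
    rfl
  rw [← main, ← Finset.insert_erase hTv, Finset.sum_insert (Finset.notMem_erase _ _),
    btf_self, Finset.erase_insert (Finset.notMem_erase _ _)]

end PairData
end GammaAux
section StructAux
attribute [local instance] Classical.propDecidable

/-- Invariant class for the induction: simple configuration properties except the
paired-leaf property, plus: no sibling pair of `p`-weight-one vertices forms a
complete block of size two. -/
structure PreSimple (F : DecForest) (b : Fin F.n → Fin F.n) : Prop where
  root_prop : ∀ u v, F.isRoot u → F.isRoot v → b u = b v
  singleton_leaf : ∀ v, F.isLeaf v → blockCard b v = 1 → 4 ≤ F.pw v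
  forbidden_weights : ∀ v, ¬F.isRoot v → blockCard b v = 1 →
    ¬(F.pw v = 1 ∧ F.qw v = 1) ∧ ¬(F.pw v = 2 ∧ F.qw v = 0)
  parity_prop : ParityProp F b
  sibling_pair : ∀ w w', F.sibling w w' → F.pw w = 1 → F.pw w' = 1 → b w = b w' →
    ∃ x, b x = b w ∧ x ≠ w ∧ x ≠ w'

lemma fiber_singleton {F : DecForest} {b : Fin F.n → Fin F.n} {x : Fin F.n}
    (h : blockCard b x = 1) :
    Finset.univ.filter (fun y => b y = b x) = {x} := by
  obtain ⟨a, ha⟩ := Finset.card_eq_one.mp h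
  have hx : x ∈ Finset.univ.filter (fun y => b y = b x) := by
    simp
  rw [ha] at hx ⊢
  rw [Finset.mem_singleton.mp hx]

lemma relevant_preSimple {F : DecForest} {b : Fin F.n → Fin F.n}
    (h : RelevantConfig F b) : PreSimple F b where
  root_prop := h.root_rule
  singleton_leaf := by
    intro v hv hbc
    have hnr : ¬ F.isRoot v := hv.1
    have hq : F.qw v = 0 := by
      by_contra hq
      exact h.leaf_rule v hv (by omega) hbc
    have hp2 : F.pw v ≠ 2 := fun hp2 => (h.forbidden_weights v hnr).2 ⟨hp2, hq⟩
    have hp1 : 1 ≤ F.pw v := F.pw_pos v hv.1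
    have heven : Even (F.pw v) := by
      have hpar := h.parity_rule v
      rw [fiber_singleton hbc, Finset.sum_singleton] at hpar
      unfold vertexContrib at hpar
      rw [if_neg hv.1, if_pos hv.2] at hpar
      exact hpar
    obtain ⟨r, hr⟩ := heven
    omega
  forbidden_weights := fun v hv _ => h.forbidden_weights v hv
  parity_prop := h.parity_rule
  sibling_pair := by
    intro w w' hs hp hp' hbb
    exact absurd hbb (h.sibling_rule w w' hs)

namespace PairData

variable {F : DecForest} {b : Fin F.n → Fin F.n} (D : PairData F b)

lemma btf_u_eq_u' (t : Fin F.n) : btf b D.v t D.u = btf b D.v t D.u' := by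
  rw [btf_neg _ _ D.bu_ne, btf_neg _ _ D.bu'_ne]
  exact D.hbu

lemma fiber_btf_ne {t x : Fin F.n} (hx1 : ¬ b x = b D.v) (hx2 : b x ≠ t) :
    Finset.univ.filter (fun y => btf b D.v t y = btf b D.v t x)
      = Finset.univ.filter (fun y => b y = b x) := by
  ext y
  simp only [Finset.mem_filter, Finset.mem_univ, true_and]
  rw [btf_neg _ _ hx1]
  by_cases hy : b y = b D.v
  · rw [btf_pos _ _ hy]
    constructor
    · intro hh; exact absurd hh.symm hx2
    · intro hh; exact absurd (hh.symm.trans hy) hx1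
  · rw [btf_neg _ _ hy]

lemma fiber_btf_t {t : Fin F.n} (htv : t ≠ b D.v) :
    Finset.univ.filter (fun y => btf b D.v t y = t)
      = insert D.v (insert D.v' (Finset.univ.filter (fun y => b y = t))) := by
  ext y
  simp only [Finset.mem_filter, Finset.mem_univ, true_and, Finset.mem_insert]
  constructor
  · intro hh
    by_cases hy : b y = b D.v
    · rcases D.hexact y hy with rfl | rfl
      · exact Or.inl rfl
      · exact Or.inr (Or.inl rfl)
    · rw [btf_neg _ _ hy] at hh
      exact Or.inr (Or.inr hh)
  · rintro (rfl | rfl | hh)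
    · exact btf_pos _ _ rfl
    · exact btf_pos _ _ D.hbb.symm
    · have hy : ¬ b y = b D.v := fun hc => htv (hc.symm.trans hh).symm
      rw [btf_neg _ _ hy]
      exact hh
  
lemma btf_eq_t_iff {t x : Fin F.n} (htv : t ≠ b D.v) :
    btf b D.v t x = t ↔ (b x = b D.v ∨ b x = t) := by
  by_cases hx : b x = b D.v
  · rw [btf_pos _ _ hx]; simp [hx]
  · rw [btf_neg _ _ hx]; simp [hx]

lemma blockCard_btf {t x : Fin F.n} (htv : t ≠ b D.v)
    (h : blockCard (btf b D.v t) x = 1) :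
    ¬ b x = b D.v ∧ b x ≠ t ∧ blockCard b x = 1 ∧ x ≠ D.u ∧ x ≠ D.u' := by
  have hfib := fiber_singleton h
  have hnt : ¬ btf b D.v t x = t := by
    intro hc
    have hv1 : D.v ∈ Finset.univ.filter (fun y => btf b D.v t y = btf b D.v t x) := by
      simp only [Finset.mem_filter, Finset.mem_univ, true_and]
      rw [hc]; exact btf_pos _ _ rfl
    have hv2 : D.v' ∈ Finset.univ.filter (fun y => btf b D.v t y = btf b D.v t x) := by
      simp only [Finset.mem_filter, Finset.mem_univ, true_and]
      rw [hc]; exact btf_pos _ _ D.hbb.symm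
    rw [hfib, Finset.mem_singleton] at hv1 hv2
    exact D.hvv (hv1.trans hv2.symm)
  have hx1 : ¬ b x = b D.v := fun hc => hnt (btf_pos _ _ hc)
  have hx2 : b x ≠ t := fun hc => hnt (by rw [btf_neg _ _ hx1]; exact hc)
  have hxu : x ≠ D.u := by
    rintro rfl
    have hv2 : D.u' ∈ Finset.univ.filter (fun y => btf b D.v t y = btf b D.v t D.u) := by
      simp only [Finset.mem_filter, Finset.mem_univ, true_and]
      exact (D.btf_u_eq_u' t).symm
    rw [hfib, Finset.mem_singleton] at hv2
    exact D.huu hv2.symm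
  have hxu' : x ≠ D.u' := by
    rintro rfl
    have hv2 : D.u ∈ Finset.univ.filter (fun y => btf b D.v t y = btf b D.v t D.u') := by
      simp only [Finset.mem_filter, Finset.mem_univ, true_and]
      exact D.btf_u_eq_u' t
    rw [hfib, Finset.mem_singleton] at hv2
    exact D.huu hv2
  refine ⟨hx1, hx2, ?_, hxu, hxu'⟩
  unfold blockCard
  rw [← D.fiber_btf_ne hx1 hx2]
  exact h

lemma contrib_v : vertexContrib F D.v = 1 := by
  unfold vertexContrib
  rw [if_neg (by rw [D.hpar]; simp), if_pos D.hcv, D.hpv]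

lemma contrib_v' : vertexContrib F D.v' = 1 := by
  unfold vertexContrib
  rw [if_neg (by rw [D.hpar']; simp), if_pos D.hcv', D.hpv']

lemma v_not_mem_fiber_t {t : Fin F.n} (htv : t ≠ b D.v) :
    D.v ∉ Finset.univ.filter (fun y => b y = t) := by
  simp only [Finset.mem_filter, Finset.mem_univ, true_and]
  exact fun hc => htv hc.symm

lemma v'_not_mem_fiber_t {t : Fin F.n} (htv : t ≠ b D.v) :
    D.v' ∉ Finset.univ.filter (fun y => b y = t) := by
  simp only [Finset.mem_filter, Finset.mem_univ, true_and]
  rw [D.hbb.symm]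
  exact fun hc => htv hc.symm

/-- Parity of the merged configuration `(F, b_t)`. -/
lemma parity_btf {t : Fin F.n} (htv : t ≠ b D.v) (hz : ∃ z, b z = t)
    (hP : ParityProp F b) : ParityProp F (btf b D.v t) := by
  intro x
  by_cases hxt : btf b D.v t x = t
  · have hrw : (Finset.univ.filter fun y => btf b D.v t y = btf b D.v t x)
        = insert D.v (insert D.v' (Finset.univ.filter (fun y => b y = t))) := by
      rw [hxt]
      exact D.fiber_btf_t htv
    rw [hrw]
    rw [Finset.sum_insert (by
      simp only [Finset.mem_insert]
      push_neg
      exact ⟨D.hvv, D.v_not_mem_fiber_t htv⟩),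
      Finset.sum_insert (D.v'_not_mem_fiber_t htv), D.contrib_v, D.contrib_v']
    obtain ⟨z, hzt⟩ := hz
    have hpz := hP z
    rw [hzt] at hpz
    obtain ⟨r, hr⟩ := hpz
    exact ⟨r + 1, by omega⟩
  · have hx1 : ¬ b x = b D.v := fun hc => hxt (btf_pos _ _ hc)
    have hx2 : b x ≠ t := fun hc => hxt (by rw [btf_neg _ _ hx1]; exact hc)
    rw [D.fiber_btf_ne hx1 hx2]
    exact hP x

/-- Preservation of the invariant by merging the pair block into another block. -/
lemma preSimple_btf (hP : PreSimple F b) {t : Fin F.n}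
    (ht : t ∈ (Finset.univ.image b).erase (b D.v)) :
    PreSimple F (btf b D.v t) := by
  obtain ⟨htv, htim⟩ := Finset.mem_erase.mp ht
  obtain ⟨z, -, hzt⟩ := Finset.mem_image.mp htim
  constructor
  · intro x y hx hy
    rw [btf_neg _ _ (D.broot_ne hx), btf_neg _ _ (D.broot_ne hy)]
    exact hP.root_prop x y hx hy
  · intro x hx hbc
    obtain ⟨-, -, hbc', -, -⟩ := D.blockCard_btf htv hbc
    exact hP.singleton_leaf x hx hbc'
  · intro x hx hbc
    obtain ⟨-, -, hbc', -, -⟩ := D.blockCard_btf htv hbc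
    exact hP.forbidden_weights x hx hbc'
  · exact D.parity_btf htv ⟨z, hzt⟩ hP.parity_prop
  · intro w w' hs hp hp' hbb
    by_cases hwt : btf b D.v t w = t
    · -- block contains v, v', z : at least one differs from w, w'
      by_cases h1 : D.v ≠ w ∧ D.v ≠ w'
      · exact ⟨D.v, by rw [hwt]; exact btf_pos _ _ rfl, h1.1, h1.2⟩
      · by_cases h2 : D.v' ≠ w ∧ D.v' ≠ w'
        · exact ⟨D.v', by rw [hwt]; exact btf_pos _ _ D.hbb.symm, h2.1, h2.2⟩
        · -- then {w, w'} = {v, v'} and z works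
          push_neg at h1 h2
          have hzv : z ≠ D.v ∧ z ≠ D.v' := by
            constructor <;> rintro rfl
            · exact htv hzt.symm
            · exact htv (D.hbb.trans hzt).symm
          refine ⟨z, ?_, ?_, ?_⟩
          · rw [hwt, btf_neg _ _ (D.bx_ne hzv.1 hzv.2)]
            exact hzt
          · -- z ≠ w
            intro hzw
            apply D.hvv
            have h1' : D.v = w' := h1 (fun hv_w => hzv.1 (hzw.trans hv_w.symm))
            have h2' : D.v' = w' := h2 (fun hv'_w => hzv.2 (hzw.trans hv'_w.symm))
            exact h1'.trans h2'.symm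
          · intro hzw'
            apply D.hvv
            have h1' : D.v = w := by
              rcases Classical.em (D.v = w) with hvw | hvw
              · exact hvw
              · exact absurd (h1 hvw) (fun hc => hzv.1 (hzw'.trans hc.symm))
            have h2' : D.v' = w := by
              rcases Classical.em (D.v' = w) with hvw | hvw
              · exact hvw
              · exact absurd (h2 hvw) (fun hc => hzv.2 (hzw'.trans hc.symm))
            exact h1'.trans h2'.symm
    · have hw1 : ¬ b w = b D.v := fun hc => hwt (btf_pos _ _ hc)
      have hw2 : b w ≠ t := fun hc => hwt (by rw [btf_neg _ _ hw1]; exact hc)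
      have hw'1 : ¬ b w' = b D.v := by
        intro hc
        rw [btf_neg _ _ hw1, btf_pos _ _ hc] at hbb
        exact hw2 hbb
      have hbb' : b w = b w' := by
        rw [btf_neg _ _ hw1, btf_neg _ _ hw'1] at hbb
        exact hbb
      obtain ⟨x, hx1, hx2, hx3⟩ := hP.sibling_pair w w' hs hp hp' hbb'
      refine ⟨x, ?_, hx2, hx3⟩
      have hxval : ¬ b x = b D.v := fun hc => hw1 (hx1 ▸ hc) -- b x = b w ; b x = b v
      rw [btf_neg _ _ hxval, btf_neg _ _ hw1]
      exact hx1

end PairData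
end StructAux
section FmodAux
attribute [local instance] Classical.propDecidable

private lemma even_iff_zmod2 (n : ℕ) : Even n ↔ (n : ZMod 2) = 0 := by
  rw [ZMod.natCast_eq_zero_iff, even_iff_two_dvd]

namespace PairData

variable {F : DecForest} {b : Fin F.n → Fin F.n} (D : PairData F b)

lemma Fmod_children_eq (x : Fin F.n) :
    D.Fmod.children x = ((F.children x).erase D.v).erase D.v' := by
  show Finset.univ.filter
      (fun y : Fin F.n => (if y = D.v ∨ y = D.v' then none else F.parent y) = some x) = _
  ext y
  simp only [Finset.mem_filter, Finset.mem_univ, true_and, Finset.mem_erase, mem_children]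
  constructor
  · intro h
    by_cases hy : y = D.v ∨ y = D.v'
    · simp [hy] at h
    · push_neg at hy
      rw [if_neg (by tauto)] at h
      exact ⟨hy.2, hy.1, h⟩
  · rintro ⟨h1, h2, h3⟩
    rw [if_neg (by tauto)]
    exact h3

lemma Fmod_children_of_ne {x : Fin F.n} (hxu : x ≠ D.u) (hxu' : x ≠ D.u') :
    D.Fmod.children x = F.children x := by
  have h1 : D.v' ∉ (F.children x).erase D.v := by
    intro hmem
    have := mem_children.mp (Finset.mem_erase.mp hmem).2
    exact hxu' (Option.some.inj (D.hpar'.symm.trans this)).symm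
  have h2 : D.v ∉ F.children x := by
    intro hmem
    exact hxu (Option.some.inj (D.hpar.symm.trans (mem_children.mp hmem))).symm
  rw [D.Fmod_children_eq, Finset.erase_eq_of_notMem h1, Finset.erase_eq_of_notMem h2]

lemma Fmod_children_u : D.Fmod.children D.u = (F.children D.u).erase D.v := by
  rw [D.Fmod_children_eq]
  apply Finset.erase_eq_of_notMem
  intro hmem
  have := mem_children.mp (Finset.mem_erase.mp hmem).2
  exact D.huu (Option.some.inj (D.hpar'.symm.trans this)).symm

lemma Fmod_children_u' : D.Fmod.children D.u' = (F.children D.u').erase D.v' := by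
  rw [D.Fmod_children_eq]
  congr 1
  apply Finset.erase_eq_of_notMem
  intro hmem
  exact D.huu (Option.some.inj (D.hpar.symm.trans (mem_children.mp hmem)))

lemma Fmod_qw_of_ne {x : Fin F.n} (hxu : x ≠ D.u) (hxu' : x ≠ D.u') :
    D.Fmod.qw x = F.qw x := by
  show F.qw x - (if x = D.u then 1 else 0) - (if x = D.u' then 1 else 0) = F.qw x
  rw [if_neg hxu, if_neg hxu']
  omega

lemma Fmod_qw_u : D.Fmod.qw D.u + 1 = F.qw D.u := by
  show F.qw D.u - (if D.u = D.u then 1 else 0) - (if D.u = D.u' then 1 else 0) + 1 = _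
  rw [if_pos rfl, if_neg D.huu]
  have := D.qw_u_pos
  omega

lemma Fmod_qw_u' : D.Fmod.qw D.u' + 1 = F.qw D.u' := by
  show F.qw D.u' - (if D.u' = D.u then 1 else 0) - (if D.u' = D.u' then 1 else 0) + 1 = _
  rw [if_pos rfl, if_neg (Ne.symm D.huu)]
  have := D.qw_u'_pos
  omega

lemma Fmod_parent_of_ne {x : Fin F.n} (hx : x ≠ D.v) (hx' : x ≠ D.v') :
    D.Fmod.parent x = F.parent x := by
  rw [D.Fmod_parent, if_neg (by tauto)]

lemma Fmod_isRoot_iff (x : Fin F.n) :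
    D.Fmod.isRoot x ↔ x = D.v ∨ x = D.v' ∨ F.isRoot x := by
  unfold DecForest.isRoot
  rw [D.Fmod_parent]
  by_cases hx : x = D.v ∨ x = D.v'
  · simp [hx]
    tauto
  · rw [if_neg hx]
    push_neg at hx
    constructor
    · intro h; exact Or.inr (Or.inr h)
    · rintro (rfl | rfl | h)
      · exact absurd rfl hx.1
      · exact absurd rfl hx.2
      · exact h

lemma Fmod_childCount_v : D.Fmod.childCount D.v = 0 := by
  unfold DecForest.childCount
  rw [D.Fmod_children_of_ne (Ne.symm D.u_ne_v) (Ne.symm D.u'_ne_v), D.children_v]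
  rfl

lemma Fmod_childCount_v' : D.Fmod.childCount D.v' = 0 := by
  unfold DecForest.childCount
  rw [D.Fmod_children_of_ne (Ne.symm D.u_ne_v') (Ne.symm D.u'_ne_v'), D.children_v']
  rfl

lemma Fmod_childCount_u : D.Fmod.childCount D.u + 1 = F.childCount D.u := by
  unfold DecForest.childCount
  rw [D.Fmod_children_u, Finset.card_erase_of_mem D.v_mem]
  have : 1 ≤ (F.children D.u).card := Finset.card_pos.mpr ⟨D.v, D.v_mem⟩
  omega

lemma Fmod_childCount_u' : D.Fmod.childCount D.u' + 1 = F.childCount D.u' := by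
  unfold DecForest.childCount
  rw [D.Fmod_children_u', Finset.card_erase_of_mem D.v'_mem]
  have : 1 ≤ (F.children D.u').card := Finset.card_pos.mpr ⟨D.v', D.v'_mem⟩
  omega

lemma qw_u_one_of_childless (h : D.Fmod.childCount D.u = 0) : F.qw D.u = 1 := by
  apply D.qw_u_eq_one
  unfold DecForest.childCount at h
  rw [D.Fmod_children_u] at h
  exact Finset.card_eq_zero.mp h

lemma qw_u'_one_of_childless (h : D.Fmod.childCount D.u' = 0) : F.qw D.u' = 1 := by
  apply D.qw_u'_eq_one
  unfold DecForest.childCount at h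
  rw [D.Fmod_children_u'] at h
  exact Finset.card_eq_zero.mp h

lemma contrib_mod_u : vertexContrib F D.u = vertexContrib D.Fmod D.u + 1 := by
  have hcc := D.Fmod_childCount_u
  have hqw := D.Fmod_qw_u
  have hpw : D.Fmod.pw D.u = F.pw D.u := rfl
  unfold vertexContrib
  cases hpu : F.parent D.u with
  | none =>
    rw [D.Fmod_parent_of_ne D.u_ne_v D.u_ne_v', hpu]
    rw [if_pos rfl, if_pos rfl, if_neg (by omega)]
    by_cases hc : D.Fmod.childCount D.u = 0
    · rw [if_pos hc]
      have := D.qw_u_one_of_childless hc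
      omega
    · rw [if_neg hc]
      omega
  | some w =>
    rw [D.Fmod_parent_of_ne D.u_ne_v D.u_ne_v', hpu]
    rw [if_neg (Option.some_ne_none w), if_neg (Option.some_ne_none w), if_neg (by omega)]
    by_cases hc : D.Fmod.childCount D.u = 0
    · rw [if_pos hc, hpw]
      have := D.qw_u_one_of_childless hc
      omega
    · rw [if_neg hc, hpw]
      omega

lemma contrib_mod_u' : vertexContrib F D.u' = vertexContrib D.Fmod D.u' + 1 := by
  have hcc := D.Fmod_childCount_u'
  have hqw := D.Fmod_qw_u'
  have hpw : D.Fmod.pw D.u' = F.pw D.u' := rfl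
  unfold vertexContrib
  cases hpu : F.parent D.u' with
  | none =>
    rw [D.Fmod_parent_of_ne D.u'_ne_v D.u'_ne_v', hpu]
    rw [if_pos rfl, if_pos rfl, if_neg (by omega)]
    by_cases hc : D.Fmod.childCount D.u' = 0
    · rw [if_pos hc]
      have := D.qw_u'_one_of_childless hc
      omega
    · rw [if_neg hc]
      omega
  | some w =>
    rw [D.Fmod_parent_of_ne D.u'_ne_v D.u'_ne_v', hpu]
    rw [if_neg (Option.some_ne_none w), if_neg (Option.some_ne_none w), if_neg (by omega)]
    by_cases hc : D.Fmod.childCount D.u' = 0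
    · rw [if_pos hc, hpw]
      have := D.qw_u'_one_of_childless hc
      omega
    · rw [if_neg hc, hpw]
      omega

lemma contrib_mod_v : vertexContrib D.Fmod D.v = 0 := by
  unfold vertexContrib
  rw [if_pos, if_pos D.Fmod_childCount_v]
  show (if D.v = D.v ∨ D.v = D.v' then none else F.parent D.v) = none
  rw [if_pos (Or.inl rfl)]

lemma contrib_mod_v' : vertexContrib D.Fmod D.v' = 0 := by
  unfold vertexContrib
  rw [if_pos, if_pos D.Fmod_childCount_v']
  show (if D.v' = D.v ∨ D.v' = D.v' then none else F.parent D.v') = none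
  rw [if_pos (Or.inr rfl)]

lemma contrib_mod_other {y : Fin F.n} (h1 : y ≠ D.v) (h2 : y ≠ D.v') (h3 : y ≠ D.u)
    (h4 : y ≠ D.u') : vertexContrib D.Fmod y = vertexContrib F y := by
  unfold vertexContrib
  rw [D.Fmod_parent_of_ne h1 h2, D.Fmod_qw_of_ne h3 h4]
  have hcc : D.Fmod.childCount y = F.childCount y := by
    unfold DecForest.childCount
    rw [D.Fmod_children_of_ne h3 h4]
  rw [hcc]

lemma contrib_mod_zmod (y : Fin F.n) :
    (vertexContrib D.Fmod y : ZMod 2) = (vertexContrib F y : ZMod 2)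
      + (if y = D.u then 1 else 0) + (if y = D.u' then 1 else 0)
      + (if y = D.v then 1 else 0) + (if y = D.v' then 1 else 0) := by
  have h2z : (1 + 1 : ZMod 2) = 0 := by decide
  by_cases h1 : y = D.v
  · subst h1
    rw [D.contrib_mod_v, D.contrib_v, if_neg (Ne.symm D.u_ne_v), if_neg (Ne.symm D.u'_ne_v),
      if_pos rfl, if_neg D.hvv]
    show ((0 : ℕ) : ZMod 2) = ((1 : ℕ) : ZMod 2) + 0 + 0 + 1 + 0
    simp only [Nat.cast_zero, Nat.cast_one, add_zero]
    exact h2z.symm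
  · by_cases h2 : y = D.v'
    · subst h2
      rw [D.contrib_mod_v', D.contrib_v', if_neg (Ne.symm D.u_ne_v'),
        if_neg (Ne.symm D.u'_ne_v'), if_neg (Ne.symm D.hvv), if_pos rfl]
      show ((0 : ℕ) : ZMod 2) = ((1 : ℕ) : ZMod 2) + 0 + 0 + 0 + 1
      simp only [Nat.cast_zero, Nat.cast_one, add_zero]
      exact h2z.symm
    · by_cases h3 : y = D.u
      · subst h3
        rw [if_pos rfl, if_neg D.huu, if_neg D.u_ne_v, if_neg D.u_ne_v']
        have hcast : ((vertexContrib F D.u : ℕ) : ZMod 2)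
            = ((vertexContrib D.Fmod D.u : ℕ) : ZMod 2) + 1 := by
          rw [D.contrib_mod_u]
          push_cast
          ring
        rw [hcast]
        simp only [add_zero]
        rw [add_assoc, h2z, add_zero]
      · by_cases h4 : y = D.u'
        · subst h4
          rw [if_neg (Ne.symm D.huu), if_pos rfl, if_neg D.u'_ne_v, if_neg D.u'_ne_v']
          have hcast : ((vertexContrib F D.u' : ℕ) : ZMod 2)
              = ((vertexContrib D.Fmod D.u' : ℕ) : ZMod 2) + 1 := by
            rw [D.contrib_mod_u']
            push_cast
            ring
          rw [hcast]
          simp only [add_zero]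
          rw [add_assoc, h2z, add_zero]
        · rw [D.contrib_mod_other h1 h2 h3 h4, if_neg h3, if_neg h4, if_neg h1, if_neg h2]
          simp

end PairData
end FmodAux
section Fmod2Aux
attribute [local instance] Classical.propDecidable

namespace PairData

variable {F : DecForest} {b : Fin F.n → Fin F.n} (D : PairData F b)

lemma parity_Fmod (hP : PreSimple F b) {r₀ : Fin F.n} (hr₀ : F.isRoot r₀) :
    ParityProp D.Fmod (btf b D.v (b r₀)) := by
  have htv : b r₀ ≠ b D.v := D.broot_ne hr₀
  intro x
  set s := Finset.univ.filter
    (fun y : Fin F.n => btf b D.v (b r₀) y = btf b D.v (b r₀) x) with hs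
  show Even (∑ y ∈ s, vertexContrib D.Fmod y)
  have hA : Even (∑ y ∈ s, vertexContrib F y) :=
    D.parity_btf htv ⟨r₀, rfl⟩ hP.parity_prop x
  rw [even_iff_zmod2, Nat.cast_sum]
  have hBC : (if D.u ∈ s then (1 : ZMod 2) else 0)
      = (if D.u' ∈ s then (1 : ZMod 2) else 0) := by
    refine if_congr ?_ rfl rfl
    simp only [hs, Finset.mem_filter, Finset.mem_univ, true_and]
    rw [D.btf_u_eq_u']
  have hDE : (if D.v ∈ s then (1 : ZMod 2) else 0)
      = (if D.v' ∈ s then (1 : ZMod 2) else 0) := by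
    refine if_congr ?_ rfl rfl
    simp only [hs, Finset.mem_filter, Finset.mem_univ, true_and]
    rw [btf_pos _ _ rfl, btf_pos _ _ D.hbb.symm]
  have hzz : ∀ a c d : ZMod 2, a + c + c + d + d = a := by decide
  calc (∑ y ∈ s, ((vertexContrib D.Fmod y : ℕ) : ZMod 2))
      = ∑ y ∈ s, (((vertexContrib F y : ℕ) : ZMod 2)
          + (if y = D.u then 1 else 0) + (if y = D.u' then 1 else 0)
          + (if y = D.v then 1 else 0) + (if y = D.v' then 1 else 0)) :=
        Finset.sum_congr rfl (fun y _ => D.contrib_mod_zmod y)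
    _ = (∑ y ∈ s, ((vertexContrib F y : ℕ) : ZMod 2))
          + (∑ y ∈ s, if y = D.u then (1 : ZMod 2) else 0)
          + (∑ y ∈ s, if y = D.u' then (1 : ZMod 2) else 0)
          + (∑ y ∈ s, if y = D.v then (1 : ZMod 2) else 0)
          + (∑ y ∈ s, if y = D.v' then (1 : ZMod 2) else 0) := by
        rw [Finset.sum_add_distrib, Finset.sum_add_distrib, Finset.sum_add_distrib,
          Finset.sum_add_distrib]
    _ = (∑ y ∈ s, ((vertexContrib F y : ℕ) : ZMod 2))
          + (if D.u ∈ s then (1 : ZMod 2) else 0)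
          + (if D.u' ∈ s then (1 : ZMod 2) else 0)
          + (if D.v ∈ s then (1 : ZMod 2) else 0)
          + (if D.v' ∈ s then (1 : ZMod 2) else 0) := by
        rw [Finset.sum_ite_eq' s D.u (fun _ => (1 : ZMod 2)),
          Finset.sum_ite_eq' s D.u' (fun _ => (1 : ZMod 2)),
          Finset.sum_ite_eq' s D.v (fun _ => (1 : ZMod 2)),
          Finset.sum_ite_eq' s D.v' (fun _ => (1 : ZMod 2))]
    _ = ∑ y ∈ s, ((vertexContrib F y : ℕ) : ZMod 2) := by
        rw [← hBC, ← hDE]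
        exact hzz _ _ _
    _ = 0 := by
        rw [← Nat.cast_sum]
        exact (even_iff_zmod2 _).mp hA

lemma Fmod_root_btf (hP : PreSimple F b) {r₀ : Fin F.n} (hr₀ : F.isRoot r₀)
    {x : Fin F.n} (hx : D.Fmod.isRoot x) : btf b D.v (b r₀) x = b r₀ := by
  rcases (D.Fmod_isRoot_iff x).mp hx with rfl | rfl | hroot
  · exact btf_pos _ _ rfl
  · exact btf_pos _ _ D.hbb.symm
  · rw [btf_neg _ _ (D.broot_ne hroot)]
    exact hP.root_prop x r₀ hroot hr₀

lemma preSimple_Fmod (hP : PreSimple F b) {r₀ : Fin F.n} (hr₀ : F.isRoot r₀) :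
    PreSimple D.Fmod (btf b D.v (b r₀)) := by
  have htv : b r₀ ≠ b D.v := D.broot_ne hr₀
  constructor
  · intro x y hx hy
    rw [D.Fmod_root_btf hP hr₀ hx, D.Fmod_root_btf hP hr₀ hy]
  · intro x hx hbc
    obtain ⟨hx1, hx2, hbc', hxu, hxu'⟩ := D.blockCard_btf htv hbc
    have hxv : x ≠ D.v := by
      rintro rfl
      exact hx.1 (by rw [D.Fmod_parent, if_pos (Or.inl rfl)])
    have hxv' : x ≠ D.v' := by
      rintro rfl
      exact hx.1 (by rw [D.Fmod_parent, if_pos (Or.inr rfl)])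
    have hleaf : F.isLeaf x := by
      constructor
      · rw [← D.Fmod_parent_of_ne hxv hxv']
        exact hx.1
      · have := hx.2
        unfold DecForest.childCount at this ⊢
        rw [D.Fmod_children_of_ne hxu hxu'] at this
        exact this
    exact hP.singleton_leaf x hleaf hbc'
  · intro x hnr hbc
    obtain ⟨hx1, hx2, hbc', hxu, hxu'⟩ := D.blockCard_btf htv hbc
    have hxv : x ≠ D.v := by
      rintro rfl
      exact hnr ((D.Fmod_isRoot_iff D.v).mpr (Or.inl rfl))
    have hxv' : x ≠ D.v' := by
      rintro rfl
      exact hnr ((D.Fmod_isRoot_iff D.v').mpr (Or.inr (Or.inl rfl)))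
    have hnr' : ¬ F.isRoot x := fun hroot =>
      hnr ((D.Fmod_isRoot_iff x).mpr (Or.inr (Or.inr hroot)))
    have hqw : D.Fmod.qw x = F.qw x := D.Fmod_qw_of_ne hxu hxu'
    have hpw : D.Fmod.pw x = F.pw x := rfl
    rw [hqw, hpw]
    exact hP.forbidden_weights x hnr' hbc'
  · exact D.parity_Fmod hP hr₀
  · intro w w' hs hp hp' hbb
    obtain ⟨hne, y, hyw, hyw'⟩ := hs
    have hwv : w ≠ D.v ∧ w ≠ D.v' := by
      constructor <;> rintro rfl <;>
        rw [D.Fmod_parent] at hyw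
      · rw [if_pos (Or.inl rfl)] at hyw; cases hyw
      · rw [if_pos (Or.inr rfl)] at hyw; cases hyw
    have hw'v : w' ≠ D.v ∧ w' ≠ D.v' := by
      constructor <;> rintro rfl <;>
        rw [D.Fmod_parent] at hyw'
      · rw [if_pos (Or.inl rfl)] at hyw'; cases hyw'
      · rw [if_pos (Or.inr rfl)] at hyw'; cases hyw'
    have hsF : F.sibling w w' := by
      refine ⟨hne, y, ?_, ?_⟩
      · rw [← D.Fmod_parent_of_ne hwv.1 hwv.2]; exact hyw
      · rw [← D.Fmod_parent_of_ne hw'v.1 hw'v.2]; exact hyw'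
    by_cases hwt : btf b D.v (b r₀) w = b r₀
    · refine ⟨D.v, ?_, Ne.symm hwv.1, Ne.symm hw'v.1⟩
      rw [hwt, btf_pos _ _ rfl]
    · have hw1 : ¬ b w = b D.v := fun hc => hwt (btf_pos _ _ hc)
      have hw2 : b w ≠ b r₀ := fun hc => hwt (by rw [btf_neg _ _ hw1]; exact hc)
      have hw'1 : ¬ b w' = b D.v := by
        intro hc
        rw [btf_neg _ _ hw1, btf_pos _ _ hc] at hbb
        exact hw2 hbb
      have hbb' : b w = b w' := by
        rw [btf_neg _ _ hw1, btf_neg _ _ hw'1] at hbb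
        exact hbb
      obtain ⟨x, hx1, hx2, hx3⟩ := hP.sibling_pair w w' hsF hp hp' hbb'
      have hxval : ¬ b x = b D.v := fun hc => hw1 (hx1 ▸ hc)
      refine ⟨x, ?_, hx2, hx3⟩
      rw [btf_neg _ _ hxval, btf_neg _ _ hw1]
      exact hx1

lemma numBlocks_btf {t : Fin F.n} (ht : t ∈ (Finset.univ.image b).erase (b D.v)) :
    numBlocks (btf b D.v t) + 1 = numBlocks b := by
  obtain ⟨htv, htim⟩ := Finset.mem_erase.mp ht
  have himg : Finset.univ.image (btf b D.v t) = (Finset.univ.image b).erase (b D.v) := by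
    ext y
    simp only [Finset.mem_image, Finset.mem_univ, true_and, Finset.mem_erase]
    constructor
    · rintro ⟨x, rfl⟩
      by_cases hx : b x = b D.v
      · rw [btf_pos _ _ hx]
        obtain ⟨z, -, hz⟩ := Finset.mem_image.mp htim
        exact ⟨htv, z, hz⟩
      · rw [btf_neg _ _ hx]
        exact ⟨hx, x, rfl⟩
    · rintro ⟨hyv, x, rfl⟩
      exact ⟨x, btf_neg _ _ hyv⟩
  unfold numBlocks
  rw [himg, Finset.card_erase_of_mem (Finset.mem_image_of_mem b (Finset.mem_univ D.v))]
  have : 1 ≤ (Finset.univ.image b).card :=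
    Finset.card_pos.mpr ⟨b D.v, Finset.mem_image_of_mem b (Finset.mem_univ D.v)⟩
  omega

lemma Fmod_ntcount (h1 : F.nontrivialRootCount = 1) :
    D.Fmod.nontrivialRootCount = 1 := by
  classical
  set Sold := Finset.univ.filter (fun x : Fin F.n => F.isRoot x ∧ F.childCount x ≠ 0)
    with hSold
  have hnew : D.Fmod.nontrivialRootCount = (Finset.univ.filter
      (fun x : Fin F.n => D.Fmod.isRoot x ∧ D.Fmod.childCount x ≠ 0)).card := rfl
  have hold : F.nontrivialRootCount = Sold.card := rfl
  have hseteq : Finset.univ.filter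
      (fun x : Fin F.n => D.Fmod.isRoot x ∧ D.Fmod.childCount x ≠ 0) = Sold := by
    ext x
    simp only [hSold, Finset.mem_filter, Finset.mem_univ, true_and]
    constructor
    · rintro ⟨hr, hc⟩
      rcases (D.Fmod_isRoot_iff x).mp hr with rfl | rfl | hroot
      · exact absurd D.Fmod_childCount_v hc
      · exact absurd D.Fmod_childCount_v' hc
      · refine ⟨hroot, ?_⟩
        intro hc0
        apply hc
        unfold DecForest.childCount at hc0 ⊢
        rw [D.Fmod_children_eq]
        rw [Finset.card_eq_zero] at hc0 ⊢
        rw [hc0]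
        simp
    · rintro ⟨hroot, hc⟩
      refine ⟨(D.Fmod_isRoot_iff x).mpr (Or.inr (Or.inr hroot)), ?_⟩
      intro hc0
      unfold DecForest.childCount at hc0
      rw [D.Fmod_children_eq, Finset.card_eq_zero] at hc0
      obtain ⟨c, hcmem⟩ := Finset.card_pos.mp (Nat.pos_of_ne_zero hc)
      have hcv : c = D.v ∨ c = D.v' := by
        by_contra hcc
        push_neg at hcc
        have : c ∈ ((F.children x).erase D.v).erase D.v' :=
          Finset.mem_erase.mpr ⟨hcc.2, Finset.mem_erase.mpr ⟨hcc.1, hcmem⟩⟩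
        rw [hc0] at this
        simp at this
      -- helper to produce a second nontrivial root and contradict h1
      have hcard2 : ∀ r : Fin F.n, r ∈ Sold → x ∈ Sold → r ≠ x → False := by
        intro r hrS hxS hrx
        have : 1 < Sold.card := Finset.one_lt_card.mpr ⟨r, hrS, x, hxS, hrx⟩
        rw [hold] at h1
        omega
      have hxS : x ∈ Sold := by
        simp only [hSold, Finset.mem_filter, Finset.mem_univ, true_and]
        exact ⟨hroot, hc⟩
      rcases hcv with rfl | rfl
      · -- c = D.v, so x = D.u and the children of u reduce to {v}
        have hxu : D.u = x := Option.some.inj (D.hpar.symm.trans (mem_children.mp hcmem))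
        subst hxu
        have hchild : F.children D.u = {D.v} := by
          apply Finset.Subset.antisymm
          · intro y hy
            rw [Finset.mem_singleton]
            by_contra hyv
            have hyv' : y ≠ D.v' := by
              rintro rfl
              exact D.huu (Option.some.inj (D.hpar'.symm.trans (mem_children.mp hy))).symm
            have : y ∈ ((F.children D.u).erase D.v).erase D.v' :=
              Finset.mem_erase.mpr ⟨hyv', Finset.mem_erase.mpr ⟨hyv, hy⟩⟩
            rw [hc0] at this
            simp at this
          · intro y hy
            rw [Finset.mem_singleton] at hy
            rw [hy]
            exact D.v_mem
        by_cases hu'r : F.isRoot D.u'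
        · refine hcard2 D.u' ?_ hxS (Ne.symm D.huu)
          simp only [hSold, Finset.mem_filter, Finset.mem_univ, true_and]
          exact ⟨hu'r, Finset.card_ne_zero_of_mem D.v'_mem⟩
        · obtain ⟨r, hrr, hrc, hchain⟩ := exists_nontrivial_root_above F D.u' hu'r
          by_cases hru : r = D.u
          · rw [hru] at hchain
            exact chain_avoid F D.v D.u hchild D.hcv D.u' (Ne.symm D.huu) D.u'_ne_v hchain
          · refine hcard2 r ?_ hxS hru
            simp only [hSold, Finset.mem_filter, Finset.mem_univ, true_and]
            exact ⟨hrr, hrc⟩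
      · -- c = D.v', so x = D.u'
        have hxu : D.u' = x := Option.some.inj (D.hpar'.symm.trans (mem_children.mp hcmem))
        subst hxu
        have hchild : F.children D.u' = {D.v'} := by
          apply Finset.Subset.antisymm
          · intro y hy
            rw [Finset.mem_singleton]
            by_contra hyv'
            have hyv : y ≠ D.v := by
              rintro rfl
              exact D.huu (Option.some.inj (D.hpar.symm.trans (mem_children.mp hy)))
            have : y ∈ ((F.children D.u').erase D.v).erase D.v' :=
              Finset.mem_erase.mpr ⟨hyv', Finset.mem_erase.mpr ⟨hyv, hy⟩⟩
            rw [hc0] at this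
            simp at this
          · intro y hy
            rw [Finset.mem_singleton] at hy
            rw [hy]
            exact D.v'_mem
        by_cases hur : F.isRoot D.u
        · refine hcard2 D.u ?_ hxS D.huu
          simp only [hSold, Finset.mem_filter, Finset.mem_univ, true_and]
          exact ⟨hur, Finset.card_ne_zero_of_mem D.v_mem⟩
        · obtain ⟨r, hrr, hrc, hchain⟩ := exists_nontrivial_root_above F D.u hur
          by_cases hru : r = D.u'
          · rw [hru] at hchain
            exact chain_avoid F D.v' D.u' hchild D.hcv' D.u D.huu D.u_ne_v' hchain
          · refine hcard2 r ?_ hxS hru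
            simp only [hSold, Finset.mem_filter, Finset.mem_univ, true_and]
            exact ⟨hrr, hrc⟩
  rw [hnew, hseteq, ← hold]
  exact h1

end PairData
end Fmod2Aux
section Recursion
attribute [local instance] Classical.propDecidable

/-- A configuration with a sign, used to collect the terms of the decomposition. -/
@[reducible]
def Cfg : Type := Σ G : DecForest, (Fin G.n → Fin G.n) × ℝ

def negCfg (c : Cfg) : Cfg := ⟨c.1, (c.2.1, -c.2.2)⟩

def cSum (N : ℕ) (Ψ : Matrix (Fin N) (Fin N) ℝ) (l : List Cfg) : ℝ :=
  (l.map (fun c => c.2.2 * GammaSum c.1 c.2.1 Ψ)).sum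

lemma cSum_append (N : ℕ) (Ψ : Matrix (Fin N) (Fin N) ℝ) (l1 l2 : List Cfg) :
    cSum N Ψ (l1 ++ l2) = cSum N Ψ l1 + cSum N Ψ l2 := by
  unfold cSum
  rw [List.map_append, List.sum_append]

lemma cSum_neg (N : ℕ) (Ψ : Matrix (Fin N) (Fin N) ℝ) (l : List Cfg) :
    cSum N Ψ (l.map negCfg) = - cSum N Ψ l := by
  unfold cSum
  induction l with
  | nil => simp
  | cons a t ih =>
    rw [List.map_cons, List.map_cons, List.sum_cons, List.map_cons, List.sum_cons, ih]
    show (negCfg a).2.2 * GammaSum (negCfg a).1 (negCfg a).2.1 Ψ + _ = _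
    unfold negCfg
    dsimp only
    ring

lemma simple_of_noPair {F : DecForest} {b : Fin F.n → Fin F.n} (hP : PreSimple F b)
    (hnp : ¬ ∃ v v', RemovablePair F b v v') : SimpleConfig F b := by
  constructor
  · exact hP.root_prop
  · exact hP.singleton_leaf
  · intro v v' hne hlv hlv' hp hp' hbb hex u u' hu hu' hbu
    exact hnp ⟨v, v', hne, hlv, hlv', hp, hp', hbb, hex, by
      intro w w' hw hw'
      rw [Option.some.inj (hu.symm.trans hw)] at hbu
      rw [Option.some.inj (hu'.symm.trans hw')] at hbu
      exact hbu⟩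
  · exact fun v hv hbc => hP.forbidden_weights v hv hbc
  · exact hP.parity_prop

lemma base_case (F : DecForest) (b : Fin F.n → Fin F.n) (hP : PreSimple F b)
    (hnp : ¬ ∃ v v', RemovablePair F b v v') :
    ∃ l : List Cfg,
      (∀ c ∈ l, (c.2.2 = 1 ∨ c.2.2 = -1) ∧ SimpleConfig c.1 c.2.1 ∧
        (F.nontrivialRootCount = 1 → c.1.nontrivialRootCount = 1)) ∧
      ∀ (N : ℕ) (Ψ : Matrix (Fin N) (Fin N) ℝ), (∀ j, (Ψ * Ψᵀ) j j = 1) →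
        GammaSum F b Ψ = cSum N Ψ l := by
  refine ⟨[⟨F, (b, 1)⟩], ?_, ?_⟩
  · intro c hc
    rw [List.mem_singleton] at hc
    subst hc
    exact ⟨Or.inl rfl, simple_of_noPair hP hnp, fun h => h⟩
  · intro N Ψ _
    unfold cSum
    simp

lemma decomp_aux : ∀ (M : ℕ) (F : DecForest) (b : Fin F.n → Fin F.n),
    numBlocks b ≤ M → PreSimple F b →
    ∃ l : List Cfg,
      (∀ c ∈ l, (c.2.2 = 1 ∨ c.2.2 = -1) ∧ SimpleConfig c.1 c.2.1 ∧
        (F.nontrivialRootCount = 1 → c.1.nontrivialRootCount = 1)) ∧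
      ∀ (N : ℕ) (Ψ : Matrix (Fin N) (Fin N) ℝ), (∀ j, (Ψ * Ψᵀ) j j = 1) →
        GammaSum F b Ψ = cSum N Ψ l := by
  intro M
  induction M with
  | zero =>
    intro F b hM hP
    refine base_case F b hP ?_
    rintro ⟨v, v', -⟩
    have : b v ∈ Finset.univ.image b := Finset.mem_image_of_mem b (Finset.mem_univ v)
    have : 1 ≤ numBlocks b := Finset.card_pos.mpr ⟨b v, this⟩
    omega
  | succ M ih =>
    intro F b hM hP
    by_cases hpair : ∃ v v', RemovablePair F b v v'
    · obtain ⟨v, v', hne, hlv, hlv', hp, hp', hbbx, hex, hparb⟩ := hpair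
      cases hu : F.parent v with
      | none => exact absurd hu hlv.1
      | some u =>
      cases hu' : F.parent v' with
      | none => exact absurd hu' hlv'.1
      | some u' =>
      have hbu : b u = b u' := hparb u u' hu hu'
      have huu : u ≠ u' := by
        rintro rfl
        obtain ⟨x, hx1, hx2, hx3⟩ :=
          hP.sibling_pair v v' ⟨hne, u, hu, hu'⟩ hp hp' hbbx
        rcases hex x hx1 with rfl | rfl
        · exact hx2 rfl
        · exact hx3 rfl
      set D : PairData F b :=
        ⟨v, v', u, u', hne, hu, hu', huu, hlv.2, hlv'.2, hp, hp', hbbx, hex, hbu⟩ with hD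
      obtain ⟨r₀, hr₀, -⟩ := exists_root_chain F v
      have htR : b r₀ ∈ (Finset.univ.image b).erase (b D.v) :=
        Finset.mem_erase.mpr ⟨D.broot_ne hr₀, Finset.mem_image_of_mem b (Finset.mem_univ r₀)⟩
      have hM0 : numBlocks (btf b D.v (b r₀)) ≤ M := by
        have := D.numBlocks_btf htR
        omega
      obtain ⟨l₀, hl₀1, hl₀2⟩ :=
        ih D.Fmod (btf b D.v (b r₀)) hM0 (D.preSimple_Fmod hP hr₀)
      set Reps : Finset (Fin F.n) := (Finset.univ.image b).erase (b D.v) with hReps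
      have hrec : ∀ t ∈ Reps, ∃ l : List Cfg,
          (∀ c ∈ l, (c.2.2 = 1 ∨ c.2.2 = -1) ∧ SimpleConfig c.1 c.2.1 ∧
            (F.nontrivialRootCount = 1 → c.1.nontrivialRootCount = 1)) ∧
          ∀ (N : ℕ) (Ψ : Matrix (Fin N) (Fin N) ℝ), (∀ j, (Ψ * Ψᵀ) j j = 1) →
            GammaSum F (btf b D.v t) Ψ = cSum N Ψ l := by
        intro t ht
        have hMt : numBlocks (btf b D.v t) ≤ M := by
          have := D.numBlocks_btf ht
          omega
        exact ih F (btf b D.v t) hMt (D.preSimple_btf hP ht)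
      choose g hg1 hg2 using hrec
      have hlist : ∀ s : Finset (Fin F.n), s ⊆ Reps → ∃ ls : List Cfg,
          (∀ c ∈ ls, (c.2.2 = 1 ∨ c.2.2 = -1) ∧ SimpleConfig c.1 c.2.1 ∧
            (F.nontrivialRootCount = 1 → c.1.nontrivialRootCount = 1)) ∧
          ∀ (N : ℕ) (Ψ : Matrix (Fin N) (Fin N) ℝ), (∀ j, (Ψ * Ψᵀ) j j = 1) →
            ∑ t ∈ s, GammaSum F (btf b D.v t) Ψ = cSum N Ψ ls := by
        intro s
        induction s using Finset.induction_on with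
        | empty =>
          intro _
          refine ⟨[], by simp, ?_⟩
          intro N Ψ _
          simp [cSum]
        | @insert a s ha ihs =>
          intro hsub
          have has : a ∈ Reps := hsub (Finset.mem_insert_self a s)
          obtain ⟨ls, hls1, hls2⟩ := ihs ((Finset.insert_subset_iff.mp hsub).2)
          refine ⟨g a has ++ ls, ?_, ?_⟩
          · intro c hc
            rcases List.mem_append.mp hc with h | h
            · exact hg1 a has c h
            · exact hls1 c h
          · intro N Ψ hΨ
            rw [Finset.sum_insert ha, cSum_append, hg2 a has N Ψ hΨ, hls2 N Ψ hΨ]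
      obtain ⟨ls, hls1, hls2⟩ := hlist Reps (le_refl _)
      refine ⟨l₀ ++ ls.map negCfg, ?_, ?_⟩
      · intro c hc
        rcases List.mem_append.mp hc with h | h
        · obtain ⟨hsgn, hsimp, hcnt⟩ := hl₀1 c h
          exact ⟨hsgn, hsimp, fun h1 => hcnt (D.Fmod_ntcount h1)⟩
        · obtain ⟨c₀, hc₀, rfl⟩ := List.mem_map.mp h
          obtain ⟨hsgn, hsimp, hcnt⟩ := hls1 c₀ hc₀
          refine ⟨?_, hsimp, hcnt⟩
          show -c₀.2.2 = 1 ∨ -c₀.2.2 = -1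
          rcases hsgn with h | h <;> rw [h]
          · exact Or.inr rfl
          · exact Or.inl (by ring)
      · intro N Ψ hΨ
        have hkey := D.gamma_key hr₀ Ψ hΨ
        rw [cSum_append, cSum_neg, ← hl₀2 N Ψ hΨ, ← hls2 N Ψ hΨ]
        linarith
    · exact base_case F b hP hpair
end Recursion
/-- **Proposition (decomposition of relevant configurations into simple configurations).** -/
theorem relevant_config_decomposition
    (F : DecForest) (b : Fin F.n → Fin F.n) (hrel : RelevantConfig F b) :
    ∃ (L : ℕ) (Fs : Fin L → DecForest)
      (bs : ∀ i : Fin L, Fin (Fs i).n → Fin (Fs i).n) (a : Fin L → ℝ),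
      (∀ i, a i = 1 ∨ a i = -1) ∧
      (∀ i, SimpleConfig (Fs i) (bs i)) ∧
      (∀ (N : ℕ) (Ψ : Matrix (Fin N) (Fin N) ℝ),
        (∀ j : Fin N, (Ψ * Ψᵀ) j j = 1) →
          GammaSum F b Ψ = ∑ i : Fin L, a i * GammaSum (Fs i) (bs i) Ψ) ∧
      (F.nontrivialRootCount = 1 → ∀ i, (Fs i).nontrivialRootCount = 1) := by
  obtain ⟨l, hl1, hl2⟩ := decomp_aux (numBlocks b) F b le_rfl (relevant_preSimple hrel)
  refine ⟨l.length, fun i => (l.get i).1, fun i => (l.get i).2.1, fun i => (l.get i).2.2,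
    ?_, ?_, ?_, ?_⟩
  · intro i
    exact (hl1 _ (l.get_mem i)).1
  · intro i
    exact (hl1 _ (l.get_mem i)).2.1
  · intro N Ψ hΨ
    rw [hl2 N Ψ hΨ]
    unfold cSum
    exact (Fin.sum_univ_fun_getElem l (fun c => c.2.2 * GammaSum c.1 c.2.1 Ψ)).symm
  · intro h i
    exact (hl1 _ (l.get_mem i)).2.2 h

end
end

section
/- (Lemma: removal step for a pair of removable edges). Let (F, π) be a semi-simple configuration having at least one removable pair of edges. Then there exist semi-simple configurations (F_0, π_0), (F_1, π_1), …, (F_{|π|−1}, π_{|π|−1}) with |π_i| = |π| − 1 for all i, such that ∑_{ℓ ∈ C(π)} γ(Ψ; F, ℓ) = ∑_{ℓ ∈ C(π_0)} γ(Ψ; F_0, ℓ) − ∑_{i=1}^{|π|−1} ∑_{ℓ ∈ C(π_i)} γ(Ψ; F_i, ℓ) for every matrix Ψ ∈ ℝ^{N×N} with (ΨΨᵀ)_{ii} = 1 for all i ∈ [N]. Furthermore, if (F, π) has exactly one non-trivial root, then each (F_i, π_i) also has exactly one non-trivial root. -/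
open Filter Matrix
open scoped ENNReal NNReal Topology

noncomputable section
attribute [local instance] Classical.propDecidable

end

section RemovalAux

open Finset

lemma DecForest.childCount_eq_zero (F : DecForest) (x : Fin F.n) :
    F.childCount x = 0 ↔ ∀ y, F.parent y ≠ some x := by
  simp [DecForest.childCount, DecForest.children, Finset.card_eq_zero,
    Finset.filter_eq_empty_iff]

lemma DecForest.exists_root_edge (F : DecForest) (w p : Fin F.n) (hw : F.parent w = some p) :
    ∃ ρ c, F.isRoot ρ ∧ F.parent c = some ρ ∧ (F.childCount c ≠ 0 ∨ c = w) := by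
  have H : ∀ k (w p : Fin F.n),
      (Finset.univ.filter fun x => F.height w < F.height x).card ≤ k →
      F.parent w = some p →
      ∃ ρ c, F.isRoot ρ ∧ F.parent c = some ρ ∧ (F.childCount c ≠ 0 ∨ c = w) := by
    intro k
    induction k with
    | zero =>
      intro w p hcard hp
      exfalso
      have hh : F.height w + 1 = F.height p := F.height_parent w p hp
      have hmem : p ∈ Finset.univ.filter fun x => F.height w < F.height x := by
        simp [← hh]
      have := Finset.card_pos.mpr ⟨p, hmem⟩
      omega
    | succ k ih =>
      intro w p hcard hp
      by_cases hr : F.parent p = none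
      · exact ⟨p, w, hr, hp, Or.inr rfl⟩
      · obtain ⟨g, hg⟩ := Option.ne_none_iff_exists'.mp hr
        have hh : F.height w + 1 = F.height p := F.height_parent w p hp
        have hsub : (Finset.univ.filter fun x => F.height p < F.height x) ⊂
            (Finset.univ.filter fun x => F.height w < F.height x) := by
          constructor
          · intro x hx
            simp only [Finset.mem_filter] at hx ⊢
            exact ⟨hx.1, by omega⟩
          · intro hs
            have hmem : p ∈ Finset.univ.filter fun x => F.height w < F.height x := by
              simp [← hh]
            have := hs hmem
            simp at this
        have hm : (Finset.univ.filter fun x => F.height p < F.height x).card ≤ k := by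
          have := Finset.card_lt_card hsub
          omega
        obtain ⟨ρ, c, h1, h2, h3⟩ := ih p g hm hg
        refine ⟨ρ, c, h1, h2, Or.inl ?_⟩
        rcases h3 with h | rfl
        · exact h
        · intro h0
          exact (F.childCount_eq_zero c).mp h0 w hp
  exact H _ w p le_rfl hw

/-- Bundle of facts about a removable pair. -/
structure RemCtx (F : DecForest) (b : Fin F.n → Fin F.n) (v v' u u' r : Fin F.n) : Prop where
  hss : SemiSimpleConfig F b
  hne : v ≠ v'
  hlv : F.isLeaf v
  hlv' : F.isLeaf v'
  hp1 : F.pw v = 1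
  hp1' : F.pw v' = 1
  hbvv : b v = b v'
  hblk : ∀ x, b x = b v → x = v ∨ x = v'
  hpu : F.parent v = some u
  hpu' : F.parent v' = some u'
  hbuu : b u = b u'
  hr : F.isRoot r

namespace RemCtx

variable {F : DecForest} {b : Fin F.n → Fin F.n} {v v' u u' r : Fin F.n}
lemma ccu (ctx : RemCtx F b v v' u u' r) : F.childCount u ≠ 0 := fun h => (F.childCount_eq_zero u).mp h v ctx.hpu
lemma ccu' (ctx : RemCtx F b v v' u u' r) : F.childCount u' ≠ 0 := fun h => (F.childCount_eq_zero u').mp h v' ctx.hpu'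
lemma u_ne_v (ctx : RemCtx F b v v' u u' r) : u ≠ v := fun h => ctx.ccu (h ▸ ctx.hlv.2)
lemma u_ne_v' (ctx : RemCtx F b v v' u u' r) : u ≠ v' := fun h => ctx.ccu (h ▸ ctx.hlv'.2)
lemma u'_ne_v (ctx : RemCtx F b v v' u u' r) : u' ≠ v := fun h => ctx.ccu' (h ▸ ctx.hlv.2)
lemma u'_ne_v' (ctx : RemCtx F b v v' u u' r) : u' ≠ v' := fun h => ctx.ccu' (h ▸ ctx.hlv'.2)

lemma u_ne_u' (ctx : RemCtx F b v v' u u' r) : u ≠ u' := by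
  intro h
  subst h
  exact ctx.hss.sibling_prop v v' ⟨ctx.hne, u, ctx.hpu, ctx.hpu'⟩ ⟨ctx.hbvv, ctx.hblk⟩

lemma bu_ne (ctx : RemCtx F b v v' u u' r) : b u ≠ b v := by
  intro h
  rcases ctx.hblk u h with h' | h'
  · exact ctx.u_ne_v h'
  · exact ctx.u_ne_v' h'

lemma r_ne_v (ctx : RemCtx F b v v' u u' r) : r ≠ v := by
  intro h; have := ctx.hr; rw [h, DecForest.isRoot, ctx.hpu] at this; simp at this

lemma r_ne_v' (ctx : RemCtx F b v v' u u' r) : r ≠ v' := by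
  intro h; have := ctx.hr; rw [h, DecForest.isRoot, ctx.hpu'] at this; simp at this

lemma br_ne (ctx : RemCtx F b v v' u u' r) : b r ≠ b v := by
  intro h
  rcases ctx.hblk r h with h' | h'
  · exact ctx.r_ne_v h'
  · exact ctx.r_ne_v' h'

lemma bu'_ne (ctx : RemCtx F b v v' u u' r) : b u' ≠ b v := ctx.hbuu ▸ ctx.bu_ne

end RemCtx

end RemovalAux
section RemovalAux2

open Finset

namespace RemCtx

variable {F : DecForest} {b : Fin F.n → Fin F.n} {v v' u u' r : Fin F.n}

/-- children of `x` after removing `v, v'`. -/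
lemma parent0_spec (y x : Fin F.n) :
    (if y = v ∨ y = v' then none else F.parent y) = some x ↔
      (F.parent y = some x ∧ y ≠ v ∧ y ≠ v') := by
  by_cases h : y = v ∨ y = v'
  · simp [h]
    try tauto
  · push_neg at h
    simp [h.1, h.2]
    try tauto

lemma children_u (ctx : RemCtx F b v v' u u' r) :
    v ∈ Finset.univ.filter (fun y => F.parent y = some u) ∧
    v' ∉ Finset.univ.filter (fun y => F.parent y = some u) := by
  constructor
  · simp [ctx.hpu]
  · intro hmem
    rw [Finset.mem_filter] at hmem
    rw [ctx.hpu'] at hmem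
    exact ctx.u_ne_u' (Option.some_inj.mp hmem.2).symm

lemma qw_u (ctx : RemCtx F b v v' u u' r) :
    F.qw u = 1 + ∑ y ∈ (Finset.univ.filter (fun y => F.parent y = some u)).erase v, F.pw y := by
  have h1 := F.conservation u ⟨v, ctx.hpu⟩
  have h2 := Finset.add_sum_erase _ F.pw (ctx.children_u).1
  rw [h1, ← h2, ctx.hp1]

lemma qw_u' (ctx : RemCtx F b v v' u u' r) :
    F.qw u' = 1 + ∑ y ∈ (Finset.univ.filter (fun y => F.parent y = some u')).erase v', F.pw y := by
  have h1 := F.conservation u' ⟨v', ctx.hpu'⟩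
  have hv' : v' ∈ Finset.univ.filter (fun y => F.parent y = some u') := by simp [ctx.hpu']
  have h2 := Finset.add_sum_erase _ F.pw hv'
  rw [h1, ← h2, ctx.hp1']

lemma qw_u_pos (ctx : RemCtx F b v v' u u' r) : 1 ≤ F.qw u := by
  rw [ctx.qw_u]; omega

lemma qw_u'_pos (ctx : RemCtx F b v v' u u' r) : 1 ≤ F.qw u' := by
  rw [ctx.qw_u']; omega

/-- The forest obtained by removing the two removable leaves and turning them
into isolated trivial roots. -/
@[reducible] def F0 (ctx : RemCtx F b v v' u u' r) : DecForest where
  n := F.n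
  parent := fun y => if y = v ∨ y = v' then none else F.parent y
  height := F.height
  pw := F.pw
  qw := fun x => if x = u ∨ x = u' then F.qw x - 1 else F.qw x
  height_parent := by
    intro y x h
    rw [parent0_spec] at h
    exact F.height_parent y x h.1
  pw_pos := by
    intro y h
    by_cases hy : y = v ∨ y = v'
    · simp [hy] at h
    · simp [hy] at h
      exact F.pw_pos y h
  height_zero_no_children := by
    intro x hx y h
    rw [parent0_spec] at h
    exact F.height_zero_no_children x hx y h.1
  childless_qw := by
    intro x hch hq
    have hch' : ∀ y, y ≠ v → y ≠ v' → F.parent y ≠ some x := by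
      intro y h1 h2 h3
      exact hch y (by rw [parent0_spec]; exact ⟨h3, h1, h2⟩)
    by_cases hx : x = u ∨ x = u'
    · exfalso
      rcases hx with rfl | rfl
      · -- children of u in F are exactly {v}
        have hq' : F.qw x = 1 := by
          rw [ctx.qw_u]
          have : (Finset.univ.filter (fun y => F.parent y = some x)).erase v = ∅ := by
            rw [Finset.eq_empty_iff_forall_notMem]
            intro y hy
            rw [Finset.mem_erase, Finset.mem_filter] at hy
            by_cases hyv' : y = v'
            · subst hyv'
              exact ctx.u_ne_u' (by have := hy.2.2; rw [ctx.hpu'] at this; exact (Option.some_inj.mp this).symm)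
            · exact hch' y hy.1 hyv' hy.2.2
          rw [this, Finset.sum_empty]
          rfl
        replace hq : 1 ≤ (if x = x ∨ x = u' then F.qw x - 1 else F.qw x) := hq
        rw [if_pos (Or.inl rfl)] at hq
        omega
      · have hq' : F.qw x = 1 := by
          rw [ctx.qw_u']
          have : (Finset.univ.filter (fun y => F.parent y = some x)).erase v' = ∅ := by
            rw [Finset.eq_empty_iff_forall_notMem]
            intro y hy
            rw [Finset.mem_erase, Finset.mem_filter] at hy
            by_cases hyv : y = v
            · subst hyv
              exact ctx.u_ne_u' (by have := hy.2.2; rw [ctx.hpu] at this; exact Option.some_inj.mp this)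
            · exact hch' y hyv hy.1 hy.2.2
          rw [this, Finset.sum_empty]
          rfl
        replace hq : 1 ≤ (if x = u ∨ x = x then F.qw x - 1 else F.qw x) := hq
        rw [if_pos (Or.inr rfl)] at hq
        omega
    · push_neg at hx
      replace hq : 1 ≤ (if x = u ∨ x = u' then F.qw x - 1 else F.qw x) := hq
      rw [if_neg (by tauto : ¬(x = u ∨ x = u'))] at hq
      apply F.childless_qw x _ hq
      intro y hy
      by_cases h1 : y = v
      · subst h1; rw [ctx.hpu] at hy; exact hx.1 (Option.some_inj.mp hy).symm
      by_cases h2 : y = v'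
      · subst h2; rw [ctx.hpu'] at hy; exact hx.2 (Option.some_inj.mp hy).symm
      · exact hch' y h1 h2 hy
  conservation := by
    intro x ⟨y, hy⟩
    rw [parent0_spec] at hy
    have hsets : Finset.univ.filter (fun z => (if z = v ∨ z = v' then none else F.parent z) = some x)
        = ((Finset.univ.filter (fun z => F.parent z = some x)).erase v).erase v' := by
      ext z
      simp only [Finset.mem_filter, Finset.mem_erase, Finset.mem_univ, true_and]
      rw [parent0_spec]
      tauto
    rw [hsets]
    by_cases hx : x = u
    · subst hx
      have hv'e : ((Finset.univ.filter (fun z => F.parent z = some x)).erase v).erase v'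
          = (Finset.univ.filter (fun z => F.parent z = some x)).erase v := by
        apply Finset.erase_eq_of_notMem
        rw [Finset.mem_erase]
        intro h
        exact (ctx.children_u).2 h.2
      rw [hv'e]
      show (if x = x ∨ x = u' then F.qw x - 1 else F.qw x) = _
      rw [if_pos (Or.inl rfl)]
      have := ctx.qw_u
      omega
    by_cases hx' : x = u'
    · subst hx'
      have hve : (Finset.univ.filter (fun z => F.parent z = some x)).erase v
          = Finset.univ.filter (fun z => F.parent z = some x) := by
        apply Finset.erase_eq_of_notMem
        simp only [Finset.mem_filter, Finset.mem_univ, true_and, ctx.hpu]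
        intro h
        exact ctx.u_ne_u' (Option.some_inj.mp h)
      rw [hve]
      show (if x = u ∨ x = x then F.qw x - 1 else F.qw x) = _
      rw [if_pos (Or.inr rfl)]
      have h1 := ctx.qw_u'
      omega
    · have hve : (Finset.univ.filter (fun z => F.parent z = some x)).erase v
          = Finset.univ.filter (fun z => F.parent z = some x) := by
        apply Finset.erase_eq_of_notMem
        simp only [Finset.mem_filter, Finset.mem_univ, true_and, ctx.hpu]
        intro h; exact hx (Option.some_inj.mp h).symm
      have hv'e : (Finset.univ.filter (fun z => F.parent z = some x)).erase v'
          = Finset.univ.filter (fun z => F.parent z = some x) := by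
        apply Finset.erase_eq_of_notMem
        simp only [Finset.mem_filter, Finset.mem_univ, true_and, ctx.hpu']
        intro h; exact hx' (Option.some_inj.mp h).symm
      rw [hve, hv'e]
      show (if x = u ∨ x = u' then F.qw x - 1 else F.qw x) = _
      rw [if_neg (by tauto : ¬(x = u ∨ x = u'))]
      exact F.conservation x ⟨y, hy.1⟩

end RemCtx

end RemovalAux2
section RemovalAux3

open Finset

def mergeMap {n : ℕ} (b : Fin n → Fin n) (v t : Fin n) : Fin n → Fin n :=
  fun x => if b x = b v then t else b x

lemma mergeMap_image {n : ℕ} (b : Fin n → Fin n) (v t : Fin n)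
    (ht : ∃ c, b c = t) (htv : t ≠ b v) :
    Finset.univ.image (mergeMap b v t) = (Finset.univ.image b).erase (b v) := by
  ext s
  simp only [Finset.mem_image, Finset.mem_erase, Finset.mem_univ, true_and]
  constructor
  · rintro ⟨x, rfl⟩
    by_cases h : b x = b v
    · obtain ⟨c, hc⟩ := ht
      have hM : mergeMap b v t x = t := if_pos h
      rw [hM]
      exact ⟨htv, c, hc⟩
    · have hM : mergeMap b v t x = b x := if_neg h
      rw [hM]
      exact ⟨h, x, rfl⟩
  · rintro ⟨hs, x, rfl⟩
    exact ⟨x, if_neg hs⟩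

lemma numBlocks_mergeMap {n : ℕ} (b : Fin n → Fin n) (v t : Fin n)
    (ht : ∃ c, b c = t) (htv : t ≠ b v) :
    numBlocks (mergeMap b v t) = numBlocks b - 1 := by
  unfold numBlocks
  rw [mergeMap_image b v t ht htv]
  rw [Finset.card_erase_of_mem (Finset.mem_image_of_mem b (Finset.mem_univ v))]

namespace RemCtx

variable {F : DecForest} {b : Fin F.n → Fin F.n} {v v' u u' r : Fin F.n}

lemma block_v (ctx : RemCtx F b v v' u u' r) :
    Finset.univ.filter (fun z => b z = b v) = {v, v'} := by
  ext z
  simp only [Finset.mem_filter, Finset.mem_univ, true_and, Finset.mem_insert,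
    Finset.mem_singleton]
  constructor
  · exact ctx.hblk z
  · rintro (rfl | rfl)
    · rfl
    · exact ctx.hbvv.symm

lemma contrib_v (ctx : RemCtx F b v v' u u' r) : vertexContrib F v = 1 := by
  unfold vertexContrib
  rw [if_neg (by rw [ctx.hpu]; simp), if_pos ctx.hlv.2, ctx.hp1]

lemma contrib_v' (ctx : RemCtx F b v v' u u' r) : vertexContrib F v' = 1 := by
  unfold vertexContrib
  rw [if_neg (by rw [ctx.hpu']; simp), if_pos ctx.hlv'.2, ctx.hp1']

/-- Key facts about `M = mergeMap b v t` for `t` a block color other than `b v`. -/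
lemma mergeMap_ne (ctx : RemCtx F b v v' u u' r) {t : Fin F.n} (htv : t ≠ b v)
    {x : Fin F.n} (hx : mergeMap b v t x ≠ t) :
    mergeMap b v t x = b x ∧ b x ≠ b v := by
  by_cases h : b x = b v
  · exact absurd (if_pos h) hx
  · exact ⟨if_neg h, h⟩

lemma mergeMap_block_ne (ctx : RemCtx F b v v' u u' r) {t : Fin F.n} (htv : t ≠ b v)
    {x : Fin F.n} (hx : mergeMap b v t x ≠ t) :
    Finset.univ.filter (fun z => mergeMap b v t z = mergeMap b v t x)
      = Finset.univ.filter (fun z => b z = b x) := by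
  obtain ⟨hMx, hbx⟩ := ctx.mergeMap_ne htv hx
  have hxt : b x ≠ t := fun h => hx (by rw [hMx, h])
  ext z
  simp only [Finset.mem_filter, Finset.mem_univ, true_and]
  simp only [mergeMap]
  rw [if_neg hbx]
  by_cases h : b z = b v
  · rw [if_pos h]
    constructor
    · intro h'; exact absurd h'.symm hxt
    · intro h'; exact absurd (h'.symm.trans h) hbx
  · rw [if_neg h]

lemma mergeMap_block_t (ctx : RemCtx F b v v' u u' r) {t : Fin F.n} (htv : t ≠ b v) :
    Finset.univ.filter (fun z => mergeMap b v t z = t)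
      = {v, v'} ∪ Finset.univ.filter (fun z => b z = t) := by
  ext z
  simp only [Finset.mem_filter, Finset.mem_univ, true_and, Finset.mem_union,
    Finset.mem_insert, Finset.mem_singleton]
  simp only [mergeMap]
  by_cases h : b z = b v
  · rw [if_pos h]
    simp only [eq_self_iff_true, true_iff]
    exact Or.inl (ctx.hblk z h)
  · rw [if_neg h]
    constructor
    · intro h'; exact Or.inr h'
    · rintro ((rfl | rfl) | h')
      · exact absurd rfl h
      · exact absurd ctx.hbvv.symm h
      · exact h'

lemma even_parity_block (ctx : RemCtx F b v v' u u' r) (c : Fin F.n) :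
    Even (∑ z ∈ Finset.univ.filter (fun z => b z = b c), vertexContrib F z) :=
  ctx.hss.parity_prop c

lemma parity_mrg (ctx : RemCtx F b v v' u u' r) {t c : Fin F.n} (hc : b c = t)
    (htv : t ≠ b v) : ParityProp F (mergeMap b v t) := by
  intro x
  by_cases hx : mergeMap b v t x = t
  · rw [show (Finset.univ.filter fun z => mergeMap b v t z = mergeMap b v t x)
        = {v, v'} ∪ Finset.univ.filter (fun z => b z = t) by
      rw [hx]; exact ctx.mergeMap_block_t htv]
    have hdisj : Disjoint ({v, v'} : Finset (Fin F.n))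
        (Finset.univ.filter (fun z => b z = t)) := by
      simp only [Finset.disjoint_left, Finset.mem_insert, Finset.mem_singleton,
        Finset.mem_filter, Finset.mem_univ, true_and]
      rintro z (rfl | rfl) hz
      · exact htv hz.symm
      · exact htv (ctx.hbvv ▸ hz.symm)
    rw [Finset.sum_union hdisj, Finset.sum_pair ctx.hne, ctx.contrib_v, ctx.contrib_v']
    have hE := ctx.even_parity_block c
    rw [hc] at hE
    obtain ⟨k, hk⟩ := hE
    exact ⟨k + 1, by omega⟩
  · rw [ctx.mergeMap_block_ne htv hx]
    exact ctx.even_parity_block x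

lemma not_root_v (ctx : RemCtx F b v v' u u' r) : ¬ F.isRoot v := by
  rw [DecForest.isRoot, ctx.hpu]; simp

lemma not_root_v' (ctx : RemCtx F b v v' u u' r) : ¬ F.isRoot v' := by
  rw [DecForest.isRoot, ctx.hpu']; simp

lemma two_le_card_t (ctx : RemCtx F b v v' u u' r) {t : Fin F.n} (htv : t ≠ b v)
    {x : Fin F.n} (hx : mergeMap b v t x = t) :
    ¬ blockCard (mergeMap b v t) x = 1 := by
  intro h1
  unfold blockCard at h1
  rw [show (Finset.univ.filter fun z => mergeMap b v t z = mergeMap b v t x)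
      = {v, v'} ∪ Finset.univ.filter (fun z => b z = t) by
    rw [hx]; exact ctx.mergeMap_block_t htv] at h1
  have : 2 ≤ ({v, v'} ∪ Finset.univ.filter (fun z => b z = t)).card := by
    calc 2 = ({v, v'} : Finset (Fin F.n)).card := (Finset.card_pair ctx.hne).symm
    _ ≤ _ := Finset.card_le_card Finset.subset_union_left
  omega

lemma blockCard_mrg_ne (ctx : RemCtx F b v v' u u' r) {t : Fin F.n} (htv : t ≠ b v)
    {x : Fin F.n} (hx : mergeMap b v t x ≠ t) :
    blockCard (mergeMap b v t) x = blockCard b x := by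
  unfold blockCard
  rw [ctx.mergeMap_block_ne htv hx]

lemma ss_mrg (ctx : RemCtx F b v v' u u' r) {t c : Fin F.n} (hc : b c = t)
    (htv : t ≠ b v) : SemiSimpleConfig F (mergeMap b v t) := by
  have hcv : c ≠ v := fun h => htv (by rw [← hc, h])
  have hcv' : c ≠ v' := fun h => htv (by rw [← hc, h, ← ctx.hbvv])
  constructor
  · -- root_prop
    intro x y hx hy
    have hbx : b x ≠ b v := fun h => by
      rcases ctx.hblk x h with rfl | rfl
      · exact ctx.not_root_v hx
      · exact ctx.not_root_v' hx
    have hby : b y ≠ b v := fun h => by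
      rcases ctx.hblk y h with rfl | rfl
      · exact ctx.not_root_v hy
      · exact ctx.not_root_v' hy
    show (if b x = b v then t else b x) = (if b y = b v then t else b y)
    rw [if_neg hbx, if_neg hby]
    exact ctx.hss.root_prop x y hx hy
  · -- sibling_prop
    intro x y hsib hM
    by_cases hx : mergeMap b v t x = t
    · have h1 : v = x ∨ v = y := hM.2 v (by rw [hx]; exact if_pos rfl)
      have h2 : v' = x ∨ v' = y := hM.2 v' (by rw [hx]; exact if_pos ctx.hbvv.symm)
      have h3 : c = x ∨ c = y := hM.2 c (by
        rw [hx]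
        show (if b c = b v then t else b c) = t
        rw [if_neg (fun h => htv (hc ▸ h))]
        exact hc)
      rcases h1 with rfl | rfl
      · rcases h2 with h2 | rfl
        · exact ctx.hne h2.symm
        · rcases h3 with h3 | h3
          · exact hcv h3
          · exact hcv' h3
      · rcases h2 with rfl | h2
        · rcases h3 with h3 | h3
          · exact hcv' h3
          · exact hcv h3
        · exact ctx.hne h2.symm
    · obtain ⟨hMx, hbx⟩ := ctx.mergeMap_ne htv hx
      have hMy : mergeMap b v t y = b y ∧ b y ≠ b v :=
        ctx.mergeMap_ne htv (by rw [← hM.1]; exact hx)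
      refine ctx.hss.sibling_prop x y hsib ⟨?_, ?_⟩
      · rw [← hMx, ← hMy.1, hM.1]
      · intro z hz
        refine hM.2 z ?_
        have hbz : b z ≠ b v := fun h => hbx (by rw [← hz, h])
        show (if b z = b v then t else b z) = _
        rw [if_neg hbz, hz, ← hMx]
  · -- singleton_leaf
    intro x hx h1
    by_cases hMx : mergeMap b v t x = t
    · exact absurd h1 (ctx.two_le_card_t htv hMx)
    · exact ctx.hss.singleton_leaf x hx (by rw [← ctx.blockCard_mrg_ne htv hMx]; exact h1)
  · -- forbidden_weights
    intro x hx h1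
    by_cases hMx : mergeMap b v t x = t
    · exact absurd h1 (ctx.two_le_card_t htv hMx)
    · exact ctx.hss.forbidden_weights x hx (by rw [← ctx.blockCard_mrg_ne htv hMx]; exact h1)
  · -- parity
    exact ctx.parity_mrg hc htv

end RemCtx

end RemovalAux3
section RemovalAux4

open Finset

lemma eq_of_blockCard_one {n : ℕ} (b : Fin n → Fin n) (x : Fin n)
    (h : blockCard b x = 1) : ∀ z, b z = b x → z = x := by
  intro z hz
  unfold blockCard at h
  obtain ⟨w, hw⟩ := Finset.card_eq_one.mp h
  have hx : x ∈ Finset.univ.filter (fun y => b y = b x) := by simp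
  have hzz : z ∈ Finset.univ.filter (fun y => b y = b x) := by simp [hz]
  rw [hw, Finset.mem_singleton] at hx hzz
  rw [hzz, hx]

namespace RemCtx

variable {F : DecForest} {b : Fin F.n → Fin F.n} {v v' u u' r : Fin F.n}

lemma F0_children (ctx : RemCtx F b v v' u u' r) (x : Fin F.n) :
    Finset.univ.filter (fun z => (F0 ctx).parent z = some x)
      = ((Finset.univ.filter (fun z => F.parent z = some x)).erase v).erase v' := by
  ext z
  simp only [Finset.mem_filter, Finset.mem_univ, true_and, Finset.mem_erase]
  show (if z = v ∨ z = v' then none else F.parent z) = some x ↔ _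
  by_cases hz : z = v ∨ z = v'
  · rw [if_pos hz]
    constructor
    · intro h; exact absurd h (by simp)
    · intro h
      rcases hz with hz | hz
      · exact absurd hz h.2.1
      · exact absurd hz h.1
  · rw [if_neg hz]
    push_neg at hz
    tauto

lemma F0_childCount_other (ctx : RemCtx F b v v' u u' r) {x : Fin F.n}
    (hxu : x ≠ u) (hxu' : x ≠ u') : (F0 ctx).childCount x = F.childCount x := by
  unfold DecForest.childCount DecForest.children
  rw [ctx.F0_children x]
  rw [Finset.erase_eq_of_notMem, Finset.erase_eq_of_notMem]
  · intro h
    rw [Finset.mem_filter, ctx.hpu] at h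
    exact hxu (Option.some_inj.mp h.2).symm
  · intro h
    rw [Finset.mem_erase, Finset.mem_filter, ctx.hpu'] at h
    exact hxu' (Option.some_inj.mp h.2.2).symm

lemma F0_childCount_u (ctx : RemCtx F b v v' u u' r) :
    (F0 ctx).childCount u = F.childCount u - 1 := by
  unfold DecForest.childCount DecForest.children
  rw [ctx.F0_children u]
  rw [Finset.erase_eq_of_notMem (fun h => (ctx.children_u).2 (Finset.mem_of_mem_erase h))]
  rw [Finset.card_erase_of_mem (ctx.children_u).1]

lemma F0_childCount_u' (ctx : RemCtx F b v v' u u' r) :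
    (F0 ctx).childCount u' = F.childCount u' - 1 := by
  unfold DecForest.childCount DecForest.children
  rw [ctx.F0_children u']
  have hv' : v' ∈ (Finset.univ.filter (fun z => F.parent z = some u')).erase v := by
    rw [Finset.mem_erase]
    exact ⟨(ctx.hne).symm, by simp [ctx.hpu']⟩
  rw [Finset.card_erase_of_mem hv']
  rw [Finset.erase_eq_of_notMem (fun h => by
    rw [Finset.mem_filter, ctx.hpu] at h
    exact ctx.u_ne_u' (Option.some_inj.mp h.2))]

lemma contrib0_v (ctx : RemCtx F b v v' u u' r) : vertexContrib (F0 ctx) v = 0 := by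
  have hpar : (F0 ctx).parent v = none := if_pos (Or.inl rfl)
  have hcc : (F0 ctx).childCount v = 0 := by
    rw [ctx.F0_childCount_other (ctx.u_ne_v).symm (ctx.u'_ne_v).symm]
    exact ctx.hlv.2
  unfold vertexContrib
  rw [if_pos hpar, if_pos hcc]

lemma contrib0_v' (ctx : RemCtx F b v v' u u' r) : vertexContrib (F0 ctx) v' = 0 := by
  have hpar : (F0 ctx).parent v' = none := if_pos (Or.inr rfl)
  have hcc : (F0 ctx).childCount v' = 0 := by
    rw [ctx.F0_childCount_other (ctx.u_ne_v').symm (ctx.u'_ne_v').symm]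
    exact ctx.hlv'.2
  unfold vertexContrib
  rw [if_pos hpar, if_pos hcc]

lemma qw_u_of_cc0 (ctx : RemCtx F b v v' u u' r) (h0 : (F0 ctx).childCount u = 0) :
    F.qw u = 1 := by
  have h1 : F.childCount u - 1 = 0 := by rw [← ctx.F0_childCount_u]; exact h0
  have h2 : (Finset.univ.filter (fun z => F.parent z = some u)).erase v = ∅ := by
    rw [← Finset.card_eq_zero, Finset.card_erase_of_mem (ctx.children_u).1]
    exact h1
  rw [ctx.qw_u, h2, Finset.sum_empty]
  rfl

lemma qw_u'_of_cc0 (ctx : RemCtx F b v v' u u' r) (h0 : (F0 ctx).childCount u' = 0) :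
    F.qw u' = 1 := by
  have h1 : F.childCount u' - 1 = 0 := by rw [← ctx.F0_childCount_u']; exact h0
  have hv' : v' ∈ Finset.univ.filter (fun z => F.parent z = some u') := by simp [ctx.hpu']
  have h2 : (Finset.univ.filter (fun z => F.parent z = some u')).erase v' = ∅ := by
    rw [← Finset.card_eq_zero, Finset.card_erase_of_mem hv']
    exact h1
  rw [ctx.qw_u', h2, Finset.sum_empty]
  rfl

lemma contrib0_u (ctx : RemCtx F b v v' u u' r) :
    vertexContrib (F0 ctx) u + 1 = vertexContrib F u := by
  have hqw0 : (F0 ctx).qw u = F.qw u - 1 := if_pos (Or.inl rfl)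
  have hpar : (F0 ctx).parent u = F.parent u :=
    if_neg (by push_neg; exact ⟨ctx.u_ne_v, ctx.u_ne_v'⟩)
  have hpw : (F0 ctx).pw u = F.pw u := rfl
  have hccF : F.childCount u ≠ 0 := ctx.ccu
  have hq1 := ctx.qw_u_of_cc0
  have hqpos := ctx.qw_u_pos
  unfold vertexContrib
  rw [hqw0, hpar, hpw]
  by_cases hrt : F.parent u = none
  · rw [if_pos hrt, if_pos hrt, if_neg hccF]
    by_cases h0 : (F0 ctx).childCount u = 0
    · rw [if_pos h0]
      have := hq1 h0
      omega
    · rw [if_neg h0]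
      omega
  · rw [if_neg hrt, if_neg hrt, if_neg hccF]
    by_cases h0 : (F0 ctx).childCount u = 0
    · rw [if_pos h0]
      have := hq1 h0
      omega
    · rw [if_neg h0]
      omega

lemma contrib0_u' (ctx : RemCtx F b v v' u u' r) :
    vertexContrib (F0 ctx) u' + 1 = vertexContrib F u' := by
  have hqw0 : (F0 ctx).qw u' = F.qw u' - 1 := if_pos (Or.inr rfl)
  have hpar : (F0 ctx).parent u' = F.parent u' :=
    if_neg (by push_neg; exact ⟨ctx.u'_ne_v, ctx.u'_ne_v'⟩)
  have hpw : (F0 ctx).pw u' = F.pw u' := rfl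
  have hccF : F.childCount u' ≠ 0 := ctx.ccu'
  have hq1 := ctx.qw_u'_of_cc0
  have hqpos := ctx.qw_u'_pos
  unfold vertexContrib
  rw [hqw0, hpar, hpw]
  by_cases hrt : F.parent u' = none
  · rw [if_pos hrt, if_pos hrt, if_neg hccF]
    by_cases h0 : (F0 ctx).childCount u' = 0
    · rw [if_pos h0]
      have := hq1 h0
      omega
    · rw [if_neg h0]
      omega
  · rw [if_neg hrt, if_neg hrt, if_neg hccF]
    by_cases h0 : (F0 ctx).childCount u' = 0
    · rw [if_pos h0]
      have := hq1 h0
      omega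
    · rw [if_neg h0]
      omega

lemma contrib0_other (ctx : RemCtx F b v v' u u' r) {x : Fin F.n}
    (h1 : x ≠ v) (h2 : x ≠ v') (h3 : x ≠ u) (h4 : x ≠ u') :
    vertexContrib (F0 ctx) x = vertexContrib F x := by
  have hqw0 : (F0 ctx).qw x = F.qw x := if_neg (by push_neg; exact ⟨h3, h4⟩)
  have hpar : (F0 ctx).parent x = F.parent x := if_neg (by push_neg; exact ⟨h1, h2⟩)
  have hpw : (F0 ctx).pw x = F.pw x := rfl
  have hcc : (F0 ctx).childCount x = F.childCount x := ctx.F0_childCount_other h3 h4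
  unfold vertexContrib
  rw [hqw0, hpar, hpw, hcc]

lemma even_sum_contrib0 (ctx : RemCtx F b v v' u u' r) (S : Finset (Fin F.n))
    (hv : v ∉ S) (hv' : v' ∉ S) (huu : u ∈ S ↔ u' ∈ S)
    (hE : Even (∑ z ∈ S, vertexContrib F z)) :
    Even (∑ z ∈ S, vertexContrib (F0 ctx) z) := by
  by_cases hu : u ∈ S
  · have hu' : u' ∈ S := huu.mp hu
    have hu'e : u' ∈ S.erase u := Finset.mem_erase.mpr ⟨(ctx.u_ne_u').symm, hu'⟩
    have hcong : ∑ z ∈ (S.erase u).erase u', vertexContrib (F0 ctx) z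
        = ∑ z ∈ (S.erase u).erase u', vertexContrib F z := by
      apply Finset.sum_congr rfl
      intro z hz
      rw [Finset.mem_erase, Finset.mem_erase] at hz
      exact ctx.contrib0_other (fun h => hv (h ▸ hz.2.2)) (fun h => hv' (h ▸ hz.2.2))
        hz.2.1 hz.1
    have e1 : ∑ z ∈ S, vertexContrib F z
        = vertexContrib F u + (vertexContrib F u' + ∑ z ∈ (S.erase u).erase u', vertexContrib F z) := by
      rw [Finset.add_sum_erase _ _ hu'e, Finset.add_sum_erase _ _ hu]
    have e2 : ∑ z ∈ S, vertexContrib (F0 ctx) z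
        = vertexContrib (F0 ctx) u + (vertexContrib (F0 ctx) u' + ∑ z ∈ (S.erase u).erase u', vertexContrib (F0 ctx) z) := by
      rw [Finset.add_sum_erase _ _ hu'e, Finset.add_sum_erase _ _ hu]
    have c1 := ctx.contrib0_u
    have c2 := ctx.contrib0_u'
    rw [Nat.even_iff] at hE ⊢
    rw [e1] at hE
    rw [e2, hcong]
    omega
  · have hu' : u' ∉ S := fun h => hu (huu.mpr h)
    rw [Finset.sum_congr rfl (fun z hz => ctx.contrib0_other
      (fun h => hv (h ▸ hz)) (fun h => hv' (h ▸ hz))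
      (fun h => hu (h ▸ hz)) (fun h => hu' (h ▸ hz)))]
    exact hE

lemma parity0 (ctx : RemCtx F b v v' u u' r) :
    ParityProp (F0 ctx) (mergeMap b v (b r)) := by
  intro x
  by_cases hx : mergeMap b v (b r) x = b r
  · rw [show (Finset.univ.filter fun z => mergeMap b v (b r) z = mergeMap b v (b r) x)
        = {v, v'} ∪ Finset.univ.filter (fun z => b z = b r) by
      rw [hx]; exact ctx.mergeMap_block_t ctx.br_ne]
    have hdisj : Disjoint ({v, v'} : Finset (Fin F.n))
        (Finset.univ.filter (fun z => b z = b r)) := by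
      simp only [Finset.disjoint_left, Finset.mem_insert, Finset.mem_singleton,
        Finset.mem_filter, Finset.mem_univ, true_and]
      rintro z (rfl | rfl) hz
      · exact ctx.br_ne hz.symm
      · exact ctx.br_ne (ctx.hbvv ▸ hz.symm)
    rw [Finset.sum_union hdisj, Finset.sum_pair ctx.hne, ctx.contrib0_v, ctx.contrib0_v']
    have hEv : Even (∑ z ∈ Finset.univ.filter (fun z => b z = b r), vertexContrib (F0 ctx) z) := by
      apply ctx.even_sum_contrib0
      · simp only [Finset.mem_filter, Finset.mem_univ, true_and]
        exact fun h => ctx.br_ne h.symm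
      · simp only [Finset.mem_filter, Finset.mem_univ, true_and]
        exact fun h => ctx.br_ne (ctx.hbvv ▸ h.symm)
      · simp only [Finset.mem_filter, Finset.mem_univ, true_and]
        rw [ctx.hbuu]
      · exact ctx.hss.parity_prop r
    obtain ⟨k, hk⟩ := hEv
    exact ⟨k, by omega⟩
  · rw [ctx.mergeMap_block_ne ctx.br_ne hx]
    obtain ⟨hMx, hbx⟩ := ctx.mergeMap_ne ctx.br_ne hx
    apply ctx.even_sum_contrib0
    · simp only [Finset.mem_filter, Finset.mem_univ, true_and]
      exact fun h => hbx (h.symm ▸ rfl)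
    · simp only [Finset.mem_filter, Finset.mem_univ, true_and]
      exact fun h => hbx (by rw [← h, ← ctx.hbvv])
    · simp only [Finset.mem_filter, Finset.mem_univ, true_and]
      rw [ctx.hbuu]
    · exact ctx.hss.parity_prop x

lemma F0_root_iff (ctx : RemCtx F b v v' u u' r) (x : Fin F.n) :
    (F0 ctx).isRoot x ↔ (x = v ∨ x = v' ∨ F.isRoot x) := by
  show (if x = v ∨ x = v' then none else F.parent x) = none ↔ _
  by_cases h : x = v ∨ x = v'
  · simp [h]; tauto
  · push_neg at h
    rw [if_neg (by tauto : ¬(x = v ∨ x = v'))]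
    unfold DecForest.isRoot
    constructor
    · intro h'; exact Or.inr (Or.inr h')
    · rintro (rfl | rfl | h')
      · exact absurd rfl h.1
      · exact absurd rfl h.2
      · exact h'

lemma b0_root (ctx : RemCtx F b v v' u u' r) {x : Fin F.n} (hx : (F0 ctx).isRoot x) :
    mergeMap b v (b r) x = b r := by
  rw [ctx.F0_root_iff] at hx
  rcases hx with rfl | rfl | hx
  · exact if_pos rfl
  · exact if_pos ctx.hbvv.symm
  · have hbx : b x = b r := ctx.hss.root_prop x r hx ctx.hr
    by_cases h : b x = b v
    · rcases ctx.hblk x h with rfl | rfl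
      · exact absurd hx ctx.not_root_v
      · exact absurd hx ctx.not_root_v'
    · show (if b x = b v then b r else b x) = b r
      rw [if_neg h]; exact hbx

lemma ss_F0 (ctx : RemCtx F b v v' u u' r) :
    SemiSimpleConfig (F0 ctx) (mergeMap b v (b r)) := by
  constructor
  · -- root_prop
    intro x y hx hy
    rw [ctx.b0_root hx, ctx.b0_root hy]
  · -- sibling_prop
    intro x y hsib hM
    obtain ⟨hxy, w, hwx, hwy⟩ := hsib
    have hx' : F.parent x = some w ∧ x ≠ v ∧ x ≠ v' := by
      have h' : (if x = v ∨ x = v' then none else F.parent x) = some w := hwx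
      by_cases hc : x = v ∨ x = v'
      · rw [if_pos hc] at h'; exact absurd h' (by simp)
      · push_neg at hc
        rw [if_neg (by tauto : ¬(x = v ∨ x = v'))] at h'
        exact ⟨h', hc.1, hc.2⟩
    have hy' : F.parent y = some w ∧ y ≠ v ∧ y ≠ v' := by
      have h' : (if y = v ∨ y = v' then none else F.parent y) = some w := hwy
      by_cases hc : y = v ∨ y = v'
      · rw [if_pos hc] at h'; exact absurd h' (by simp)
      · push_neg at hc
        rw [if_neg (by tauto : ¬(y = v ∨ y = v'))] at h'
        exact ⟨h', hc.1, hc.2⟩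
    by_cases hx : mergeMap b v (b r) x = b r
    · have h1 : v = x ∨ v = y := hM.2 v (by rw [hx]; exact if_pos rfl)
      have h2 : v' = x ∨ v' = y := hM.2 v' (by rw [hx]; exact if_pos ctx.hbvv.symm)
      rcases h1 with h1 | h1
      · exact hx'.2.1 h1.symm
      · exact hy'.2.1 h1.symm
    · obtain ⟨hMx, hbx⟩ := ctx.mergeMap_ne ctx.br_ne hx
      have hMy := ctx.mergeMap_ne ctx.br_ne (show mergeMap b v (b r) y ≠ b r by rw [← hM.1]; exact hx)
      refine ctx.hss.sibling_prop x y ⟨hxy, w, hx'.1, hy'.1⟩ ⟨?_, ?_⟩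
      · rw [← hMx, ← hMy.1, hM.1]
      · intro z hz
        refine hM.2 z ?_
        have hbz : b z ≠ b v := fun h => hbx (by rw [← hz, h])
        show (if b z = b v then b r else b z) = _
        rw [if_neg hbz, hz, ← hMx]
  · -- singleton_leaf
    intro x hx h1
    by_cases hMx : mergeMap b v (b r) x = b r
    · exact absurd h1 (ctx.two_le_card_t ctx.br_ne hMx)
    · obtain ⟨hMxe, hbx⟩ := ctx.mergeMap_ne ctx.br_ne hMx
      have hb1 : blockCard b x = 1 := by
        rw [← ctx.blockCard_mrg_ne ctx.br_ne hMx]; exact h1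
      have hxu : x ≠ u := fun hh => ctx.u_ne_u'
        (((eq_of_blockCard_one b x hb1 u' (by rw [hh]; exact ctx.hbuu.symm)).trans hh).symm)
      have hxu' : x ≠ u' := fun hh => ctx.u_ne_u'
        ((eq_of_blockCard_one b x hb1 u (by rw [hh]; exact ctx.hbuu)).trans hh)
      obtain ⟨hp0, hc0⟩ := hx
      have hxv : x ≠ v := fun h => hp0 (by rw [h]; exact if_pos (Or.inl rfl))
      have hxv' : x ≠ v' := fun h => hp0 (by rw [h]; exact if_pos (Or.inr rfl))
      have hleaf : F.isLeaf x := by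
        constructor
        · intro h
          apply hp0
          show (if x = v ∨ x = v' then none else F.parent x) = none
          rw [if_neg (by tauto : ¬(x = v ∨ x = v'))]
          exact h
        · rw [← ctx.F0_childCount_other hxu hxu']
          exact hc0
      exact ctx.hss.singleton_leaf x hleaf hb1
  · -- forbidden_weights
    intro x hx h1
    by_cases hMx : mergeMap b v (b r) x = b r
    · exact absurd h1 (ctx.two_le_card_t ctx.br_ne hMx)
    · obtain ⟨hMxe, hbx⟩ := ctx.mergeMap_ne ctx.br_ne hMx
      have hb1 : blockCard b x = 1 := by
        rw [← ctx.blockCard_mrg_ne ctx.br_ne hMx]; exact h1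
      have hxu : x ≠ u := fun hh => ctx.u_ne_u'
        (((eq_of_blockCard_one b x hb1 u' (by rw [hh]; exact ctx.hbuu.symm)).trans hh).symm)
      have hxu' : x ≠ u' := fun hh => ctx.u_ne_u'
        ((eq_of_blockCard_one b x hb1 u (by rw [hh]; exact ctx.hbuu)).trans hh)
      have hnr : ¬ F.isRoot x := by
        intro h
        exact hx (by rw [ctx.F0_root_iff]; exact Or.inr (Or.inr h))
      have hqw0 : (F0 ctx).qw x = F.qw x := if_neg (by push_neg; exact ⟨hxu, hxu'⟩)
      have hpw : (F0 ctx).pw x = F.pw x := rfl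
      rw [hqw0, hpw]
      exact ctx.hss.forbidden_weights x hnr hb1
  · -- parity
    exact ctx.parity0

end RemCtx

end RemovalAux4
section RemovalAux5

attribute [local instance] Classical.propDecidable

open Finset

def updc {n N : ℕ} (b : Fin n → Fin n) (v : Fin n) (μ : Fin n → Fin N) (j : Fin N) :
    Fin n → Fin N := fun x => if b x = b v then j else μ x

lemma updc_apply_ne {n N : ℕ} {b : Fin n → Fin n} {v : Fin n} {μ : Fin n → Fin N}
    {j : Fin N} {x : Fin n} (h : b x ≠ b v) : updc b v μ j x = μ x := if_neg h

lemma updc_apply {n N : ℕ} {b : Fin n → Fin n} {v : Fin n} {μ : Fin n → Fin N}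
    {j : Fin N} {x : Fin n} (h : b x = b v) : updc b v μ j x = j := if_pos h

noncomputable def crep {n : ℕ} (b : Fin n → Fin n) : Fin n → Fin n :=
  fun t => if h : ∃ x, b x = t then h.choose else t

lemma crep_spec {n : ℕ} (b : Fin n → Fin n) (t : Fin n) (h : ∃ x, b x = t) :
    b (crep b t) = t := by
  unfold crep
  rw [dif_pos h]
  exact h.choose_spec

namespace RemCtx

variable {F : DecForest} {b : Fin F.n → Fin F.n} {v v' u u' r : Fin F.n}

lemma bne_of (ctx : RemCtx F b v v' u u' r) {x : Fin F.n} (h1 : x ≠ v) (h2 : x ≠ v') :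
    b x ≠ b v := by
  intro h
  rcases ctx.hblk x h with h' | h'
  · exact h1 h'
  · exact h2 h'

lemma M_apply_ne (ctx : RemCtx F b v v' u u' r) {t x : Fin F.n} (h : b x ≠ b v) :
    mergeMap b v t x = b x := if_neg h

lemma M_apply (ctx : RemCtx F b v v' u u' r) {t x : Fin F.n} (h : b x = b v) :
    mergeMap b v t x = t := if_pos h

/-- h1 : pushing a `b`-consistent coloring to an `M`-consistent one. -/
lemma consistent_M_of (ctx : RemCtx F b v v' u u' r) {N : ℕ} {ℓ : Fin F.n → Fin N}
    (hℓ : Consistent b ℓ) :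
    Consistent (mergeMap b v (b r)) (updc b v ℓ (ℓ r)) := by
  intro x y
  by_cases hx : b x = b v <;> by_cases hy : b y = b v
  · rw [updc_apply hx, updc_apply hy, ctx.M_apply hx, ctx.M_apply hy]
    simp
  · rw [updc_apply hx, updc_apply_ne hy, ctx.M_apply hx, ctx.M_apply_ne hy]
    exact hℓ r y
  · rw [updc_apply_ne hx, updc_apply hy, ctx.M_apply_ne hx, ctx.M_apply hy]
    exact hℓ x r
  · rw [updc_apply_ne hx, updc_apply_ne hy, ctx.M_apply_ne hx, ctx.M_apply_ne hy]
    exact hℓ x y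

/-- h2 : freshness of the old color of `v`. -/
lemma fresh_of (ctx : RemCtx F b v v' u u' r) {N : ℕ} {ℓ : Fin F.n → Fin N}
    (hℓ : Consistent b ℓ) : ∀ x, b x ≠ b v → updc b v ℓ (ℓ r) x ≠ ℓ v := by
  intro x hx h
  rw [updc_apply_ne hx] at h
  exact hx ((hℓ x v).mp h)

/-- h3 : recovering a `b`-consistent coloring from a fresh color. -/
lemma consistent_b_of (ctx : RemCtx F b v v' u u' r) {N : ℕ} {μ : Fin F.n → Fin N}
    {j : Fin N} (hμ : Consistent (mergeMap b v (b r)) μ)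
    (hfresh : ∀ x, b x ≠ b v → μ x ≠ j) : Consistent b (updc b v μ j) := by
  intro x y
  by_cases hx : b x = b v <;> by_cases hy : b y = b v
  · rw [updc_apply hx, updc_apply hy]
    exact iff_of_true rfl (hx.trans hy.symm)
  · rw [updc_apply hx, updc_apply_ne hy]
    exact iff_of_false (fun h => hfresh y hy h.symm) (fun h => hy (h.symm.trans hx))
  · rw [updc_apply_ne hx, updc_apply hy]
    exact iff_of_false (fun h => hfresh x hx h) (fun h => hx (h.trans hy))
  · rw [updc_apply_ne hx, updc_apply_ne hy]
    rw [show b x = b y ↔ mergeMap b v (b r) x = mergeMap b v (b r) y by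
      rw [ctx.M_apply_ne hx, ctx.M_apply_ne hy]]
    exact hμ x y

/-- h4 : left inverse. -/
lemma upd_left (ctx : RemCtx F b v v' u u' r) {N : ℕ} {ℓ : Fin F.n → Fin N}
    (hℓ : Consistent b ℓ) : updc b v (updc b v ℓ (ℓ r)) (ℓ v) = ℓ := by
  funext x
  by_cases hx : b x = b v
  · rw [updc_apply hx]
    exact ((hℓ x v).mpr hx).symm
  · rw [updc_apply_ne hx, updc_apply_ne hx]

/-- h5 : right inverse (generic second argument). -/
lemma upd_right (ctx : RemCtx F b v v' u u' r) {N : ℕ} {μ : Fin F.n → Fin N}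
    (hμ : Consistent (mergeMap b v (b r)) μ) (j : Fin N) :
    updc b v (updc b v μ j) (μ r) = μ := by
  funext x
  by_cases hx : b x = b v
  · rw [updc_apply hx]
    refine ((hμ x r).mpr ?_).symm
    rw [ctx.M_apply hx, ctx.M_apply_ne ctx.br_ne]
  · rw [updc_apply_ne hx, updc_apply_ne hx]

lemma updc_at_r (ctx : RemCtx F b v v' u u' r) {N : ℕ} {μ : Fin F.n → Fin N} {j : Fin N} :
    updc b v μ j r = μ r := updc_apply_ne ctx.br_ne

/-- h7 : pushing an `Mt`-consistent coloring to an `M`-consistent one. -/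
lemma consistent_M_of_t (ctx : RemCtx F b v v' u u' r) {t : Fin F.n} (htv : t ≠ b v)
    {N : ℕ} {ℓ : Fin F.n → Fin N} (hℓ : Consistent (mergeMap b v t) ℓ) :
    Consistent (mergeMap b v (b r)) (updc b v ℓ (ℓ r)) := by
  intro x y
  by_cases hx : b x = b v <;> by_cases hy : b y = b v
  · rw [updc_apply hx, updc_apply hy, ctx.M_apply hx, ctx.M_apply hy]
    simp
  · rw [updc_apply hx, updc_apply_ne hy, ctx.M_apply hx, ctx.M_apply_ne hy]
    rw [show ℓ r = ℓ y ↔ mergeMap b v t r = mergeMap b v t y from hℓ r y,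
      ctx.M_apply_ne ctx.br_ne, ctx.M_apply_ne hy]
  · rw [updc_apply_ne hx, updc_apply hy, ctx.M_apply_ne hx, ctx.M_apply hy]
    rw [show ℓ x = ℓ r ↔ mergeMap b v t x = mergeMap b v t r from hℓ x r,
      ctx.M_apply_ne ctx.br_ne, ctx.M_apply_ne hx]
  · rw [updc_apply_ne hx, updc_apply_ne hy, ctx.M_apply_ne hx, ctx.M_apply_ne hy]
    rw [show ℓ x = ℓ y ↔ mergeMap b v t x = mergeMap b v t y from hℓ x y,
      ctx.M_apply_ne hx, ctx.M_apply_ne hy]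

/-- h8 : pulling back an `M`-consistent coloring to an `Mt`-consistent one. -/
lemma consistent_t_of (ctx : RemCtx F b v v' u u' r) {t c : Fin F.n} (hc : b c = t)
    (htv : t ≠ b v) {N : ℕ} {μ : Fin F.n → Fin N}
    (hμ : Consistent (mergeMap b v (b r)) μ) :
    Consistent (mergeMap b v t) (updc b v μ (μ c)) := by
  have hbc : b c ≠ b v := fun h => htv (hc ▸ h)
  intro x y
  by_cases hx : b x = b v <;> by_cases hy : b y = b v
  · rw [updc_apply hx, updc_apply hy, ctx.M_apply (t := t) hx, ctx.M_apply (t := t) hy]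
    simp
  · rw [updc_apply hx, updc_apply_ne hy, ctx.M_apply (t := t) hx, ctx.M_apply_ne (t := t) hy]
    rw [show μ c = μ y ↔ mergeMap b v (b r) c = mergeMap b v (b r) y from hμ c y,
      ctx.M_apply_ne hbc, ctx.M_apply_ne hy, hc]
  · rw [updc_apply_ne hx, updc_apply hy, ctx.M_apply_ne (t := t) hx, ctx.M_apply (t := t) hy]
    rw [show μ x = μ c ↔ mergeMap b v (b r) x = mergeMap b v (b r) c from hμ x c,
      ctx.M_apply_ne hbc, ctx.M_apply_ne hx, hc]
  · rw [updc_apply_ne hx, updc_apply_ne hy, ctx.M_apply_ne (t := t) hx,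
      ctx.M_apply_ne (t := t) hy]
    rw [show μ x = μ y ↔ mergeMap b v (b r) x = mergeMap b v (b r) y from hμ x y,
      ctx.M_apply_ne hx, ctx.M_apply_ne hy]

/-- h9 : left inverse in the `t`-merged case. -/
lemma updt_left (ctx : RemCtx F b v v' u u' r) {t c : Fin F.n} (hc : b c = t)
    (htv : t ≠ b v) {N : ℕ} {ℓ : Fin F.n → Fin N}
    (hℓ : Consistent (mergeMap b v t) ℓ) :
    updc b v (updc b v ℓ (ℓ r)) (updc b v ℓ (ℓ r) c) = ℓ := by
  have hbc : b c ≠ b v := fun h => htv (hc ▸ h)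
  funext x
  by_cases hx : b x = b v
  · rw [updc_apply hx, updc_apply_ne hbc]
    refine (hℓ c x).mpr ?_
    rw [ctx.M_apply_ne (t := t) hbc, ctx.M_apply (t := t) hx, hc]
  · rw [updc_apply_ne hx, updc_apply_ne hx]

/-- Bijection A : colorings consistent with `b` correspond to pairs of a coloring
consistent with the merged partition and a fresh color. -/
lemma sumA (ctx : RemCtx F b v v' u u' r) {N : ℕ} (g : (Fin F.n → Fin N) → ℝ) :
    ∑ ℓ ∈ Finset.univ.filter (fun ℓ : Fin F.n → Fin N => Consistent b ℓ), g ℓ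
      = ∑ μ ∈ Finset.univ.filter
          (fun μ : Fin F.n → Fin N => Consistent (mergeMap b v (b r)) μ),
          ∑ j ∈ Finset.univ.filter (fun j : Fin N => ∀ x, b x ≠ b v → μ x ≠ j),
            g (updc b v μ j) := by
  have hsig : (∑ μ ∈ Finset.univ.filter
        (fun μ : Fin F.n → Fin N => Consistent (mergeMap b v (b r)) μ),
      ∑ j ∈ Finset.univ.filter (fun j : Fin N => ∀ x, b x ≠ b v → μ x ≠ j),
        g (updc b v μ j))
      = ∑ p ∈ (Finset.univ.filter
          (fun μ : Fin F.n → Fin N => Consistent (mergeMap b v (b r)) μ)).sigma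
          (fun μ => Finset.univ.filter (fun j : Fin N => ∀ x, b x ≠ b v → μ x ≠ j)),
          g (updc b v p.1 p.2) :=
    (Finset.sum_sigma (Finset.univ.filter
        (fun μ : Fin F.n → Fin N => Consistent (mergeMap b v (b r)) μ))
      (fun μ => Finset.univ.filter (fun j : Fin N => ∀ x, b x ≠ b v → μ x ≠ j))
      (fun p => g (updc b v p.1 p.2))).symm
  rw [hsig]
  refine Finset.sum_bij'
    (fun ℓ _ => (⟨updc b v ℓ (ℓ r), ℓ v⟩ : Σ _ : Fin F.n → Fin N, Fin N))
    (fun p _ => updc b v p.1 p.2) ?_ ?_ ?_ ?_ ?_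
  · intro ℓ hℓ
    rw [Finset.mem_filter] at hℓ
    rw [Finset.mem_sigma]
    refine ⟨by rw [Finset.mem_filter]; exact ⟨Finset.mem_univ _, ctx.consistent_M_of hℓ.2⟩, ?_⟩
    rw [Finset.mem_filter]
    exact ⟨Finset.mem_univ _, ctx.fresh_of hℓ.2⟩
  · intro p hp
    rw [Finset.mem_sigma, Finset.mem_filter, Finset.mem_filter] at hp
    rw [Finset.mem_filter]
    exact ⟨Finset.mem_univ _, ctx.consistent_b_of hp.1.2 hp.2.2⟩
  · intro ℓ hℓ
    rw [Finset.mem_filter] at hℓ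
    exact ctx.upd_left hℓ.2
  · intro p hp
    rw [Finset.mem_sigma, Finset.mem_filter, Finset.mem_filter] at hp
    have h1 : updc b v (updc b v p.1 p.2) (updc b v p.1 p.2 r) = p.1 := by
      rw [ctx.updc_at_r]
      exact ctx.upd_right hp.1.2 p.2
    have h2 : updc b v p.1 p.2 v = p.2 := updc_apply rfl
    obtain ⟨μ, j⟩ := p
    simp only at h1 h2 ⊢
    rw [h1, h2]
  · intro ℓ hℓ
    rw [Finset.mem_filter] at hℓ
    simp only
    rw [ctx.upd_left hℓ.2]

/-- Bijection B : colorings consistent with the `t`-merged partition correspond to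
colorings consistent with the root-merged partition. -/
lemma sumB (ctx : RemCtx F b v v' u u' r) {t c : Fin F.n} (hc : b c = t)
    (htv : t ≠ b v) {N : ℕ} (g : (Fin F.n → Fin N) → ℝ) :
    ∑ ℓ ∈ Finset.univ.filter (fun ℓ : Fin F.n → Fin N => Consistent (mergeMap b v t) ℓ),
        g ℓ
      = ∑ μ ∈ Finset.univ.filter
          (fun μ : Fin F.n → Fin N => Consistent (mergeMap b v (b r)) μ),
          g (updc b v μ (μ c)) := by
  refine Finset.sum_bij' (fun ℓ _ => updc b v ℓ (ℓ r)) (fun μ _ => updc b v μ (μ c))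
    ?_ ?_ ?_ ?_ ?_
  · intro ℓ hℓ
    rw [Finset.mem_filter] at hℓ ⊢
    exact ⟨Finset.mem_univ _, ctx.consistent_M_of_t htv hℓ.2⟩
  · intro μ hμ
    rw [Finset.mem_filter] at hμ ⊢
    exact ⟨Finset.mem_univ _, ctx.consistent_t_of hc htv hμ.2⟩
  · intro ℓ hℓ
    rw [Finset.mem_filter] at hℓ
    exact ctx.updt_left hc htv hℓ.2
  · intro μ hμ
    rw [Finset.mem_filter] at hμ
    show updc b v (updc b v μ (μ c)) ((updc b v μ (μ c)) r) = μ
    rw [ctx.updc_at_r]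
    exact ctx.upd_right hμ.2 (μ c)
  · intro ℓ hℓ
    rw [Finset.mem_filter] at hℓ
    rw [ctx.updt_left hc htv hℓ.2]

/-- Reindexing the non-fresh colors by the other blocks. -/
lemma sum_nonfresh (ctx : RemCtx F b v v' u u' r) {N : ℕ} {μ : Fin F.n → Fin N}
    (hμ : Consistent (mergeMap b v (b r)) μ) (g : Fin N → ℝ) :
    ∑ j ∈ Finset.univ.filter (fun j : Fin N => ¬ ∀ x, b x ≠ b v → μ x ≠ j), g j
      = ∑ t ∈ (Finset.univ.image b).erase (b v), g (μ (crep b t)) := by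
  refine (Finset.sum_bij (fun t _ => μ (crep b t)) ?_ ?_ ?_ ?_).symm
  · intro t ht
    rw [Finset.mem_erase] at ht
    obtain ⟨x, -, hx⟩ := Finset.mem_image.mp ht.2
    have hbc : b (crep b t) = t := crep_spec b t ⟨x, hx⟩
    rw [Finset.mem_filter]
    refine ⟨Finset.mem_univ _, fun hall => ?_⟩
    exact hall (crep b t) (by rw [hbc]; exact ht.1) rfl
  · intro t1 ht1 t2 ht2 heq
    rw [Finset.mem_erase] at ht1 ht2
    obtain ⟨x1, -, hx1⟩ := Finset.mem_image.mp ht1.2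
    obtain ⟨x2, -, hx2⟩ := Finset.mem_image.mp ht2.2
    have hb1 : b (crep b t1) = t1 := crep_spec b t1 ⟨x1, hx1⟩
    have hb2 : b (crep b t2) = t2 := crep_spec b t2 ⟨x2, hx2⟩
    have := (hμ (crep b t1) (crep b t2)).mp heq
    rw [ctx.M_apply_ne (by rw [hb1]; exact ht1.1), ctx.M_apply_ne (by rw [hb2]; exact ht2.1),
      hb1, hb2] at this
    exact this
  · intro j hj
    rw [Finset.mem_filter] at hj
    push_neg at hj
    obtain ⟨x, hx1, hx2⟩ := hj.2
    refine ⟨b x, Finset.mem_erase.mpr ⟨hx1, Finset.mem_image.mpr ⟨x, Finset.mem_univ x, rfl⟩⟩, ?_⟩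
    have hbc : b (crep b (b x)) = b x := crep_spec b (b x) ⟨x, rfl⟩
    have := (hμ (crep b (b x)) x).mpr (by
      rw [ctx.M_apply_ne (by rw [hbc]; exact hx1), ctx.M_apply_ne hx1, hbc])
    show μ (crep b (b x)) = j
    rw [this]
    exact hx2
  · intro t ht
    rfl

/-- Factorization of `γ(F, ·)` at an updated coloring. -/
lemma gamma_upd (ctx : RemCtx F b v v' u u' r) {N : ℕ} (Ψ : Matrix (Fin N) (Fin N) ℝ)
    (μ : Fin F.n → Fin N) (j : Fin N) :
    gammaPoly F Ψ (updc b v μ j)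
      = Ψ (μ u) j * Ψ (μ u') j * gammaPoly (F0 ctx) Ψ μ := by
  have h0 : gammaPoly (F0 ctx) Ψ μ = (N : ℝ)⁻¹ *
      ∏ x : Fin F.n, ((if x = v ∨ x = v' then (none : Option (Fin F.n)) else F.parent x).elim 1
        fun w => Ψ (μ w) (μ x) ^ F.pw x) := rfl
  rw [h0]
  unfold gammaPoly
  have hv'mem : v' ∈ Finset.univ.erase v :=
    Finset.mem_erase.mpr ⟨(ctx.hne).symm, Finset.mem_univ v'⟩
  have key : ∀ x ∈ (Finset.univ.erase v).erase v',
      ((F.parent x).elim 1 fun w => Ψ (updc b v μ j w) (updc b v μ j x) ^ F.pw x)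
        = ((if x = v ∨ x = v' then (none : Option (Fin F.n)) else F.parent x).elim 1
            fun w => Ψ (μ w) (μ x) ^ F.pw x) := by
    intro x hx
    rw [Finset.mem_erase, Finset.mem_erase] at hx
    obtain ⟨hx2, hx1, -⟩ := hx
    rw [if_neg (by tauto : ¬(x = v ∨ x = v'))]
    cases hp : F.parent x with
    | none => rfl
    | some w =>
      have hwv : w ≠ v := fun h => (F.childCount_eq_zero v).mp ctx.hlv.2 x (h ▸ hp)
      have hwv' : w ≠ v' := fun h => (F.childCount_eq_zero v').mp ctx.hlv'.2 x (h ▸ hp)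
      show Ψ (updc b v μ j w) (updc b v μ j x) ^ F.pw x = Ψ (μ w) (μ x) ^ F.pw x
      rw [updc_apply_ne (ctx.bne_of hwv hwv'), updc_apply_ne (ctx.bne_of hx1 hx2)]
  have e1 : (∏ x : Fin F.n,
      ((F.parent x).elim 1 fun w => Ψ (updc b v μ j w) (updc b v μ j x) ^ F.pw x))
      = Ψ (μ u) j * (Ψ (μ u') j * ∏ x ∈ (Finset.univ.erase v).erase v',
          ((if x = v ∨ x = v' then (none : Option (Fin F.n)) else F.parent x).elim 1
            fun w => Ψ (μ w) (μ x) ^ F.pw x)) := by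
    rw [← Finset.mul_prod_erase Finset.univ _ (Finset.mem_univ v),
        ← Finset.mul_prod_erase _ _ hv'mem]
    congr 1
    · show ((F.parent v).elim 1 fun w => Ψ (updc b v μ j w) (updc b v μ j v) ^ F.pw v)
        = Ψ (μ u) j
      rw [ctx.hpu]
      show Ψ (updc b v μ j u) (updc b v μ j v) ^ F.pw v = Ψ (μ u) j
      rw [updc_apply_ne ctx.bu_ne, updc_apply rfl, ctx.hp1, pow_one]
    congr 1
    · show ((F.parent v').elim 1 fun w => Ψ (updc b v μ j w) (updc b v μ j v') ^ F.pw v')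
        = Ψ (μ u') j
      rw [ctx.hpu']
      show Ψ (updc b v μ j u') (updc b v μ j v') ^ F.pw v' = Ψ (μ u') j
      rw [updc_apply_ne ctx.bu'_ne, updc_apply ctx.hbvv.symm, ctx.hp1', pow_one]
    · exact Finset.prod_congr rfl key
  have e2 : (∏ x : Fin F.n,
      ((if x = v ∨ x = v' then (none : Option (Fin F.n)) else F.parent x).elim 1
        fun w => Ψ (μ w) (μ x) ^ F.pw x))
      = ∏ x ∈ (Finset.univ.erase v).erase v',
          ((if x = v ∨ x = v' then (none : Option (Fin F.n)) else F.parent x).elim 1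
            fun w => Ψ (μ w) (μ x) ^ F.pw x) := by
    rw [← Finset.mul_prod_erase Finset.univ _ (Finset.mem_univ v),
        ← Finset.mul_prod_erase _ _ hv'mem]
    rw [show ((if v = v ∨ v = v' then (none : Option (Fin F.n)) else F.parent v).elim 1
        fun w => Ψ (μ w) (μ v) ^ F.pw v) = 1 by rw [if_pos (Or.inl rfl)]; rfl]
    rw [show ((if v' = v ∨ v' = v' then (none : Option (Fin F.n)) else F.parent v').elim 1
        fun w => Ψ (μ w) (μ v') ^ F.pw v') = 1 by rw [if_pos (Or.inr rfl)]; rfl]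
    rw [one_mul, one_mul]
  rw [e1, e2]
  ring

/-- Summing the factorization over all colors. -/
lemma sum_univ_j (ctx : RemCtx F b v v' u u' r) {N : ℕ} (Ψ : Matrix (Fin N) (Fin N) ℝ)
    (hΨ : ∀ j : Fin N, (Ψ * Ψᵀ) j j = 1) {μ : Fin F.n → Fin N}
    (hμ : Consistent (mergeMap b v (b r)) μ) :
    ∑ j : Fin N, gammaPoly F Ψ (updc b v μ j) = gammaPoly (F0 ctx) Ψ μ := by
  have huu : μ u = μ u' := (hμ u u').mpr (by
    rw [ctx.M_apply_ne ctx.bu_ne, ctx.M_apply_ne ctx.bu'_ne]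
    exact ctx.hbuu)
  rw [Finset.sum_congr rfl (fun j _ => ctx.gamma_upd Ψ μ j)]
  rw [← Finset.sum_mul]
  rw [show ∑ j : Fin N, Ψ (μ u) j * Ψ (μ u') j = 1 by
    rw [← huu]
    have h2 := hΨ (μ u)
    rw [Matrix.mul_apply] at h2
    simpa [Matrix.transpose_apply] using h2]
  rw [one_mul]

/-- The main summation identity. -/
lemma gamma_main (ctx : RemCtx F b v v' u u' r) {N : ℕ} (Ψ : Matrix (Fin N) (Fin N) ℝ)
    (hΨ : ∀ j : Fin N, (Ψ * Ψᵀ) j j = 1) :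
    GammaSum F b Ψ = GammaSum (F0 ctx) (mergeMap b v (b r)) Ψ
      - ∑ t ∈ (Finset.univ.image b).erase (b v), GammaSum F (mergeMap b v t) Ψ := by
  have hG0 : GammaSum (F0 ctx) (mergeMap b v (b r)) Ψ
      = ∑ μ ∈ Finset.univ.filter
          (fun μ : Fin F.n → Fin N => Consistent (mergeMap b v (b r)) μ),
          gammaPoly (F0 ctx) Ψ μ := rfl
  have hsplit : ∀ μ ∈ Finset.univ.filter
      (fun μ : Fin F.n → Fin N => Consistent (mergeMap b v (b r)) μ),
      gammaPoly (F0 ctx) Ψ μ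
        = (∑ j ∈ Finset.univ.filter (fun j : Fin N => ∀ x, b x ≠ b v → μ x ≠ j),
            gammaPoly F Ψ (updc b v μ j))
          + ∑ t ∈ (Finset.univ.image b).erase (b v),
              gammaPoly F Ψ (updc b v μ (μ (crep b t))) := by
    intro μ hμ
    rw [Finset.mem_filter] at hμ
    rw [← ctx.sum_univ_j Ψ hΨ hμ.2]
    rw [← ctx.sum_nonfresh hμ.2 (fun j => gammaPoly F Ψ (updc b v μ j))]
    rw [Finset.sum_filter_add_sum_filter_not]
  have hB : ∀ t ∈ (Finset.univ.image b).erase (b v),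
      GammaSum F (mergeMap b v t) Ψ
        = ∑ μ ∈ Finset.univ.filter
            (fun μ : Fin F.n → Fin N => Consistent (mergeMap b v (b r)) μ),
            gammaPoly F Ψ (updc b v μ (μ (crep b t))) := by
    intro t ht
    rw [Finset.mem_erase] at ht
    obtain ⟨x, -, hx⟩ := Finset.mem_image.mp ht.2
    exact ctx.sumB (crep_spec b t ⟨x, hx⟩) ht.1 (gammaPoly F Ψ)
  rw [hG0, Finset.sum_congr rfl hsplit, Finset.sum_add_distrib]
  rw [Finset.sum_comm]
  rw [Finset.sum_congr rfl hB]
  rw [show GammaSum F b Ψ = ∑ ℓ ∈ Finset.univ.filter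
      (fun ℓ : Fin F.n → Fin N => Consistent b ℓ), gammaPoly F Ψ ℓ from rfl]
  rw [ctx.sumA (gammaPoly F Ψ)]
  ring

end RemCtx

end RemovalAux5
section RemovalAux6

attribute [local instance] Classical.propDecidable

open Finset

namespace RemCtx

variable {F : DecForest} {b : Fin F.n → Fin F.n} {v v' u u' r : Fin F.n}

lemma F0_childCount_le (ctx : RemCtx F b v v' u u' r) (x : Fin F.n) :
    (F0 ctx).childCount x ≤ F.childCount x := by
  unfold DecForest.childCount DecForest.children
  rw [ctx.F0_children x]
  exact le_trans (Finset.card_le_card (Finset.erase_subset _ _))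
    (Finset.card_le_card (Finset.erase_subset _ _))

lemma ntr_F0 (ctx : RemCtx F b v v' u u' r) (h1 : F.nontrivialRootCount = 1) :
    (F0 ctx).nontrivialRootCount = 1 := by
  unfold DecForest.nontrivialRootCount at h1 ⊢
  obtain ⟨r1, hr1⟩ := Finset.card_eq_one.mp h1
  have hr1mem : r1 ∈ Finset.univ.filter (fun x => F.isRoot x ∧ F.childCount x ≠ 0) := by
    rw [hr1]; exact Finset.mem_singleton_self r1
  rw [Finset.mem_filter] at hr1mem
  have huniq : ∀ x, F.isRoot x → F.childCount x ≠ 0 → x = r1 := by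
    intro x hx hcx
    have hmem : x ∈ Finset.univ.filter (fun x => F.isRoot x ∧ F.childCount x ≠ 0) :=
      Finset.mem_filter.mpr ⟨Finset.mem_univ x, hx, hcx⟩
    rw [hr1, Finset.mem_singleton] at hmem
    exact hmem
  have hkey : ∃ c, F.parent c = some r1 ∧ c ≠ v ∧ c ≠ v' := by
    by_cases hru : r1 = u ∨ r1 = u'
    · rcases hru with rfl | rfl
      · -- r1 = u; climb from u'
        have hnr : ¬ F.isRoot u' := fun h => ctx.u_ne_u' (huniq u' h ctx.ccu').symm
        obtain ⟨p, hp⟩ := Option.ne_none_iff_exists'.mp hnr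
        obtain ⟨ρ, c, hρ, hc, hcc⟩ := F.exists_root_edge u' p hp
        have hccc : F.childCount c ≠ 0 := by
          rcases hcc with h | rfl
          · exact h
          · exact ctx.ccu'
        have hρcc : F.childCount ρ ≠ 0 := fun h0 => (F.childCount_eq_zero ρ).mp h0 c hc
        have hρeq := huniq ρ hρ hρcc
        refine ⟨c, by rw [← hρeq]; exact hc, ?_, ?_⟩
        · intro h; rw [h] at hccc; exact hccc ctx.hlv.2
        · intro h; rw [h] at hccc; exact hccc ctx.hlv'.2
      · -- r1 = u'; climb from u
        have hnr : ¬ F.isRoot u := fun h => ctx.u_ne_u' (huniq u h ctx.ccu)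
        obtain ⟨p, hp⟩ := Option.ne_none_iff_exists'.mp hnr
        obtain ⟨ρ, c, hρ, hc, hcc⟩ := F.exists_root_edge u p hp
        have hccc : F.childCount c ≠ 0 := by
          rcases hcc with h | rfl
          · exact h
          · exact ctx.ccu
        have hρcc : F.childCount ρ ≠ 0 := fun h0 => (F.childCount_eq_zero ρ).mp h0 c hc
        have hρeq := huniq ρ hρ hρcc
        refine ⟨c, by rw [← hρeq]; exact hc, ?_, ?_⟩
        · intro h; rw [h] at hccc; exact hccc ctx.hlv.2
        · intro h; rw [h] at hccc; exact hccc ctx.hlv'.2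
    · push_neg at hru
      obtain ⟨c, hc⟩ := Finset.card_pos.mp (Nat.pos_of_ne_zero hr1mem.2.2)
      rw [DecForest.children, Finset.mem_filter] at hc
      refine ⟨c, hc.2, ?_, ?_⟩
      · intro h
        rw [h, ctx.hpu] at hc
        exact hru.1 (Option.some_inj.mp hc.2).symm
      · intro h
        rw [h, ctx.hpu'] at hc
        exact hru.2 (Option.some_inj.mp hc.2).symm
  obtain ⟨c, hc, hcv, hcv'⟩ := hkey
  rw [Finset.card_eq_one]
  refine ⟨r1, ?_⟩
  ext x
  rw [Finset.mem_filter, Finset.mem_singleton]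
  constructor
  · rintro ⟨-, hroot, hcc0⟩
    rw [ctx.F0_root_iff] at hroot
    rcases hroot with hxv | hxv' | hroot
    · exfalso
      apply hcc0
      rw [hxv, ctx.F0_childCount_other (ctx.u_ne_v).symm (ctx.u'_ne_v).symm]
      exact ctx.hlv.2
    · exfalso
      apply hcc0
      rw [hxv', ctx.F0_childCount_other (ctx.u_ne_v').symm (ctx.u'_ne_v').symm]
      exact ctx.hlv'.2
    · apply huniq x hroot
      intro h0
      apply hcc0
      have hle := ctx.F0_childCount_le x
      omega
  · intro hx
    refine ⟨Finset.mem_univ _, ?_, ?_⟩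
    · rw [hx, ctx.F0_root_iff]
      exact Or.inr (Or.inr hr1mem.2.1)
    · intro h0
      rw [hx] at h0
      have hpc : (F0 ctx).parent c = some r1 := by
        show (if c = v ∨ c = v' then none else F.parent c) = some r1
        rw [if_neg (by tauto : ¬(c = v ∨ c = v'))]
        exact hc
      exact ((F0 ctx).childCount_eq_zero r1).mp h0 c hpc

end RemCtx

end RemovalAux6

noncomputable section

/-- **Lemma (removal step for a pair of removable edges).** -/
theorem removal_step
    (F : DecForest) (b : Fin F.n → Fin F.n) (hss : SemiSimpleConfig F b)
    (hrem : ∃ v v', RemovablePair F b v v') :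
    ∃ (F0 : DecForest) (b0 : Fin F0.n → Fin F0.n)
      (Fs : Fin (numBlocks b - 1) → DecForest)
      (bs : ∀ i : Fin (numBlocks b - 1), Fin (Fs i).n → Fin (Fs i).n),
      SemiSimpleConfig F0 b0 ∧ numBlocks b0 = numBlocks b - 1 ∧
      (∀ i, SemiSimpleConfig (Fs i) (bs i)) ∧
      (∀ i, numBlocks (bs i) = numBlocks b - 1) ∧
      (∀ (N : ℕ) (Ψ : Matrix (Fin N) (Fin N) ℝ),
        (∀ j : Fin N, (Ψ * Ψᵀ) j j = 1) →
          GammaSum F b Ψ =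
            GammaSum F0 b0 Ψ - ∑ i : Fin (numBlocks b - 1), GammaSum (Fs i) (bs i) Ψ) ∧
      (F.nontrivialRootCount = 1 →
        F0.nontrivialRootCount = 1 ∧ ∀ i, (Fs i).nontrivialRootCount = 1) := by
  classical
  obtain ⟨v, v', hrp⟩ := hrem
  obtain ⟨hne, hlv, hlv', hp1, hp1', hbvv, hblk, hpar⟩ := hrp
  obtain ⟨u, hpu⟩ := Option.ne_none_iff_exists'.mp hlv.1
  obtain ⟨u', hpu'⟩ := Option.ne_none_iff_exists'.mp hlv'.1
  have hbuu := hpar u u' hpu hpu'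
  obtain ⟨r, c0, hr, -, -⟩ := F.exists_root_edge v u hpu
  have ctx : RemCtx F b v v' u u' r :=
    ⟨hss, hne, hlv, hlv', hp1, hp1', hbvv, hblk, hpu, hpu', hbuu, hr⟩
  have hbv_mem : b v ∈ Finset.univ.image b := Finset.mem_image_of_mem b (Finset.mem_univ v)
  set T := (Finset.univ.image b).erase (b v) with hTdef
  have hTcard : T.card = numBlocks b - 1 := by
    rw [hTdef, Finset.card_erase_of_mem hbv_mem]
    rfl
  set e : Fin (numBlocks b - 1) → {x // x ∈ T} :=
    fun i => T.equivFin.symm (Fin.cast hTcard.symm i) with he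
  refine ⟨RemCtx.F0 ctx, mergeMap b v (b r), fun _ => F,
    fun i => mergeMap b v (e i).1, ?_, ?_, ?_, ?_, ?_, ?_⟩
  · exact ctx.ss_F0
  · exact numBlocks_mergeMap b v (b r) ⟨r, rfl⟩ ctx.br_ne
  · intro i
    have hmem := Finset.mem_erase.mp
      ((e i).2 : ((e i) : Fin F.n) ∈ (Finset.univ.image b).erase (b v))
    obtain ⟨x, -, hx⟩ := Finset.mem_image.mp hmem.2
    exact ctx.ss_mrg (crep_spec b _ ⟨x, hx⟩) hmem.1
  · intro i
    have hmem := Finset.mem_erase.mp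
      ((e i).2 : ((e i) : Fin F.n) ∈ (Finset.univ.image b).erase (b v))
    obtain ⟨x, -, hx⟩ := Finset.mem_image.mp hmem.2
    exact numBlocks_mergeMap b v _ ⟨x, hx⟩ hmem.1
  · intro N Ψ hΨ
    rw [ctx.gamma_main Ψ hΨ]
    rw [← hTdef]
    congr 1
    rw [← Finset.sum_coe_sort T (fun t => GammaSum F (mergeMap b v t) Ψ)]
    refine Fintype.sum_equiv (T.equivFin.trans (finCongr hTcard)) _ _ ?_
    intro x
    have h1 : e ((T.equivFin.trans (finCongr hTcard)) x) = x := by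
      rw [he]
      show T.equivFin.symm (Fin.cast hTcard.symm (finCongr hTcard (T.equivFin x))) = x
      rw [show Fin.cast hTcard.symm (finCongr hTcard (T.equivFin x)) = T.equivFin x from
        Fin.ext rfl]
      exact Equiv.symm_apply_apply _ _
    show GammaSum F (mergeMap b v (x : Fin F.n)) Ψ
      = GammaSum F (mergeMap b v ((e ((T.equivFin.trans (finCongr hTcard)) x)) : Fin F.n)) Ψ
    rw [h1]
  · intro hcount
    exact ⟨ctx.ntr_F0 hcount, fun _ => hcount⟩

end
end
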